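/- arXiv:2512.07044 — 4 statements merged into one kernel-verified Lean document; each statement's English description precedes it below -/
import Mathlib

section
/- (Vizing's Adjacency Lemma) Let G be a simple graph of Class 2 with maximum degree Δ. If e = xy is a critical edge of G, then x has at least Δ − d_G(y) + 1 neighbors of degree Δ in V(G) \ {y}. -/
/-- A proper `k`-edge-coloring of `G` with colors from `{1, …, k}`: every edge of `G`
receives a color in `{1, …, k}` and distinct edges sharing a vertex get distinct colors. -/
def IsProperEdgeColoring {V : Type*} (G : SimpleGraph V) (k : ℕ) (φ : Sym2 V → ℕ) : Prop :=
  (∀ e ∈ G.edgeSet, φ e ∈ Finset.Icc 1 k) ∧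
    ∀ e₁ ∈ G.edgeSet, ∀ e₂ ∈ G.edgeSet, e₁ ≠ e₂ → (∃ v, v ∈ e₁ ∧ v ∈ e₂) → φ e₁ ≠ φ e₂

/-- The chromatic index `χ'(G)`: the least `k` such that `G` has a proper `k`-edge-coloring. -/
noncomputable def chromIndex {V : Type*} (G : SimpleGraph V) : ℕ :=
  sInf {k | ∃ φ : Sym2 V → ℕ, IsProperEdgeColoring G k φ}

/-- The set `φ̄(u)` of colors of `{1, …, k}` missing at `u`, i.e. not used by `φ` on
any edge of `G` incident with `u`. -/
def missing {V : Type*} (G : SimpleGraph V) (k : ℕ) (φ : Sym2 V → ℕ) (u : V) : Set ℕ :=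
  {c | c ∈ Finset.Icc 1 k ∧ ∀ v, G.Adj u v → φ s(u, v) ≠ c}

set_option linter.unusedSectionVars false

set_option maxHeartbeats 1600000

namespace VAL
open SimpleGraph Finset List

variable {V : Type*} [Fintype V] [DecidableEq V]

lemma mem_missing {H : SimpleGraph V} {k : ℕ} {φ : Sym2 V → ℕ} {u : V} {c : ℕ} :
    c ∈ missing H k φ u ↔ c ∈ Finset.Icc 1 k ∧ ∀ v, H.Adj u v → φ s(u, v) ≠ c := Iff.rfl

lemma proper_mono {H : SimpleGraph V} {k k' : ℕ} (hkk : k ≤ k') {φ}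
    (h : IsProperEdgeColoring H k φ) : IsProperEdgeColoring H k' φ := by
  refine ⟨fun e he => ?_, h.2⟩
  have := h.1 e he
  simp only [Finset.mem_Icc] at this ⊢
  exact ⟨this.1, this.2.trans hkk⟩

lemma exists_proper (H : SimpleGraph V) : ∃ n φ, IsProperEdgeColoring H n φ := by
  classical
  refine ⟨Fintype.card (Sym2 V), fun e => ((Fintype.equivFin (Sym2 V)) e).val + 1, ?_, ?_⟩
  · intro e _
    simp only [Finset.mem_Icc]
    exact ⟨Nat.le_add_left 1 _, Nat.succ_le_of_lt (Fin.is_lt _)⟩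
  · intro e₁ _ e₂ _ hne _ h
    exact hne (by
      have := Nat.succ_injective h
      exact (Fintype.equivFin (Sym2 V)).injective (Fin.val_injective this))

lemma exists_proper_chromIndex (H : SimpleGraph V) :
    ∃ φ, IsProperEdgeColoring H (chromIndex H) φ := by
  have hne : {k | ∃ φ : Sym2 V → ℕ, IsProperEdgeColoring H k φ}.Nonempty := by
    obtain ⟨n, φ, h⟩ := exists_proper H
    exact ⟨n, φ, h⟩
  exact Nat.sInf_mem hne

lemma chromIndex_le {H : SimpleGraph V} {k : ℕ} {φ} (h : IsProperEdgeColoring H k φ) :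
    chromIndex H ≤ k := Nat.sInf_le ⟨φ, h⟩

/-- colors at a vertex are distinct -/
lemma proper_inj {H : SimpleGraph V} {k : ℕ} {φ} (h : IsProperEdgeColoring H k φ)
    {u v w : V} (hv : H.Adj u v) (hw : H.Adj u w) (hvw : v ≠ w) :
    φ s(u, v) ≠ φ s(u, w) := by
  refine h.2 _ (H.mem_edgeSet.2 hv) _ (H.mem_edgeSet.2 hw) ?_ ⟨u, ?_, ?_⟩
  · intro hc
    rw [Sym2.eq_iff] at hc
    rcases hc with ⟨-, h2⟩ | ⟨-, h2⟩
    · exact hvw h2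
    · exact H.irrefl (h2 ▸ hv)
  · exact Sym2.mem_mk_left _ _
  · exact Sym2.mem_mk_left _ _


variable {G : SimpleGraph V} {k : ℕ}

lemma sne {u b c : V} (h : b ≠ c) : s(u, b) ≠ s(u, c) := fun he => h (Sym2.congr_right.1 he)

lemma edge_decomp {H : SimpleGraph V} {e : Sym2 V} (he : e ∈ H.edgeSet) {v : V} (hv : v ∈ e) :
    ∃ w, e = s(v, w) ∧ H.Adj v w := by
  induction e with
  | _ a b =>
    rw [Sym2.mem_iff] at hv
    rcases hv with rfl | rfl
    · exact ⟨b, rfl, he⟩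
    · exact ⟨a, Sym2.eq_swap, (H.mem_edgeSet.1 he).symm⟩

variable {G : SimpleGraph V} {k : ℕ}

lemma mem_edge_del {f e : Sym2 V} : e ∈ (G.deleteEdges {f}).edgeSet ↔ e ∈ G.edgeSet ∧ e ≠ f := by
  rw [SimpleGraph.edgeSet_deleteEdges]; simp [Set.mem_diff]

lemma adj_del {f : Sym2 V} {u v : V} :
    (G.deleteEdges {f}).Adj u v ↔ G.Adj u v ∧ s(u, v) ≠ f := by
  rw [SimpleGraph.deleteEdges_adj]; simp

lemma color_lemma {a b : V} {φ} (hab : G.Adj a b)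
    (hφ : IsProperEdgeColoring (G.deleteEdges {s(a, b)}) k φ)
    {c : ℕ} (hca : c ∈ missing (G.deleteEdges {s(a, b)}) k φ a)
    (hcb : c ∈ missing (G.deleteEdges {s(a, b)}) k φ b) :
    IsProperEdgeColoring G k (Function.update φ s(a, b) c) := by
  constructor
  · intro e he
    by_cases h : e = s(a, b)
    · subst h; rw [Function.update_self]; exact hca.1
    · rw [Function.update_of_ne h]; exact hφ.1 e (mem_edge_del.2 ⟨he, h⟩)
  · intro e₁ he₁ e₂ he₂ hne hsh
    obtain ⟨v, hv1, hv2⟩ := hsh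
    by_cases h1 : e₁ = s(a, b) <;> by_cases h2 : e₂ = s(a, b)
    · exact absurd (h1.trans h2.symm) hne
    · subst h1
      rw [Function.update_self, Function.update_of_ne h2]
      have he₂' : e₂ ∈ (G.deleteEdges {s(a, b)}).edgeSet := mem_edge_del.2 ⟨he₂, h2⟩
      rcases Sym2.mem_iff.1 hv1 with rfl | rfl
      · obtain ⟨w, rfl, hw⟩ := edge_decomp he₂' hv2
        exact fun h => hca.2 w hw h.symm
      · obtain ⟨w, rfl, hw⟩ := edge_decomp he₂' hv2
        exact fun h => hcb.2 w hw h.symm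
    · subst h2
      rw [Function.update_self, Function.update_of_ne h1]
      have he₁' : e₁ ∈ (G.deleteEdges {s(a, b)}).edgeSet := mem_edge_del.2 ⟨he₁, h1⟩
      rcases Sym2.mem_iff.1 hv2 with rfl | rfl
      · obtain ⟨w, rfl, hw⟩ := edge_decomp he₁' hv1
        exact fun h => hca.2 w hw h
      · obtain ⟨w, rfl, hw⟩ := edge_decomp he₁' hv1
        exact fun h => hcb.2 w hw h
    · rw [Function.update_of_ne h1, Function.update_of_ne h2]
      exact hφ.2 _ (mem_edge_del.2 ⟨he₁, h1⟩) _ (mem_edge_del.2 ⟨he₂, h2⟩) hne ⟨v, hv1, hv2⟩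

lemma move_lemma {x a b : V} {φ} (hab : a ≠ b) (hxa : G.Adj x a) (hxb : G.Adj x b)
    (hφ : IsProperEdgeColoring (G.deleteEdges {s(x, a)}) k φ)
    (hc : φ s(x, b) ∈ missing (G.deleteEdges {s(x, a)}) k φ a) :
    IsProperEdgeColoring (G.deleteEdges {s(x, b)}) k (Function.update φ s(x, a) (φ s(x, b))) := by
  have hba : s(x, b) ≠ s(x, a) := sne (Ne.symm hab)
  constructor
  · intro e he
    rw [mem_edge_del] at he
    by_cases h : e = s(x, a)
    · subst h; rw [Function.update_self]; exact hc.1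
    · rw [Function.update_of_ne h]; exact hφ.1 e (mem_edge_del.2 ⟨he.1, h⟩)
  · intro e₁ he₁ e₂ he₂ hne hsh
    obtain ⟨v, hv1, hv2⟩ := hsh
    rw [mem_edge_del] at he₁ he₂
    by_cases h1 : e₁ = s(x, a) <;> by_cases h2 : e₂ = s(x, a)
    · exact absurd (h1.trans h2.symm) hne
    · subst h1
      rw [Function.update_self, Function.update_of_ne h2]
      have he₂' : e₂ ∈ (G.deleteEdges {s(x, a)}).edgeSet := mem_edge_del.2 ⟨he₂.1, h2⟩
      rcases Sym2.mem_iff.1 hv1 with rfl | rfl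
      · -- shared vertex x : e₂ = s(x,w), w ≠ b
        obtain ⟨w, rfl, hw⟩ := edge_decomp he₂' hv2
        have hwb : w ≠ b := fun h => he₂.2 (h ▸ rfl)
        exact fun h => proper_inj hφ hw (adj_del.2 ⟨hxb, hba⟩) hwb h.symm
      · obtain ⟨w, rfl, hw⟩ := edge_decomp he₂' hv2
        exact fun h => hc.2 w hw h.symm
    · subst h2
      rw [Function.update_self, Function.update_of_ne h1]
      have he₁' : e₁ ∈ (G.deleteEdges {s(x, a)}).edgeSet := mem_edge_del.2 ⟨he₁.1, h1⟩
      rcases Sym2.mem_iff.1 hv2 with rfl | rfl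
      · obtain ⟨w, rfl, hw⟩ := edge_decomp he₁' hv1
        have hwb : w ≠ b := fun h => he₁.2 (h ▸ rfl)
        exact proper_inj hφ hw (adj_del.2 ⟨hxb, hba⟩) hwb
      · obtain ⟨w, rfl, hw⟩ := edge_decomp he₁' hv1
        exact fun h => hc.2 w hw h
    · rw [Function.update_of_ne h1, Function.update_of_ne h2]
      exact hφ.2 _ (mem_edge_del.2 ⟨he₁.1, h1⟩) _ (mem_edge_del.2 ⟨he₂.1, h2⟩) hne ⟨v, hv1, hv2⟩

lemma move_missing_x {x a b : V} {φ} (hab : a ≠ b) (hxa : G.Adj x a) (hxb : G.Adj x b) {c' : ℕ} :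
    c' ∈ missing (G.deleteEdges {s(x, b)}) k (Function.update φ s(x, a) (φ s(x, b))) x ↔
    c' ∈ missing (G.deleteEdges {s(x, a)}) k φ x := by
  rw [mem_missing, mem_missing]
  constructor
  · rintro ⟨hIcc, h⟩
    refine ⟨hIcc, fun v hv => ?_⟩
    have hva : v ≠ a := by
      intro h'; subst h'; exact (adj_del.1 hv).2 rfl
    by_cases hvb : v = b
    · subst hvb
      have := h a (adj_del.2 ⟨hxa, sne hab⟩)
      rwa [Function.update_self] at this
    · have := h v (adj_del.2 ⟨(adj_del.1 hv).1, sne hvb⟩)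
      rwa [Function.update_of_ne (sne hva)] at this
  · rintro ⟨hIcc, h⟩
    refine ⟨hIcc, fun v hv => ?_⟩
    have hvb : v ≠ b := by
      intro h'; subst h'; exact (adj_del.1 hv).2 rfl
    by_cases hva : v = a
    · subst hva
      rw [Function.update_self]
      exact h b (adj_del.2 ⟨hxb, sne (Ne.symm hab)⟩)
    · rw [Function.update_of_ne (sne hva)]
      exact h v (adj_del.2 ⟨(adj_del.1 hv).1, sne hva⟩)

lemma move_missing_other {x a b u : V} {φ} (hua : u ≠ a) (hux : u ≠ x) {c' : ℕ}
    (h : c' ∈ missing (G.deleteEdges {s(x, a)}) k φ u) :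
    c' ∈ missing (G.deleteEdges {s(x, b)}) k (Function.update φ s(x, a) (φ s(x, b))) u := by
  refine ⟨h.1, fun v hv => ?_⟩
  have hne : s(u, v) ≠ s(x, a) := by
    intro he
    rcases Sym2.eq_iff.1 he with ⟨h1, -⟩ | ⟨h1, -⟩
    · exact hux h1
    · exact hua h1
  rw [Function.update_of_ne hne]
  exact h.2 v (adj_del.2 ⟨(adj_del.1 hv).1, hne⟩)

lemma chain_imp_mem {α : Type*} {R S : α → α → Prop} :
    ∀ {l : List α} {b : α}, (∀ u v, u ∈ (b :: l).dropLast → v ∈ l → R u v → S u v) →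
      List.Chain R b l → List.Chain S b l := by
  intro l
  induction l with
  | nil => intro b _ _; exact List.Chain.nil
  | cons c l ih =>
    intro b h hch
    rw [List.Chain, List.chain_cons] at hch ⊢
    have hd : (b :: c :: l).dropLast = b :: (c :: l).dropLast := rfl
    refine ⟨h b c (by rw [hd]; exact List.mem_cons_self) (List.mem_cons_self) hch.1, ?_⟩
    exact ih (fun u v hu hv => h u v (by rw [hd]; exact List.mem_cons_of_mem _ hu)
      (List.mem_cons_of_mem _ hv)) hch.2

lemma getLast_not_mem_dropLast {α : Type*} {l : List α} (h : l ≠ []) (hnd : l.Nodup) :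
    l.getLast h ∉ l.dropLast := by
  intro hmem
  have := List.dropLast_append_getLast h
  rw [← this] at hnd
  rw [List.nodup_append] at hnd
  exact hnd.2.2 _ hmem _ (List.mem_singleton_self _) rfl

lemma shift_lemma {x : V} :
    ∀ (L : List V) (a : V) (φ : Sym2 V → ℕ),
    (a :: L).Nodup → (∀ w ∈ a :: L, G.Adj x w) →
    IsProperEdgeColoring (G.deleteEdges {s(x, a)}) k φ →
    List.Chain (fun u v => φ s(x, v) ∈ missing (G.deleteEdges {s(x, a)}) k φ u) a L →
    ∃ ψ, IsProperEdgeColoring (G.deleteEdges {s(x, (a :: L).getLast (List.cons_ne_nil a L))}) k ψ ∧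
      (∀ c, c ∈ missing (G.deleteEdges {s(x, (a :: L).getLast (List.cons_ne_nil a L))}) k ψ x ↔
            c ∈ missing (G.deleteEdges {s(x, a)}) k φ x) ∧
      (∀ e : Sym2 V, (∀ w ∈ (a :: L).dropLast, e ≠ s(x, w)) → ψ e = φ e) := by
  intro L
  induction L with
  | nil =>
    intro a φ _ _ hφ _
    exact ⟨φ, hφ, fun c => Iff.rfl, fun e _ => rfl⟩
  | cons b L' ih =>
    intro a φ hnd hadj hφ hch
    rw [List.Chain, List.chain_cons] at hch
    have hanb : a ∉ b :: L' := (List.nodup_cons.1 hnd).1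
    have hab : a ≠ b := fun h => hanb (h ▸ List.mem_cons_self)
    have hxa : G.Adj x a := hadj a (List.mem_cons_self)
    have hxb : G.Adj x b := hadj b (List.mem_cons_of_mem _ (List.mem_cons_self))
    have hxnot : ∀ w ∈ a :: b :: L', w ≠ x := fun w hw => (hadj w hw).ne'
    set φ₁ := Function.update φ s(x, a) (φ s(x, b)) with hφ₁def
    have hφ₁ : IsProperEdgeColoring (G.deleteEdges {s(x, b)}) k φ₁ :=
      move_lemma hab hxa hxb hφ hch.1
    have hch₁ : List.Chain
        (fun u v => φ₁ s(x, v) ∈ missing (G.deleteEdges {s(x, b)}) k φ₁ u) b L' := by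
      refine chain_imp_mem (fun u v hu hv hR => ?_) hch.2
      have hu' : u ∈ b :: L' := List.dropLast_subset _ hu
      have hva : v ≠ a := fun h => hanb (h ▸ List.mem_cons_of_mem _ hv)
      have hua : u ≠ a := fun h => hanb (h ▸ hu')
      have hux : u ≠ x := hxnot u (List.mem_cons_of_mem _ hu')
      have hval : φ₁ s(x, v) = φ s(x, v) := Function.update_of_ne (sne hva) _ _
      rw [hval]
      exact move_missing_other hua hux hR
    obtain ⟨ψ, hψ, hψx, hψval⟩ := ih b φ₁ (List.nodup_cons.1 hnd).2
      (fun w hw => hadj w (List.mem_cons_of_mem _ hw)) hφ₁ hch₁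
    have hlast : (a :: b :: L').getLast (List.cons_ne_nil _ _) =
        (b :: L').getLast (List.cons_ne_nil _ _) := List.getLast_cons _
    refine ⟨ψ, ?_, ?_, ?_⟩
    · rw [hlast]; exact hψ
    · intro c
      rw [hlast]
      exact (hψx c).trans (move_missing_x hab hxa hxb)
    · intro e he
      have hd : (a :: b :: L').dropLast = a :: (b :: L').dropLast := rfl
      rw [hd] at he
      have h1 : ψ e = φ₁ e := hψval e (fun w hw => he w (List.mem_cons_of_mem _ hw))
      rw [h1, hφ₁def]
      exact Function.update_of_ne (he a (List.mem_cons_self)) _ _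

lemma core_lemma {x y : V} (hxy : G.Adj x y) (hG : ∀ ψ, ¬ IsProperEdgeColoring G k ψ)
    {φ} (hφ : IsProperEdgeColoring (G.deleteEdges {s(x, y)}) k φ)
    {L : List V} (hnd : (y :: L).Nodup)
    (hadj : ∀ w ∈ y :: L, G.Adj x w)
    (hch : List.Chain (fun u v => φ s(x, v) ∈ missing (G.deleteEdges {s(x, y)}) k φ u) y L)
    {c : ℕ} (hcx : c ∈ missing (G.deleteEdges {s(x, y)}) k φ x)
    (hcz : c ∈ missing (G.deleteEdges {s(x, y)}) k φ ((y :: L).getLast (List.cons_ne_nil y L))) :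
    False := by
  obtain ⟨ψ, hψ, hψx, hψval⟩ := shift_lemma L y φ hnd hadj hφ hch
  set z := (y :: L).getLast (List.cons_ne_nil y L) with hz
  have hxz : G.Adj x z := hadj z (List.getLast_mem _)
  have hzx : z ≠ x := hxz.ne'
  have hcx' : c ∈ missing (G.deleteEdges {s(x, z)}) k ψ x := (hψx c).2 hcx
  have hcz' : c ∈ missing (G.deleteEdges {s(x, z)}) k ψ z := by
    refine ⟨hcz.1, fun v hv => ?_⟩
    have hv' := adj_del.1 hv
    have hval : ψ s(z, v) = φ s(z, v) := by
      refine hψval _ (fun w hw he => ?_)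
      rcases Sym2.eq_iff.1 he with ⟨h1, -⟩ | ⟨h1, h2⟩
      · exact hzx h1
      · exact getLast_not_mem_dropLast _ hnd (hz ▸ h1 ▸ hw)
    rw [hval]
    refine hcz.2 v (adj_del.2 ⟨hv'.1, fun he => ?_⟩)
    rcases Sym2.eq_iff.1 he with ⟨h1, -⟩ | ⟨h1, h2⟩
    · exact hzx h1
    · exact hv'.2 (by rw [h1, h2]; exact Sym2.eq_swap)
  exact hG _ (color_lemma hxz hψ hcx' hcz')

lemma chain_append_single {α : Type*} {R : α → α → Prop} :
    ∀ (L : List α) (a w : α), List.Chain R a L → R ((a :: L).getLast (List.cons_ne_nil a L)) w →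
      List.Chain R a (L ++ [w]) := by
  intro L
  induction L with
  | nil => intro a w _ h; exact List.Chain.cons h List.Chain.nil
  | cons b M ih =>
    intro a w hch hR
    rw [List.Chain, List.chain_cons] at hch
    rw [List.Chain, List.cons_append, List.chain_cons]
    exact ⟨hch.1, ih b w hch.2 (by rwa [List.getLast_cons (List.cons_ne_nil b M)] at hR)⟩

lemma chain_forall_mem {α : Type*} {R : α → α → Prop} {P : α → Prop}
    (hP : ∀ u v, R u v → P v) :
    ∀ (L : List α) (a : α), List.Chain R a L → ∀ w ∈ L, P w := by
  intro L
  induction L with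
  | nil => intro a _ w hw; exact absurd hw List.not_mem_nil
  | cons b M ih =>
    intro a hch w hw
    rw [List.Chain, List.chain_cons] at hch
    rcases List.mem_cons.1 hw with rfl | hw
    · exact hP a w hch.1
    · exact ih b hch.2 w hw

lemma chain_dedup {α : Type*} {R : α → α → Prop} :
    ∀ (L : List α) (a : α), List.Chain R a L →
    ∃ L', List.Chain R a L' ∧ (a :: L').Nodup ∧ L' ⊆ L ∧
      (a :: L').getLast (List.cons_ne_nil a L') = (a :: L).getLast (List.cons_ne_nil a L) := by
  intro L
  induction L with
  | nil =>
    intro a _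
    exact ⟨[], List.Chain.nil, List.nodup_singleton a, fun z hz => hz, rfl⟩
  | cons b M ih =>
    intro a hch
    rw [List.Chain, List.chain_cons] at hch
    obtain ⟨M', hch', hnd', hsub', hlast'⟩ := ih b hch.2
    by_cases ha : a ∈ b :: M'
    · obtain ⟨s', t', hst⟩ := List.append_of_mem ha
      have hchain2 : List.Chain R a (b :: M') := List.chain_cons.2 ⟨hch.1, hch'⟩
      rw [hst] at hchain2
      have hct' : List.Chain R a t' := (List.isChain_cons_split.1 hchain2).2
      have hndt : (a :: t').Nodup := by
        have : (s' ++ a :: t').Nodup := hst ▸ hnd'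
        exact (List.nodup_append.1 this).2.1
      refine ⟨t', hct', hndt, ?_, ?_⟩
      · intro z hz
        have : z ∈ b :: M' := hst ▸ (List.mem_append_right _ (List.mem_cons_of_mem _ hz))
        rcases List.mem_cons.1 this with rfl | hzM
        · exact List.mem_cons_self
        · exact List.mem_cons_of_mem _ (hsub' hzM)
      · have h1 : (a :: t').getLast (List.cons_ne_nil _ _) =
            (s' ++ a :: t').getLast (by simp) := by
          rw [List.getLast_append_of_ne_nil _ (List.cons_ne_nil _ _)]
        rw [h1]
        have h2 : (s' ++ a :: t').getLast (by simp) = (b :: M').getLast (List.cons_ne_nil _ _) := by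
          congr 1 <;> rw [hst]
        rw [h2, hlast']
        rw [List.getLast_cons (List.cons_ne_nil b M)]
    · refine ⟨b :: M', List.chain_cons.2 ⟨hch.1, hch'⟩, List.nodup_cons.2 ⟨ha, hnd'⟩, ?_, ?_⟩
      · intro z hz
        rcases List.mem_cons.1 hz with rfl | hzM
        · exact List.mem_cons_self
        · exact List.mem_cons_of_mem _ (hsub' hzM)
      · rw [List.getLast_cons (List.cons_ne_nil b M'), List.getLast_cons (List.cons_ne_nil b M)]
        exact hlast'

lemma forced_aux (K : SimpleGraph V)
    (hdeg2 : ∀ v w₁ w₂ w₃, K.Adj v w₁ → K.Adj v w₂ → K.Adj v w₃ → w₁ = w₂ ∨ w₁ = w₃ ∨ w₂ = w₃) :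
    ∀ (n : ℕ) (u vv ww t : V) (p : K.Walk u vv) (q : K.Walk u ww),
      p.length + q.length ≤ n → p.IsPath → q.IsPath → K.Adj t u →
      t ∉ p.support → t ∉ q.support →
      (∀ z, z ∈ p.support → z ∈ q.support) ∨ (∀ z, z ∈ q.support → z ∈ p.support) := by
  intro n
  induction n with
  | zero =>
    intro u vv ww t p q hlen _ _ _ _ _
    cases p with
    | nil =>
      left; intro z hz
      rw [SimpleGraph.Walk.support_nil, List.mem_singleton] at hz
      subst hz; exact q.start_mem_support
    | cons h p' => simp [SimpleGraph.Walk.length_cons] at hlen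
  | succ n ih =>
    intro u vv ww t p q hlen hp hq hadj htp htq
    cases p with
    | nil =>
      left; intro z hz
      rw [SimpleGraph.Walk.support_nil, List.mem_singleton] at hz
      subst hz; exact q.start_mem_support
    | cons hud' p' =>
      rename_i d'
      cases q with
      | nil =>
        right; intro z hz
        rw [SimpleGraph.Walk.support_nil, List.mem_singleton] at hz
        subst hz; exact SimpleGraph.Walk.start_mem_support _
      | cons hud q' =>
        rename_i d
        have hdd : d' = d := by
          rcases hdeg2 u d' d t hud' hud hadj.symm with h | h | h
          · exact h
          · exact absurd (h ▸ p'.start_mem_support)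
              (fun hc => htp (SimpleGraph.Walk.support_cons _ _ ▸ List.mem_cons_of_mem _ hc))
          · exact absurd (h ▸ q'.start_mem_support)
              (fun hc => htq (SimpleGraph.Walk.support_cons _ _ ▸ List.mem_cons_of_mem _ hc))
        subst hdd
        have hp' := (SimpleGraph.Walk.cons_isPath_iff _ _).1 hp
        have hq' := (SimpleGraph.Walk.cons_isPath_iff _ _).1 hq
        have hlen' : p'.length + q'.length ≤ n := by
          rw [SimpleGraph.Walk.length_cons, SimpleGraph.Walk.length_cons] at hlen
          omega
        rcases ih d' vv ww u p' q' hlen' hp'.1 hq'.1 hud' hp'.2 hq'.2 with h | h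
        · left; intro z hz
          rw [SimpleGraph.Walk.support_cons] at hz ⊢
          rcases List.mem_cons.1 hz with rfl | hz
          · exact List.mem_cons_self
          · exact List.mem_cons_of_mem _ (h z hz)
        · right; intro z hz
          rw [SimpleGraph.Walk.support_cons] at hz ⊢
          rcases List.mem_cons.1 hz with rfl | hz
          · exact List.mem_cons_self
          · exact List.mem_cons_of_mem _ (h z hz)

lemma forced (K : SimpleGraph V)
    (hdeg2 : ∀ v w₁ w₂ w₃, K.Adj v w₁ → K.Adj v w₂ → K.Adj v w₃ → w₁ = w₂ ∨ w₁ = w₃ ∨ w₂ = w₃)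
    {a b c : V} (p : K.Walk a b) (q : K.Walk a c) (hp : p.IsPath) (hq : q.IsPath)
    (h1a : ∀ w₁ w₂, K.Adj a w₁ → K.Adj a w₂ → w₁ = w₂) :
    (∀ z, z ∈ p.support → z ∈ q.support) ∨ (∀ z, z ∈ q.support → z ∈ p.support) := by
  cases p with
  | nil =>
    left; intro z hz
    rw [SimpleGraph.Walk.support_nil, List.mem_singleton] at hz
    subst hz; exact q.start_mem_support
  | cons hud' p' =>
    rename_i d'
    cases q with
    | nil =>
      right; intro z hz
      rw [SimpleGraph.Walk.support_nil, List.mem_singleton] at hz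
      subst hz; exact SimpleGraph.Walk.start_mem_support _
    | cons hud q' =>
      rename_i d
      have hdd : d' = d := h1a d' d hud' hud
      subst hdd
      have hp' := (SimpleGraph.Walk.cons_isPath_iff _ _).1 hp
      have hq' := (SimpleGraph.Walk.cons_isPath_iff _ _).1 hq
      rcases forced_aux K hdeg2 (p'.length + q'.length) d' b c a p' q' le_rfl
        hp'.1 hq'.1 hud' hp'.2 hq'.2 with h | h
      · left; intro z hz
        rw [SimpleGraph.Walk.support_cons] at hz ⊢
        rcases List.mem_cons.1 hz with rfl | hz
        · exact List.mem_cons_self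
        · exact List.mem_cons_of_mem _ (h z hz)
      · right; intro z hz
        rw [SimpleGraph.Walk.support_cons] at hz ⊢
        rcases List.mem_cons.1 hz with rfl | hz
        · exact List.mem_cons_self
        · exact List.mem_cons_of_mem _ (h z hz)

lemma interior_two_nbrs (K : SimpleGraph V) :
    ∀ {u v : V} (p : K.Walk u v), p.IsPath → ∀ (c : V), c ∈ p.support → c ≠ u → c ≠ v →
      ∃ w₁ w₂, w₁ ≠ w₂ ∧ K.Adj c w₁ ∧ K.Adj c w₂ := by
  intro u v p
  induction p with
  | nil =>
    intro _ c hc hcu _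
    rw [SimpleGraph.Walk.support_nil, List.mem_singleton] at hc
    exact absurd hc hcu
  | @cons u d v hud p' ih =>
    intro hp c hc hcu hcv
    rw [SimpleGraph.Walk.support_cons] at hc
    rcases List.mem_cons.1 hc with rfl | hc
    · exact absurd rfl hcu
    · have hp' := (SimpleGraph.Walk.cons_isPath_iff _ _).1 hp
      by_cases hcd : c = d
      · subst hcd
        cases hpp : p' with
        | nil => exact absurd rfl hcv
        | @cons _ d₂ _ hdd₂ p'' =>
          refine ⟨u, d₂, ?_, hud.symm, hdd₂⟩
          intro h
          apply hp'.2
          rw [hpp, SimpleGraph.Walk.support_cons]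
          refine List.mem_cons_of_mem _ ?_
          rw [h]
          exact p''.start_mem_support
      · exact ih hp'.1 c hc hcd hcv

lemma three_endpoints (K : SimpleGraph V)
    (hdeg2 : ∀ v w₁ w₂ w₃, K.Adj v w₁ → K.Adj v w₂ → K.Adj v w₃ → w₁ = w₂ ∨ w₁ = w₃ ∨ w₂ = w₃)
    {a b c : V} (hab : a ≠ b) (hac : a ≠ c) (hbc : b ≠ c)
    (h1a : ∀ w₁ w₂, K.Adj a w₁ → K.Adj a w₂ → w₁ = w₂)
    (h1b : ∀ w₁ w₂, K.Adj b w₁ → K.Adj b w₂ → w₁ = w₂)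
    (h1c : ∀ w₁ w₂, K.Adj c w₁ → K.Adj c w₂ → w₁ = w₂)
    (hrb : K.Reachable a b) (hrc : K.Reachable a c) : False := by
  classical
  obtain ⟨wb⟩ := hrb
  obtain ⟨wc⟩ := hrc
  set p := wb.toPath with hp
  set q := wc.toPath with hq
  rcases forced K hdeg2 p.1 q.1 p.2 q.2 h1a with h | h
  · -- b interior of q
    have hbq : b ∈ q.1.support := h b p.1.end_mem_support
    obtain ⟨w₁, w₂, hw, h1, h2⟩ := interior_two_nbrs K q.1 q.2 b hbq (Ne.symm hab) hbc
    exact hw (h1b w₁ w₂ h1 h2)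
  · have hcp : c ∈ p.1.support := h c q.1.end_mem_support
    obtain ⟨w₁, w₂, hw, h1, h2⟩ := interior_two_nbrs K p.1 p.2 c hcp (Ne.symm hac) (Ne.symm hbc)
    exact hw (h1c w₁ w₂ h1 h2)

def Kgraph (H : SimpleGraph V) (φ : Sym2 V → ℕ) (α δ : ℕ) : SimpleGraph V where
  Adj u v := H.Adj u v ∧ (φ s(u, v) = α ∨ φ s(u, v) = δ)
  symm := by
    constructor
    intro u v h
    exact ⟨h.1.symm, by rw [Sym2.eq_swap]; exact h.2⟩
  loopless := ⟨fun v h => H.irrefl h.1⟩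

def Touched (H : SimpleGraph V) (φ : Sym2 V → ℕ) (α δ : ℕ) (z : V) (e : Sym2 V) : Prop :=
  ∃ u v, e = s(u, v) ∧ (Kgraph H φ α δ).Adj u v ∧ (Kgraph H φ α δ).Reachable z u

open Classical in
noncomputable def swapC (H : SimpleGraph V) (φ : Sym2 V → ℕ) (α δ : ℕ) (z : V) : Sym2 V → ℕ :=
  fun e => if Touched H φ α δ z e then (if φ e = α then δ else α) else φ e

variable {H : SimpleGraph V} {k : ℕ} {φ : Sym2 V → ℕ} {α δ : ℕ} {z : V}

lemma touched_iff {u v : V} :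
    Touched H φ α δ z s(u, v) ↔ (Kgraph H φ α δ).Adj u v ∧ (Kgraph H φ α δ).Reachable z u := by
  constructor
  · rintro ⟨u', v', he, hadj, hre⟩
    rcases Sym2.eq_iff.1 he with ⟨rfl, rfl⟩ | ⟨rfl, rfl⟩
    · exact ⟨hadj, hre⟩
    · exact ⟨hadj.symm, hre.trans hadj.reachable⟩
  · rintro ⟨h1, h2⟩
    exact ⟨u, v, rfl, h1, h2⟩

lemma touched_color {e : Sym2 V} (h : Touched H φ α δ z e) : φ e = α ∨ φ e = δ := by
  obtain ⟨u, v, rfl, hadj, -⟩ := h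
  exact hadj.2

lemma touched_edge {e : Sym2 V} (h : Touched H φ α δ z e) : e ∈ H.edgeSet := by
  obtain ⟨u, v, rfl, hadj, -⟩ := h
  exact H.mem_edgeSet.2 hadj.1

lemma swapC_not {e : Sym2 V} (h : ¬ Touched H φ α δ z e) : swapC H φ α δ z e = φ e := if_neg h

lemma swapC_t {e : Sym2 V} (h : Touched H φ α δ z e) :
    swapC H φ α δ z e = if φ e = α then δ else α := if_pos h

/-- an edge at a vertex already touched is touched, provided it is bicolored -/
lemma touched_of_shared {e e' : Sym2 V} (h : Touched H φ α δ z e) {v : V} (hv : v ∈ e)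
    (hv' : v ∈ e') (he' : e' ∈ H.edgeSet) (hc : φ e' = α ∨ φ e' = δ) :
    Touched H φ α δ z e' := by
  obtain ⟨u₁, v₁, rfl, hadj, hre⟩ := h
  have hrev : (Kgraph H φ α δ).Reachable z v := by
    rcases Sym2.mem_iff.1 hv with rfl | rfl
    · exact hre
    · exact hre.trans hadj.reachable
  obtain ⟨w, rfl, hw⟩ := edge_decomp he' hv'
  exact ⟨v, w, rfl, ⟨hw, hc⟩, hrev⟩

lemma swap_proper (hφ : IsProperEdgeColoring H k φ) (hα : α ∈ Finset.Icc 1 k)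
    (hδ : δ ∈ Finset.Icc 1 k) (hαδ : α ≠ δ) :
    IsProperEdgeColoring H k (swapC H φ α δ z) := by
  constructor
  · intro e he
    by_cases h : Touched H φ α δ z e
    · rw [swapC_t h]
      split <;> assumption
    · rw [swapC_not h]; exact hφ.1 e he
  · intro e₁ he₁ e₂ he₂ hne hsh
    obtain ⟨v, hv1, hv2⟩ := hsh
    by_cases h1 : Touched H φ α δ z e₁ <;> by_cases h2 : Touched H φ α δ z e₂
    · rw [swapC_t h1, swapC_t h2]
      have hc1 := touched_color h1
      have hc2 := touched_color h2
      have hne' := hφ.2 e₁ he₁ e₂ he₂ hne ⟨v, hv1, hv2⟩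
      rcases hc1 with hc1 | hc1 <;> rcases hc2 with hc2 | hc2 <;>
        simp [hc1, hc2, hαδ, Ne.symm hαδ] at hne' ⊢
    · -- e₂ would be touched if bicolored
      rw [swapC_t h1, swapC_not h2]
      intro hcon
      have hcc : φ e₂ = α ∨ φ e₂ = δ := by
        rcases touched_color h1 with hc1 | hc1
        · rw [hc1, if_pos rfl] at hcon; right; exact hcon.symm
        · rw [hc1, if_neg (fun h => hαδ h.symm)] at hcon; left; exact hcon.symm
      exact h2 (touched_of_shared h1 hv1 hv2 he₂ hcc)
    · rw [swapC_not h1, swapC_t h2]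
      intro hcon
      have hcc : φ e₁ = α ∨ φ e₁ = δ := by
        rcases touched_color h2 with hc2 | hc2
        · rw [hc2, if_pos rfl] at hcon; right; exact hcon
        · rw [hc2, if_neg (fun h => hαδ h.symm)] at hcon; left; exact hcon
      exact h1 (touched_of_shared h2 hv2 hv1 he₁ hcc)
    · rw [swapC_not h1, swapC_not h2]
      exact hφ.2 e₁ he₁ e₂ he₂ hne ⟨v, hv1, hv2⟩

lemma swap_missing_far {u : V} (hzu : ¬ (Kgraph H φ α δ).Reachable z u) (c : ℕ) :
    c ∈ missing H k (swapC H φ α δ z) u ↔ c ∈ missing H k φ u := by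
  rw [mem_missing, mem_missing]
  have hval : ∀ v, H.Adj u v → swapC H φ α δ z s(u, v) = φ s(u, v) := by
    intro v hv
    refine swapC_not (fun ht => hzu ?_)
    exact (touched_iff.1 ht).2
  constructor
  · rintro ⟨h1, h⟩
    exact ⟨h1, fun v hv => by rw [← hval v hv]; exact h v hv⟩
  · rintro ⟨h1, h⟩
    exact ⟨h1, fun v hv => by rw [hval v hv]; exact h v hv⟩

lemma swap_missing_other {u : V} {c : ℕ} (hαδ : α ≠ δ) (hcα : c ≠ α) (hcδ : c ≠ δ) :
    c ∈ missing H k (swapC H φ α δ z) u ↔ c ∈ missing H k φ u := by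
  rw [mem_missing, mem_missing]
  have hval : ∀ v, H.Adj u v → (swapC H φ α δ z s(u, v) ≠ c ↔ φ s(u, v) ≠ c) := by
    intro v hv
    by_cases ht : Touched H φ α δ z s(u, v)
    · rw [swapC_t ht]
      rcases touched_color ht with hc | hc
      · rw [hc, if_pos rfl]
        exact iff_of_true (fun h => hcδ h.symm) (fun h => hcα h.symm)
      · rw [hc, if_neg (fun h => hαδ h.symm)]
        exact iff_of_true (fun h => hcα h.symm) (fun h => hcδ h.symm)
    · rw [swapC_not ht]
  constructor
  · rintro ⟨h1, h⟩
    exact ⟨h1, fun v hv => (hval v hv).1 (h v hv)⟩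
  · rintro ⟨h1, h⟩
    exact ⟨h1, fun v hv => (hval v hv).2 (h v hv)⟩

lemma swap_missing_flip {u : V} (hαδ : α ≠ δ) (hre : (Kgraph H φ α δ).Reachable z u)
    (hδm : δ ∈ missing H k φ u) (hα : α ∈ Finset.Icc 1 k) :
    α ∈ missing H k (swapC H φ α δ z) u := by
  refine ⟨hα, fun v hv => ?_⟩
  by_cases ht : Touched H φ α δ z s(u, v)
  · rw [swapC_t ht]
    rcases touched_color ht with hc | hc
    · rw [hc, if_pos rfl]
      exact Ne.symm hαδ
    · exact absurd hc (hδm.2 v hv)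
  · rw [swapC_not ht]
    intro h
    exact ht (touched_iff.2 ⟨⟨hv, Or.inl h⟩, hre⟩)

section Fan

variable {G : SimpleGraph V} {k : ℕ} {x y : V} {φ : Sym2 V → ℕ}

def FanRel (G : SimpleGraph V) (k : ℕ) (x y : V) (φ : Sym2 V → ℕ) : V → V → Prop :=
  fun u w => G.Adj x w ∧ φ s(x, w) ∈ missing (G.deleteEdges {s(x, y)}) k φ u

def FanV (G : SimpleGraph V) (k : ℕ) (x y : V) (φ : Sym2 V → ℕ) (w : V) : Prop :=
  ∃ L, List.Chain (FanRel G k x y φ) y L ∧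
    (y :: L).getLast (List.cons_ne_nil _ _) = w

lemma fanV_y : FanV G k x y φ y := ⟨[], List.Chain.nil, rfl⟩

lemma getLast_cons_append_single {α : Type*} (a b : α) (l : List α) :
    (a :: (l ++ [b])).getLast (List.cons_ne_nil _ _) = b := by
  show ((a :: l) ++ [b]).getLast (by simp) = b
  rw [List.getLast_append]
  simp

lemma fan_chain_adj (hxy : G.Adj x y) {L : List V}
    (hch : List.Chain (FanRel G k x y φ) y L) : ∀ w ∈ y :: L, G.Adj x w := by
  intro w hw
  rcases List.mem_cons.1 hw with rfl | hw
  · exact hxy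
  · exact chain_forall_mem (fun u v h => h.1) L y hch w hw

lemma fanV_adj (hxy : G.Adj x y) (hw : FanV G k x y φ w) : G.Adj x w := by
  obtain ⟨L, hch, hlast⟩ := hw
  exact hlast ▸ fan_chain_adj hxy hch _ (List.getLast_mem _)

/-- E1 : no common missing color between x and a fan vertex -/
lemma fan_E1 (hxy : G.Adj x y) (hG : ∀ ψ, ¬ IsProperEdgeColoring G k ψ)
    (hφ : IsProperEdgeColoring (G.deleteEdges {s(x, y)}) k φ)
    {w : V} (hw : FanV G k x y φ w) {c : ℕ}
    (hcx : c ∈ missing (G.deleteEdges {s(x, y)}) k φ x)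
    (hcw : c ∈ missing (G.deleteEdges {s(x, y)}) k φ w) : False := by
  obtain ⟨L, hch, hlast⟩ := hw
  obtain ⟨L', hch', hnd', hsub', hlast'⟩ := chain_dedup L y hch
  refine core_lemma hxy hG hφ hnd' ?_ (List.Chain.imp (fun u v h => h.2) hch') hcx ?_
  · intro v hv
    rcases List.mem_cons.1 hv with rfl | hv
    · exact hxy
    · exact chain_forall_mem (fun u v h => h.1) L y hch v (hsub' hv)
  · rw [hlast', hlast]
    exact hcw

/-- the set of realizable nodup-chain lengths for w -/
def FanLen (G : SimpleGraph V) (k : ℕ) (x y : V) (φ : Sym2 V → ℕ) (w : V) : Set ℕ :=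
  {n | ∃ L, List.Chain (FanRel G k x y φ) y L ∧ (y :: L).Nodup ∧
    (y :: L).getLast (List.cons_ne_nil _ _) = w ∧ L.length = n}

noncomputable def fanHt (G : SimpleGraph V) (k : ℕ) (x y : V) (φ : Sym2 V → ℕ) (w : V) : ℕ :=
  sInf (FanLen G k x y φ w)

lemma fanLen_nonempty (hw : FanV G k x y φ w) : (FanLen G k x y φ w).Nonempty := by
  obtain ⟨L, hch, hlast⟩ := hw
  obtain ⟨L', hch', hnd', hsub', hlast'⟩ := chain_dedup L y hch
  exact ⟨L'.length, L', hch', hnd', hlast'.trans hlast, rfl⟩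

lemma fanHt_mem (hw : FanV G k x y φ w) : fanHt G k x y φ w ∈ FanLen G k x y φ w :=
  Nat.sInf_mem (fanLen_nonempty hw)

/-- members of a minimal chain are fan vertices of smaller height -/
lemma fan_prefix {L : List V} (hch : List.Chain (FanRel G k x y φ) y L)
    (hnd : (y :: L).Nodup) {w : V} (hlast : (y :: L).getLast (List.cons_ne_nil _ _) = w)
    (hlen : L.length = fanHt G k x y φ w) :
    ∀ p ∈ y :: L, FanV G k x y φ p ∧ (p ≠ w → fanHt G k x y φ p < fanHt G k x y φ w) := by
  intro p hp
  rcases List.mem_cons.1 hp with h | hp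
  · rw [h]
    refine ⟨fanV_y, fun hpw => ?_⟩
    have h0 : fanHt G k x y φ y = 0 :=
      Nat.le_antisymm (Nat.sInf_le ⟨[], List.Chain.nil, List.nodup_singleton _, rfl, rfl⟩)
        (Nat.zero_le _)
    rw [h0, ← hlen]
    cases L with
    | nil => exact absurd hlast hpw
    | cons b M => simp
  · obtain ⟨s', t', rfl⟩ := List.append_of_mem hp
    have hchain2 : List.Chain (FanRel G k x y φ) y (s' ++ [p]) := (List.isChain_cons_split.1 hch).1
    have hsubl : (y :: (s' ++ [p])).Sublist (y :: (s' ++ p :: t')) :=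
      List.Sublist.cons₂ _ (List.Sublist.append_left (List.cons_sublist_cons.2 (List.nil_sublist _)) s')
    have hnd2 : (y :: (s' ++ [p])).Nodup := hnd.sublist hsubl
    have hlast2 : (y :: (s' ++ [p])).getLast (List.cons_ne_nil _ _) = p :=
      getLast_cons_append_single y p s'
    have hfan : FanV G k x y φ p := ⟨s' ++ [p], hchain2, hlast2⟩
    refine ⟨hfan, fun hpw => ?_⟩
    have hle : fanHt G k x y φ p ≤ s'.length + 1 := by
      refine Nat.sInf_le ⟨s' ++ [p], hchain2, hnd2, hlast2, ?_⟩
      rw [List.length_append, List.length_singleton]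
    have htne : t' ≠ [] := by
      rintro rfl
      exact hpw (hlast ▸ (getLast_cons_append_single y p s').symm)
    have hlenL : s'.length + 1 + t'.length = fanHt G k x y φ w := by
      rw [← hlen, List.length_append, List.length_cons]
      omega
    have ht0 : 0 < t'.length := List.length_pos_iff.2 htne
    omega

/-- fan closure : a color missing at a fan vertex but present at x leads to a new fan vertex -/
lemma fan_extend (hxy : G.Adj x y) {u : V} (hu : FanV G k x y φ u) {δ : ℕ}
    (hδu : δ ∈ missing (G.deleteEdges {s(x, y)}) k φ u)
    (hδx : δ ∉ missing (G.deleteEdges {s(x, y)}) k φ x) :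
    ∃ w, FanV G k x y φ w ∧ w ≠ y ∧ G.Adj x w ∧ φ s(x, w) = δ := by
  classical
  have hIcc : δ ∈ Finset.Icc 1 k := hδu.1
  rw [mem_missing] at hδx
  push_neg at hδx
  obtain ⟨v, hv, hveq⟩ := hδx hIcc
  rw [SimpleGraph.deleteEdges_adj] at hv
  have hvy : v ≠ y := by
    rintro rfl
    exact hv.2 rfl
  obtain ⟨L, hch, hlast⟩ := hu
  refine ⟨v, ⟨L ++ [v], ?_, ?_⟩, hvy, hv.1, hveq⟩
  · refine chain_append_single L y v hch ?_
    rw [hlast]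
    exact ⟨hv.1, hveq ▸ hδu⟩
  · exact getLast_cons_append_single y v L


lemma engine (hxy : G.Adj x y) (hG : ∀ ψ, ¬ IsProperEdgeColoring G k ψ)
    (hφ : IsProperEdgeColoring (G.deleteEdges {s(x, y)}) k φ)
    {α δ : ℕ} (hα : α ∈ missing (G.deleteEdges {s(x, y)}) k φ x) (hαδ : α ≠ δ)
    (hδI : δ ∈ Finset.Icc 1 k)
    {L : List V} {z : V} (hch : List.Chain (FanRel G k x y φ) y L)
    (hnd : (y :: L).Nodup) (hlast : (y :: L).getLast (List.cons_ne_nil _ _) = z)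
    (hδz : δ ∈ missing (G.deleteEdges {s(x, y)}) k φ z)
    (hsafe : ¬ (Kgraph (G.deleteEdges {s(x, y)}) φ α δ).Reachable z x →
      ∀ p ∈ y :: L, p ≠ z → δ ∈ missing (G.deleteEdges {s(x, y)}) k φ p →
        ¬ (Kgraph (G.deleteEdges {s(x, y)}) φ α δ).Reachable z p) :
    (Kgraph (G.deleteEdges {s(x, y)}) φ α δ).Reachable z x := by
  by_contra hzx
  set G' := G.deleteEdges {s(x, y)} with hG'
  set ψ := swapC G' φ α δ z with hψdef
  have hψ : IsProperEdgeColoring G' k ψ := swap_proper hφ hα.1 hδI hαδ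
  have hadj : ∀ w ∈ y :: L, G.Adj x w := fan_chain_adj hxy hch
  have hval : ∀ w : V, ψ s(x, w) = φ s(x, w) := by
    intro w
    exact swapC_not (fun ht => hzx (touched_iff.1 ht).2)
  have hch' : List.Chain (fun u v => ψ s(x, v) ∈ missing G' k ψ u) y L := by
    refine chain_imp_mem (fun u v hu hv hR => ?_) hch
    have hu' : u ∈ y :: L := List.dropLast_subset _ hu
    have hvy : v ≠ y := fun h => (List.nodup_cons.1 hnd).1 (h ▸ hv)
    have hG'xv : G'.Adj x v := adj_del.2 ⟨hR.1, sne hvy⟩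
    have hcα : φ s(x, v) ≠ α := hα.2 v hG'xv
    rw [hval v]
    by_cases hcδ : φ s(x, v) = δ
    · have huz : u ≠ z := by
        intro h
        subst h
        exact getLast_not_mem_dropLast _ hnd (by rw [hlast]; exact hu)
      have hδu : δ ∈ missing G' k φ u := hcδ ▸ hR.2
      have hfar := hsafe hzx u hu' huz hδu
      exact (swap_missing_far hfar _).2 hR.2
    · exact (swap_missing_other hαδ hcα hcδ).2 hR.2
  have hαx : α ∈ missing G' k ψ x := (swap_missing_far hzx _).2 hα
  have hαz : α ∈ missing G' k ψ z :=
    swap_missing_flip hαδ (SimpleGraph.Reachable.refl z) hδz hα.1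
  exact core_lemma hxy hG hψ hnd hadj hch' hαx (by rw [hlast]; exact hαz)

lemma fan_disj (hxy : G.Adj x y) (hG : ∀ ψ, ¬ IsProperEdgeColoring G k ψ)
    (hφ : IsProperEdgeColoring (G.deleteEdges {s(x, y)}) k φ)
    {α : ℕ} (hα : α ∈ missing (G.deleteEdges {s(x, y)}) k φ x)
    {u v : V} (hu : FanV G k x y φ u) (hv : FanV G k x y φ v) (huv : u ≠ v)
    {δ : ℕ} (hδu : δ ∈ missing (G.deleteEdges {s(x, y)}) k φ u)
    (hδv : δ ∈ missing (G.deleteEdges {s(x, y)}) k φ v) : False := by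
  classical
  set G' := G.deleteEdges {s(x, y)} with hG'def
  have hαδ : α ≠ δ := fun h => fan_E1 hxy hG hφ hu hα (h ▸ hδu)
  set K := Kgraph G' φ α δ with hKdef
  have heqc : ∀ {a w₁ w₂ : V}, K.Adj a w₁ → K.Adj a w₂ → φ s(a, w₁) = φ s(a, w₂) → w₁ = w₂ := by
    intro a w₁ w₂ h1 h2 hc
    by_contra hne
    exact proper_inj hφ h1.1 h2.1 hne hc
  have hdeg2 : ∀ a w₁ w₂ w₃, K.Adj a w₁ → K.Adj a w₂ → K.Adj a w₃ →
      w₁ = w₂ ∨ w₁ = w₃ ∨ w₂ = w₃ := by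
    intro a w₁ w₂ w₃ h1 h2 h3
    rcases h1.2 with c1 | c1 <;> rcases h2.2 with c2 | c2 <;> rcases h3.2 with c3 | c3
    · exact Or.inl (heqc h1 h2 (c1.trans c2.symm))
    · exact Or.inl (heqc h1 h2 (c1.trans c2.symm))
    · exact Or.inr (Or.inl (heqc h1 h3 (c1.trans c3.symm)))
    · exact Or.inr (Or.inr (heqc h2 h3 (c2.trans c3.symm)))
    · exact Or.inr (Or.inr (heqc h2 h3 (c2.trans c3.symm)))
    · exact Or.inr (Or.inl (heqc h1 h3 (c1.trans c3.symm)))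
    · exact Or.inl (heqc h1 h2 (c1.trans c2.symm))
    · exact Or.inl (heqc h1 h2 (c1.trans c2.symm))
  have hdeg1 : ∀ a, δ ∈ missing G' k φ a → ∀ w₁ w₂, K.Adj a w₁ → K.Adj a w₂ → w₁ = w₂ := by
    intro a hδa w₁ w₂ h1 h2
    have c1 : φ s(a, w₁) = α := (h1.2).resolve_right (hδa.2 w₁ h1.1)
    have c2 : φ s(a, w₂) = α := (h2.2).resolve_right (hδa.2 w₂ h2.1)
    exact heqc h1 h2 (c1.trans c2.symm)
  have hdeg1x : ∀ w₁ w₂, K.Adj x w₁ → K.Adj x w₂ → w₁ = w₂ := by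
    intro w₁ w₂ h1 h2
    have c1 : φ s(x, w₁) = δ := (h1.2).resolve_left (hα.2 w₁ h1.1)
    have c2 : φ s(x, w₂) = δ := (h2.2).resolve_left (hα.2 w₂ h2.1)
    exact heqc h1 h2 (c1.trans c2.symm)
  set D := Finset.univ.filter (fun w => FanV G k x y φ w ∧ δ ∈ missing G' k φ w) with hD
  have huD : u ∈ D := Finset.mem_filter.2 ⟨Finset.mem_univ _, hu, hδu⟩
  have hvD : v ∈ D := Finset.mem_filter.2 ⟨Finset.mem_univ _, hv, hδv⟩
  obtain ⟨r₁, hr₁D, hr₁min⟩ := D.exists_min_image (fanHt G k x y φ) ⟨u, huD⟩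
  have hr₁fan : FanV G k x y φ r₁ := (Finset.mem_filter.1 hr₁D).2.1
  have hδr₁ : δ ∈ missing G' k φ r₁ := (Finset.mem_filter.1 hr₁D).2.2
  obtain ⟨L₁, hch₁, hnd₁, hlast₁, hlen₁⟩ := fanHt_mem hr₁fan
  have hr₁x : K.Reachable r₁ x := by
    refine engine hxy hG hφ hα hαδ hδu.1 hch₁ hnd₁ hlast₁ hδr₁ ?_
    intro _ p hp hpz hδp
    exfalso
    have hpre := fan_prefix hch₁ hnd₁ hlast₁ hlen₁ p hp
    have hpD : p ∈ D := Finset.mem_filter.2 ⟨Finset.mem_univ _, hpre.1, hδp⟩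
    exact absurd (hr₁min p hpD) (not_le.2 (hpre.2 hpz))
  have hne2 : (D.erase r₁).Nonempty := by
    rcases eq_or_ne u r₁ with rfl | h
    · exact ⟨v, Finset.mem_erase.2 ⟨Ne.symm huv, hvD⟩⟩
    · exact ⟨u, Finset.mem_erase.2 ⟨h, huD⟩⟩
  obtain ⟨r₂, hr₂D, hr₂min⟩ := (D.erase r₁).exists_min_image (fanHt G k x y φ) hne2
  have hr₂ne : r₂ ≠ r₁ := (Finset.mem_erase.1 hr₂D).1
  have hr₂fan : FanV G k x y φ r₂ := (Finset.mem_filter.1 (Finset.mem_erase.1 hr₂D).2).2.1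
  have hδr₂ : δ ∈ missing G' k φ r₂ := (Finset.mem_filter.1 (Finset.mem_erase.1 hr₂D).2).2.2
  obtain ⟨L₂, hch₂, hnd₂, hlast₂, hlen₂⟩ := fanHt_mem hr₂fan
  have hr₂x : K.Reachable r₂ x := by
    refine engine hxy hG hφ hα hαδ hδu.1 hch₂ hnd₂ hlast₂ hδr₂ ?_
    intro hzx p hp hpz hδp
    have hpre := fan_prefix hch₂ hnd₂ hlast₂ hlen₂ p hp
    have hpD : p ∈ D := Finset.mem_filter.2 ⟨Finset.mem_univ _, hpre.1, hδp⟩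
    have hp1 : p = r₁ := by
      by_contra hne
      exact absurd (hr₂min p (Finset.mem_erase.2 ⟨hne, hpD⟩)) (not_le.2 (hpre.2 hpz))
    subst hp1
    intro hre
    exact hzx (hre.trans hr₁x)
  have hxr₁ : x ≠ r₁ := (fanV_adj hxy hr₁fan).ne
  have hxr₂ : x ≠ r₂ := (fanV_adj hxy hr₂fan).ne
  exact three_endpoints K hdeg2 hxr₁ hxr₂ (Ne.symm hr₂ne) hdeg1x
    (hdeg1 r₁ hδr₁) (hdeg1 r₂ hδr₂) hr₁x.symm hr₂x.symm

end Fan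

open Classical in
noncomputable def MFin (H : SimpleGraph V) (k : ℕ) (φ : Sym2 V → ℕ) (u : V) : Finset ℕ :=
  (Finset.Icc 1 k).filter (fun c => c ∈ missing H k φ u)

lemma mem_MFin {H : SimpleGraph V} {k : ℕ} {φ : Sym2 V → ℕ} {u : V} {c : ℕ} :
    c ∈ MFin H k φ u ↔ c ∈ missing H k φ u := by
  classical
  rw [MFin]
  simp only [Finset.mem_filter]
  exact ⟨fun h => h.2, fun h => ⟨h.1, h⟩⟩

lemma MFin_card_ge (H : SimpleGraph V) [DecidableRel H.Adj] (φ : Sym2 V → ℕ) (u : V) :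
    k - H.degree u ≤ (MFin H k φ u).card := by
  classical
  have hsub : (Finset.Icc 1 k) \ ((H.neighborFinset u).image fun v => φ s(u, v)) ⊆
      MFin H k φ u := by
    intro c hc
    rw [Finset.mem_sdiff] at hc
    rw [mem_MFin]
    exact ⟨hc.1, fun v hv he =>
      hc.2 (Finset.mem_image.2 ⟨v, (H.mem_neighborFinset u v).2 hv, he⟩)⟩
  have h1 : (Finset.Icc 1 k).card = k := by rw [Nat.card_Icc]; omega
  have h2 : ((H.neighborFinset u).image fun v => φ s(u, v)).card ≤ H.degree u :=
    Finset.card_image_le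
  calc k - H.degree u
      ≤ (Finset.Icc 1 k).card - ((H.neighborFinset u).image fun v => φ s(u, v)).card := by omega
    _ ≤ ((Finset.Icc 1 k) \ ((H.neighborFinset u).image fun v => φ s(u, v))).card :=
        Finset.le_card_sdiff _ _
    _ ≤ (MFin H k φ u).card := Finset.card_le_card hsub

lemma exists_missing (H : SimpleGraph V) [DecidableRel H.Adj] (φ : Sym2 V → ℕ) {u : V}
    (h : H.degree u < k) : ∃ c, c ∈ missing H k φ u := by
  have hc := MFin_card_ge (k := k) H φ u
  have hpos : 0 < (MFin H k φ u).card := by omega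
  obtain ⟨c, hc'⟩ := Finset.card_pos.1 hpos
  exact ⟨c, mem_MFin.1 hc'⟩

lemma del_nbr_other {x y u : V} [DecidableRel G.Adj] [DecidableRel (G.deleteEdges {s(x, y)}).Adj]
    (hux : u ≠ x) (huy : u ≠ y) :
    (G.deleteEdges {s(x, y)}).neighborFinset u = G.neighborFinset u := by
  ext v
  rw [SimpleGraph.mem_neighborFinset, SimpleGraph.mem_neighborFinset, adj_del]
  constructor
  · exact And.left
  · intro h
    refine ⟨h, fun he => ?_⟩
    rcases Sym2.eq_iff.1 he with ⟨h1, -⟩ | ⟨h1, -⟩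
    · exact hux h1
    · exact huy h1

lemma del_nbr_y {x y : V} (hxy : G.Adj x y) [DecidableRel G.Adj] [DecidableRel (G.deleteEdges {s(x, y)}).Adj] :
    (G.deleteEdges {s(x, y)}).neighborFinset y = (G.neighborFinset y).erase x := by
  ext v
  rw [SimpleGraph.mem_neighborFinset, Finset.mem_erase, SimpleGraph.mem_neighborFinset, adj_del]
  constructor
  · rintro ⟨h1, h2⟩
    exact ⟨fun hv => h2 (by rw [hv, Sym2.eq_swap]), h1⟩
  · rintro ⟨h1, h2⟩
    refine ⟨h2, fun he => ?_⟩
    rcases Sym2.eq_iff.1 he with ⟨hyx, -⟩ | ⟨-, hvx⟩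
    · exact (G.ne_of_adj hxy) hyx.symm
    · exact h1 hvx

lemma del_nbr_x {x y : V} (hxy : G.Adj x y) [DecidableRel G.Adj] [DecidableRel (G.deleteEdges {s(x, y)}).Adj] :
    (G.deleteEdges {s(x, y)}).neighborFinset x = (G.neighborFinset x).erase y := by
  ext v
  rw [SimpleGraph.mem_neighborFinset, Finset.mem_erase, SimpleGraph.mem_neighborFinset, adj_del]
  constructor
  · rintro ⟨h1, h2⟩
    exact ⟨fun hv => h2 (by rw [hv]), h1⟩
  · rintro ⟨h1, h2⟩
    refine ⟨h2, fun he => ?_⟩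
    rcases Sym2.eq_iff.1 he with ⟨-, hvy⟩ | ⟨hxy2, -⟩
    · exact h1 hvy
    · exact (G.ne_of_adj hxy) hxy2

end VAL


/-- **Vizing's Adjacency Lemma.** If `G` is Class 2 and `e = xy` is a
critical edge, then `x` has at least `Δ - d_G(y) + 1` neighbors of degree `Δ`
in `V(G) \ {y}`. -/
theorem vizing_adjacency_lemma {V : Type*} [Fintype V] [DecidableEq V]
    (G : SimpleGraph V) [DecidableRel G.Adj]
    (hClass2 : chromIndex G = G.maxDegree + 1)
    (x y : V) (hxy : G.Adj x y)
    (hcritical : chromIndex (G.deleteEdges {s(x, y)}) < chromIndex G) :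
    G.maxDegree - G.degree y + 1 ≤
      ((G.neighborFinset x).filter fun z => z ≠ y ∧ G.degree z = G.maxDegree).card := by
  classical
  set k := G.maxDegree with hk
  set G' := G.deleteEdges {s(x, y)} with hG'
  letI : DecidableRel G'.Adj := fun a b => decidable_of_iff _ (VAL.adj_del (G := G)).symm
  have hG : ∀ ψ, ¬ IsProperEdgeColoring G k ψ := by
    intro ψ h
    have h2 := VAL.chromIndex_le h
    rw [hClass2] at h2
    omega
  obtain ⟨φ, hφ'⟩ := VAL.exists_proper_chromIndex G'
  have hle : chromIndex G' ≤ k := by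
    rw [hClass2] at hcritical
    omega
  have hφ : IsProperEdgeColoring G' k φ := VAL.proper_mono hle hφ'
  have hdegyk : G.degree y ≤ k := G.degree_le_maxDegree y
  have hdegy1 : 1 ≤ G.degree y := (G.degree_pos_iff_exists_adj y).2 ⟨x, hxy.symm⟩
  have hdx' : G'.degree x = G.degree x - 1 := by
    show (G'.neighborFinset x).card = _
    rw [VAL.del_nbr_x hxy, Finset.card_erase_of_mem ((G.mem_neighborFinset x y).2 hxy)]
    rfl
  have hdy' : G'.degree y = G.degree y - 1 := by
    show (G'.neighborFinset y).card = _
    rw [VAL.del_nbr_y hxy, Finset.card_erase_of_mem ((G.mem_neighborFinset y x).2 hxy.symm)]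
    rfl
  have hdxlt : G'.degree x < k := by
    have h1 := G.degree_le_maxDegree x
    have h2 : 1 ≤ G.degree x := (G.degree_pos_iff_exists_adj x).2 ⟨y, hxy⟩
    omega
  obtain ⟨α, hα⟩ := VAL.exists_missing (k := k) G' φ hdxlt
  set S := Finset.univ.filter (fun w => VAL.FanV G k x y φ w) with hS
  have hyS : y ∈ S := Finset.mem_filter.2 ⟨Finset.mem_univ _, VAL.fanV_y⟩
  have hfanS : ∀ u ∈ S, VAL.FanV G k x y φ u := fun u hu => (Finset.mem_filter.1 hu).2
  have hadjS : ∀ u ∈ S, G.Adj x u := fun u hu => VAL.fanV_adj hxy (hfanS u hu)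
  have hxS : x ∉ S := fun h => (G.irrefl (hadjS x h))
  have hdisj : ∀ u ∈ S, ∀ v ∈ S, u ≠ v →
      Disjoint (VAL.MFin G' k φ u) (VAL.MFin G' k φ v) := by
    intro u hu v hv huv
    rw [Finset.disjoint_left]
    intro δ h1 h2
    exact VAL.fan_disj hxy hG hφ hα (hfanS u hu) (hfanS v hv) huv
      (VAL.mem_MFin.1 h1) (VAL.mem_MFin.1 h2)
  have hsubset : S.biUnion (fun u => VAL.MFin G' k φ u) ⊆
      (S.erase y).image (fun w => φ s(x, w)) := by
    intro δ hδ
    obtain ⟨u, huS, hδu⟩ := Finset.mem_biUnion.1 hδ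
    have hδu' := VAL.mem_MFin.1 hδu
    have hδx : δ ∉ missing G' k φ x := fun h => VAL.fan_E1 hxy hG hφ (hfanS u huS) h hδu'
    obtain ⟨w, hwfan, hwy, hwadj, hweq⟩ := VAL.fan_extend hxy (hfanS u huS) hδu' hδx
    exact Finset.mem_image.2 ⟨w, Finset.mem_erase.2 ⟨hwy,
      Finset.mem_filter.2 ⟨Finset.mem_univ _, hwfan⟩⟩, hweq⟩
  have hsum : ∑ u ∈ S, (VAL.MFin G' k φ u).card ≤ S.card - 1 := by
    rw [← Finset.card_biUnion hdisj]
    calc (S.biUnion (fun u => VAL.MFin G' k φ u)).card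
        ≤ ((S.erase y).image (fun w => φ s(x, w))).card := Finset.card_le_card hsubset
      _ ≤ (S.erase y).card := Finset.card_image_le
      _ = S.card - 1 := Finset.card_erase_of_mem hyS
  set P := S.erase y with hP
  have hsplit : (VAL.MFin G' k φ y).card + ∑ u ∈ P, (VAL.MFin G' k φ u).card
      = ∑ u ∈ S, (VAL.MFin G' k φ u).card := by
    rw [hP]
    exact Finset.add_sum_erase S (fun u => (VAL.MFin G' k φ u).card) hyS
  have hylow : k - G.degree y + 1 ≤ (VAL.MFin G' k φ y).card := by
    have h1 := VAL.MFin_card_ge (k := k) G' φ y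
    rw [hdy'] at h1
    omega
  set B := P.filter (fun u => ¬ G.degree u = k) with hB
  have hBlow : B.card ≤ ∑ u ∈ P, (VAL.MFin G' k φ u).card := by
    have hstep : ∀ u ∈ B, 1 ≤ (VAL.MFin G' k φ u).card := by
      intro u hu
      have huP : u ∈ P := Finset.filter_subset _ _ hu
      have huy : u ≠ y := (Finset.mem_erase.1 huP).1
      have hux : u ≠ x := fun h => hxS (h ▸ Finset.mem_of_mem_erase huP)
      have hdeq : G'.degree u = G.degree u := by
        show (G'.neighborFinset u).card = _
        rw [VAL.del_nbr_other hux huy]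
        rfl
      have h2 := VAL.MFin_card_ge (k := k) G' φ u
      rw [hdeq] at h2
      have h3 : G.degree u < k :=
        lt_of_le_of_ne (G.degree_le_maxDegree u) (Finset.mem_filter.1 hu).2
      omega
    calc B.card = ∑ _u ∈ B, 1 := by rw [Finset.card_eq_sum_ones]
      _ ≤ ∑ u ∈ B, (VAL.MFin G' k φ u).card := Finset.sum_le_sum hstep
      _ ≤ ∑ u ∈ P, (VAL.MFin G' k φ u).card :=
          Finset.sum_le_sum_of_subset (Finset.filter_subset _ _)
  set A := P.filter (fun u => G.degree u = k) with hA
  have hPcard : A.card + B.card = P.card :=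
    Finset.card_filter_add_card_filter_not (s := P) (p := fun u => G.degree u = k)
  have hScard : S.card = P.card + 1 := by
    rw [hP, Finset.card_erase_of_mem hyS]
    have h0 : 0 < S.card := Finset.card_pos.2 ⟨y, hyS⟩
    omega
  have hfinal : k - G.degree y + 1 ≤ A.card := by omega
  refine hfinal.trans (Finset.card_le_card ?_)
  intro u hu
  have h1 := Finset.mem_filter.1 hu
  have huP := h1.1
  have huy : u ≠ y := (Finset.mem_erase.1 huP).1
  have huS := Finset.mem_of_mem_erase huP
  exact Finset.mem_filter.2 ⟨(G.mem_neighborFinset x u).2 (hadjS u huS), huy, h1.2⟩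
end

section
/- Let G be a simple graph of Class 2 with a critical edge e1 = x y1, let φ ∈ C^Δ(G − e1), and let F = (x, e1, y1, …, e_p, y_p) be a multi-fan at x with respect to e1 and φ. Then the vertex set V(F) = {x, y1, …, y_p} is φ-elementary. -/
open SimpleGraph

namespace MFAux

variable {V : Type*}

lemma exists_adj_of_mem {G : SimpleGraph V} {f : Sym2 V} (hf : f ∈ G.edgeSet) {v : V}
    (hv : v ∈ f) : ∃ w, f = s(v, w) ∧ G.Adj v w := by
  induction f with
  | _ a b =>
    rcases Sym2.mem_iff.mp hv with h | h
    · subst h; exact ⟨b, rfl, hf⟩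
    · subst h; exact ⟨a, Sym2.eq_swap, (G.mem_edgeSet.mp hf).symm⟩

lemma color_ne_of_missing {G : SimpleGraph V} {k : ℕ} {φ : Sym2 V → ℕ} {c : ℕ} {u : V}
    (h : c ∈ missing G k φ u) {f : Sym2 V} (hf : f ∈ G.edgeSet) (hv : u ∈ f) : φ f ≠ c := by
  obtain ⟨w, rfl, hadj⟩ := exists_adj_of_mem hf hv
  exact h.2 w hadj

lemma not_mem_sym2_ne {a b : V} (f : Sym2 V) (hfa : a ∉ f) : s(a, b) ≠ f := by
  intro h; exact hfa (h ▸ Sym2.mem_mk_left a b)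

lemma proper_mono {G H : SimpleGraph V} {k : ℕ} {φ : Sym2 V → ℕ} (hle : G ≤ H)
    (h : IsProperEdgeColoring H k φ) : IsProperEdgeColoring G k φ := by
  have hsub : G.edgeSet ⊆ H.edgeSet := edgeSet_mono hle
  exact ⟨fun e he => h.1 e (hsub he),
    fun e₁ he₁ e₂ he₂ hne hv => h.2 e₁ (hsub he₁) e₂ (hsub he₂) hne hv⟩

lemma missing_mono {G H : SimpleGraph V} {k : ℕ} {φ : Sym2 V → ℕ} (hle : G ≤ H) (u : V) :
    missing H k φ u ⊆ missing G k φ u := by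
  intro c hc
  exact ⟨hc.1, fun v hadj => hc.2 v (hle hadj)⟩

/-- Recoloring the (deleted) edge `s(u₁,u₂)` with a color missing at both ends gives
a proper coloring of the whole graph. -/
lemma recolor_proper [DecidableEq V] {K : SimpleGraph V} {k : ℕ} {φ : Sym2 V → ℕ}
    {u₁ u₂ : V} {α : ℕ}
    (hprop : IsProperEdgeColoring (K.deleteEdges {s(u₁, u₂)}) k φ)
    (he : K.Adj u₁ u₂)
    (hα₁ : α ∈ missing (K.deleteEdges {s(u₁, u₂)}) k φ u₁)
    (hα₂ : α ∈ missing (K.deleteEdges {s(u₁, u₂)}) k φ u₂) :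
    IsProperEdgeColoring K k (fun f => if f = s(u₁, u₂) then α else φ f) := by
  have hK' : ∀ f ∈ K.edgeSet, f ≠ s(u₁, u₂) → f ∈ (K.deleteEdges {s(u₁, u₂)}).edgeSet := by
    intro f hf hne
    rw [edgeSet_deleteEdges]
    exact ⟨hf, by simpa using hne⟩
  constructor
  · intro f hf
    by_cases h : f = s(u₁, u₂)
    · simpa [h] using hα₁.1
    · simpa [h] using hprop.1 f (hK' f hf h)
  · intro f₁ hf₁ f₂ hf₂ hne ⟨v, hv₁, hv₂⟩
    by_cases h1 : f₁ = s(u₁, u₂) <;> by_cases h2 : f₂ = s(u₁, u₂)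
    · exact absurd (h1.trans h2.symm) hne
    · -- f₁ is the new edge
      simp only [h1, if_pos rfl, if_neg h2]
      have hv₁' : v ∈ s(u₁, u₂) := h1 ▸ hv₁
      have hf₂' := hK' f₂ hf₂ h2
      rcases Sym2.mem_iff.mp hv₁' with rfl | rfl
      · exact (color_ne_of_missing hα₁ hf₂' hv₂).symm
      · exact (color_ne_of_missing hα₂ hf₂' hv₂).symm
    · simp only [h1, h2, if_neg h1, if_pos rfl]
      have hv₂' : v ∈ s(u₁, u₂) := h2 ▸ hv₂
      have hf₁' := hK' f₁ hf₁ h1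
      rcases Sym2.mem_iff.mp hv₂' with rfl | rfl
      · exact color_ne_of_missing hα₁ hf₁' hv₁
      · exact color_ne_of_missing hα₂ hf₁' hv₁
    · simp only [if_neg h1, if_neg h2]
      exact hprop.2 f₁ (hK' f₁ hf₁ h1) f₂ (hK' f₂ hf₂ h2) hne ⟨v, hv₁, hv₂⟩


lemma no_k_coloring [Fintype V] {G : SimpleGraph V} [DecidableRel G.Adj] (hClass2 : chromIndex G = G.maxDegree + 1) :
    ¬ ∃ ψ : Sym2 V → ℕ, IsProperEdgeColoring G G.maxDegree ψ := by
  rintro ⟨ψ, hψ⟩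
  have : chromIndex G ≤ G.maxDegree := Nat.sInf_le ⟨ψ, hψ⟩
  omega

lemma exists_missing_x [Fintype V] [DecidableEq V] {G : SimpleGraph V} [DecidableRel G.Adj]
    {x y₀ : V} (hadj₀ : G.Adj x y₀) {φ : Sym2 V → ℕ}
    (hφ : IsProperEdgeColoring (G.deleteEdges {s(x, y₀)}) G.maxDegree φ) :
    ∃ β, β ∈ missing (G.deleteEdges {s(x, y₀)}) G.maxDegree φ x := by
  classical
  set k := G.maxDegree with hk
  set N : Finset V := (G.neighborFinset x).erase y₀ with hN
  set U : Finset ℕ := N.image (fun w => φ s(x, w)) with hU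
  have hy₀ : y₀ ∈ G.neighborFinset x := by simpa using hadj₀
  have hdeg : 1 ≤ G.degree x := by
    rw [← SimpleGraph.card_neighborFinset_eq_degree]
    exact Finset.card_pos.mpr ⟨y₀, hy₀⟩
  have hdegk : G.degree x ≤ k := G.degree_le_maxDegree x
  have hcardU : U.card < k := by
    calc U.card ≤ N.card := Finset.card_image_le
    _ = G.degree x - 1 := by
        rw [hN, Finset.card_erase_of_mem hy₀, SimpleGraph.card_neighborFinset_eq_degree]
    _ < k := by omega
  have : ∃ β ∈ Finset.Icc 1 k, β ∉ U := by
    by_contra h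
    push_neg at h
    have : (Finset.Icc 1 k).card ≤ U.card := Finset.card_le_card h
    rw [Nat.card_Icc] at this
    omega
  obtain ⟨β, hβIcc, hβU⟩ := this
  refine ⟨β, hβIcc, fun v hadj => ?_⟩
  rw [SimpleGraph.deleteEdges_adj] at hadj
  have hvN : v ∈ N := by
    rw [hN, Finset.mem_erase]
    refine ⟨?_, by simpa using hadj.1⟩
    intro h
    exact hadj.2 (by rw [h]; simp)
  intro hc
  exact hβU (hU ▸ Finset.mem_image.mpr ⟨v, hvN, hc⟩)

section Case1

variable [Fintype V] [DecidableEq V] (G : SimpleGraph V) [DecidableRel G.Adj]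
variable (x : V) {p : ℕ} (hp : 0 < p) (y : Fin p → V)

/-- Case 1: if `x` and some fan vertex `y i` have a common missing color, we obtain
a contradiction (a proper Δ-edge-coloring of `G`). -/
lemma case1 (hClass2 : chromIndex G = G.maxDegree + 1)
    (hinj : Function.Injective y) (hadj : ∀ i : Fin p, G.Adj x (y i)) :
    ∀ n : ℕ, ∀ φ : Sym2 V → ℕ,
      IsProperEdgeColoring (G.deleteEdges {s(x, y ⟨0, hp⟩)}) G.maxDegree φ →
      (∀ i : Fin p, 0 < (i : ℕ) → (i : ℕ) ≤ n → ∃ j : Fin p, j < i ∧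
        φ s(x, y i) ∈ missing (G.deleteEdges {s(x, y ⟨0, hp⟩)}) G.maxDegree φ (y j)) →
      ∀ i : Fin p, (i : ℕ) = n → ∀ α,
        α ∈ missing (G.deleteEdges {s(x, y ⟨0, hp⟩)}) G.maxDegree φ x →
        α ∈ missing (G.deleteEdges {s(x, y ⟨0, hp⟩)}) G.maxDegree φ (y i) → False := by
  have hxy : ∀ i : Fin p, x ≠ y i := fun i => (hadj i).ne
  have hedge_inj : ∀ i j : Fin p, s(x, y i) = s(x, y j) → i = j := by
    intro i j h
    exact hinj (Sym2.congr_right.mp h)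
  intro n
  induction n using Nat.strong_induction_on with
  | _ n ih =>
    intro φ hφ hfan i hi α hαx hαy
    set y₀ := y ⟨0, hp⟩ with hy₀
    set G' := G.deleteEdges {s(x, y₀)} with hG'
    by_cases h0 : (i : ℕ) = 0
    · -- base case: recolor the uncolored edge s(x,y₀) with α : proper coloring of G
      have hi0 : i = ⟨0, hp⟩ := Fin.ext h0
      subst hi0
      exact no_k_coloring hClass2
        ⟨_, recolor_proper hφ (hadj ⟨0, hp⟩) hαx hαy⟩
    · -- inductive step
      have hipos : 0 < (i : ℕ) := Nat.pos_of_ne_zero h0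
      obtain ⟨j, hji, hjmiss⟩ := hfan i hipos (le_of_eq hi)
      have hine0 : i ≠ ⟨0, hp⟩ := by
        intro h; rw [h] at h0; exact h0 rfl
      have hG'adj : ∀ l : Fin p, l ≠ ⟨0, hp⟩ → G'.Adj x (y l) := by
        intro l hl
        rw [hG', SimpleGraph.deleteEdges_adj]
        refine ⟨hadj l, ?_⟩
        simp only [Set.mem_singleton_iff]
        intro h
        exact hl (hedge_inj l ⟨0, hp⟩ h)
      have hei : G'.Adj x (y i) := hG'adj i hine0
      have heiE : s(x, y i) ∈ G'.edgeSet := (SimpleGraph.mem_edgeSet _).mpr hei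
      set c := φ s(x, y i) with hc
      set φ₂ : Sym2 V → ℕ := fun f => if f = s(x, y i) then α else φ f with hφ₂
      -- φ₂ is a proper coloring of G'
      have hdel_le : G'.deleteEdges {s(x, y i)} ≤ G' := SimpleGraph.deleteEdges_le _
      have hprop₂ : IsProperEdgeColoring G' G.maxDegree φ₂ := by
        have h1 : IsProperEdgeColoring (G'.deleteEdges {s(x, y i)}) G.maxDegree φ :=
          proper_mono hdel_le hφ
        have h2 := recolor_proper (K := G') (k := G.maxDegree) h1 hei
          (missing_mono hdel_le x hαx) (missing_mono hdel_le (y i) hαy)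
        exact h2
      -- unchanged edges at any vertex different from x and y i
      have hother : ∀ (u v : V), u ≠ x → u ≠ y i → φ₂ s(u, v) = φ s(u, v) := by
        intro u v hux huy
        rw [hφ₂]
        simp only
        rw [if_neg]
        exact not_mem_sym2_ne _ (by rw [Sym2.mem_iff]; push_neg; exact ⟨hux, huy⟩)
      have hcIcc : c ∈ Finset.Icc 1 G.maxDegree := hφ.1 _ heiE
      have hαc : α ≠ c := fun h => (color_ne_of_missing hαx heiE (Sym2.mem_mk_left _ _)) h.symm
      -- c is missing at x for φ₂
      have hcx : c ∈ missing G' G.maxDegree φ₂ x := by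
        refine ⟨hcIcc, fun v hadjv => ?_⟩
        by_cases hv : s(x, v) = s(x, y i)
        · rw [hφ₂]; simp only [hv, if_pos rfl]; exact hαc
        · have : φ₂ s(x, v) = φ s(x, v) := by rw [hφ₂]; simp only [if_neg hv]
          rw [this]
          exact hφ.2 _ ((SimpleGraph.mem_edgeSet _).mpr hadjv) _ heiE hv
            ⟨x, Sym2.mem_mk_left _ _, Sym2.mem_mk_left _ _⟩
      -- c is missing at y j for φ₂
      have hyjx : y j ≠ x := fun h => hxy j h.symm
      have hyji : y j ≠ y i := fun h => absurd (hinj h) (Fin.ne_of_lt hji)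
      have hcyj : c ∈ missing G' G.maxDegree φ₂ (y j) := by
        refine ⟨hcIcc, fun v hadjv => ?_⟩
        rw [hother (y j) v hyjx hyji]
        exact hjmiss.2 v hadjv
      -- the fan condition for φ₂ up to j
      have hfan₂ : ∀ i' : Fin p, 0 < (i' : ℕ) → (i' : ℕ) ≤ (j : ℕ) → ∃ j' : Fin p, j' < i' ∧
          φ₂ s(x, y i') ∈ missing G' G.maxDegree φ₂ (y j') := by
        intro i' hi'pos hi'le
        have hjiN : (j : ℕ) < (i : ℕ) := hji
        have hi'n : (i' : ℕ) ≤ n := by omega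
        obtain ⟨j', hj', hmem⟩ := hfan i' hi'pos hi'n
        have hi'i : i' ≠ i := by
          intro h
          have : (i' : ℕ) = (i : ℕ) := congrArg Fin.val h
          omega
        have he' : φ₂ s(x, y i') = φ s(x, y i') := by
          rw [hφ₂]; simp only; rw [if_neg]
          intro h; exact hi'i (hedge_inj _ _ h)
        have hj'x : y j' ≠ x := fun h => hxy j' h.symm
        have hj'i : y j' ≠ y i := by
          intro h
          have h2 : (j' : ℕ) = (i : ℕ) := congrArg Fin.val (hinj h)
          have h3 : (j' : ℕ) < (i' : ℕ) := hj'
          omega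
        refine ⟨j', hj', ?_⟩
        rw [he']
        refine ⟨hmem.1, fun v hadjv => ?_⟩
        rw [hother (y j') v hj'x hj'i]
        exact hmem.2 v hadjv
      exact ih (j : ℕ) (by rw [← hi]; exact hji) φ₂ hprop₂ hfan₂ j rfl c hcx hcyj

end Case1


/-! ### Kempe chain (color swap) machinery -/

open scoped Classical in
/-- Swap the colors `α` and `β` on all edges whose endpoints all lie in `S`. -/
noncomputable def swapC (φ : Sym2 V → ℕ) (α β : ℕ) (S : Set V) : Sym2 V → ℕ :=
  fun f => if (∀ v ∈ f, v ∈ S) ∧ (φ f = α ∨ φ f = β) then (if φ f = α then β else α) else φ f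

/-- Closure hypothesis: `S` is a union of `α/β`-components. -/
def SClosed (G₀ : SimpleGraph V) (φ : Sym2 V → ℕ) (α β : ℕ) (S : Set V) : Prop :=
  ∀ u v, G₀.Adj u v → (φ s(u, v) = α ∨ φ s(u, v) = β) → (u ∈ S ↔ v ∈ S)

section Swap

variable {k : ℕ} {φ : Sym2 V → ℕ} {α β : ℕ} {G₀ : SimpleGraph V} {S : Set V}

/-- The transposition of `α` and `β` as a function on colors. -/
def σc (α β : ℕ) (c : ℕ) : ℕ := if c = α then β else if c = β then α else c

lemma σc_inj (hαβ : α ≠ β) (c d : ℕ) (h : σc α β c = σc α β d) : c = d := by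
  unfold σc at h
  split_ifs at h <;> omega

lemma swap_at_nonmem {u : V} {f : Sym2 V} (hu : u ∉ S) (hv : u ∈ f) :
    swapC φ α β S f = φ f := by
  rw [swapC, if_neg]
  rintro ⟨h1, -⟩
  exact hu (h1 u hv)

lemma swap_at_mem (hcl : SClosed G₀ φ α β S) {u v : V} (hu : u ∈ S) (hadj : G₀.Adj u v) :
    swapC φ α β S s(u, v) = σc α β (φ s(u, v)) := by
  by_cases hc : φ s(u, v) = α ∨ φ s(u, v) = β
  · have hvS : v ∈ S := (hcl u v hadj hc).mp hu
    have hall : ∀ w ∈ s(u, v), w ∈ S := by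
      intro w hw
      rcases Sym2.mem_iff.mp hw with rfl | rfl
      · exact hu
      · exact hvS
    have hcond : (∀ w ∈ s(u, v), w ∈ S) ∧ (φ s(u, v) = α ∨ φ s(u, v) = β) := ⟨hall, hc⟩
    rw [swapC, if_pos hcond]
    by_cases h2 : φ s(u, v) = α
    · rw [if_pos h2, σc, if_pos h2]
    · rcases hc with h | h
      · exact absurd h h2
      · rw [if_neg h2, σc, if_neg h2, if_pos h]
  · push_neg at hc
    rw [swapC, if_neg (by tauto), σc, if_neg hc.1, if_neg hc.2]

lemma swap_proper (hcl : SClosed G₀ φ α β S) (hφ : IsProperEdgeColoring G₀ k φ)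
    (hαβ : α ≠ β) (hα : α ∈ Finset.Icc 1 k) (hβ : β ∈ Finset.Icc 1 k) :
    IsProperEdgeColoring G₀ k (swapC φ α β S) := by
  constructor
  · intro f hf
    rw [swapC]
    split_ifs with h1 h2
    · exact hβ
    · exact hα
    · exact hφ.1 f hf
  · intro f₁ hf₁ f₂ hf₂ hne ⟨v, hv₁, hv₂⟩
    have hne' := hφ.2 f₁ hf₁ f₂ hf₂ hne ⟨v, hv₁, hv₂⟩
    by_cases hv : v ∈ S
    · obtain ⟨w₁, rfl, ha₁⟩ := exists_adj_of_mem hf₁ hv₁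
      obtain ⟨w₂, rfl, ha₂⟩ := exists_adj_of_mem hf₂ hv₂
      rw [swap_at_mem hcl hv ha₁, swap_at_mem hcl hv ha₂]
      intro h
      exact hne' (σc_inj hαβ _ _ h)
    · rw [swap_at_nonmem hv hv₁, swap_at_nonmem hv hv₂]
      exact hne'

lemma swap_missing_nonmem (hu : u ∉ S) :
    missing G₀ k (swapC φ α β S) u = missing G₀ k φ u := by
  unfold missing
  ext c
  simp only [Set.mem_setOf_eq, and_congr_right_iff]
  intro _
  constructor <;> intro h v hadj <;>
    have heq : swapC φ α β S s(u, v) = φ s(u, v) :=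
      swap_at_nonmem hu (Sym2.mem_mk_left u v)
  · rw [← heq]; exact h v hadj
  · rw [heq]; exact h v hadj

lemma swap_missing_mem (hcl : SClosed G₀ φ α β S) (hαβ : α ≠ β)
    (hβk : β ∈ Finset.Icc 1 k) (hu : u ∈ S)
    (hα : α ∈ missing G₀ k φ u) : β ∈ missing G₀ k (swapC φ α β S) u := by
  refine ⟨hβk, fun v hadj => ?_⟩
  rw [swap_at_mem hcl hu hadj]
  set c := φ s(u, v) with hc
  have hcα : c ≠ α := hα.2 v hadj
  rw [σc, if_neg hcα]
  by_cases h : c = β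
  · rw [if_pos h]; exact hαβ
  · rw [if_neg h]; exact h

lemma swap_missing_other {c : ℕ} (hcα : c ≠ α) (hcβ : c ≠ β) (u : V) :
    c ∈ missing G₀ k (swapC φ α β S) u ↔ c ∈ missing G₀ k φ u := by
  have key : ∀ f : Sym2 V, swapC φ α β S f = c ↔ φ f = c := by
    intro f
    rw [swapC]
    split_ifs with h1 h2
    · constructor <;> intro h <;> omega
    · rcases h1.2 with h3 | h3 <;> constructor <;> intro h <;> omega
    · exact Iff.rfl
  unfold missing
  simp only [Set.mem_setOf_eq, and_congr_right_iff]
  intro _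
  constructor <;> intro h v hadj <;> intro hh
  · exact h v hadj ((key _).mpr hh)
  · exact h v hadj ((key _).mp hh)

end Swap

/-! ### The `α/β` subgraph and its structure -/

/-- The subgraph of `G₀` consisting of edges colored `α` or `β`. -/
def colorGraph (G₀ : SimpleGraph V) (φ : Sym2 V → ℕ) (α β : ℕ) : SimpleGraph V where
  Adj u v := G₀.Adj u v ∧ (φ s(u, v) = α ∨ φ s(u, v) = β)
  symm := ⟨by
    intro u v ⟨h, hc⟩
    exact ⟨h.symm, by rwa [Sym2.eq_swap]⟩⟩
  loopless := ⟨fun u ⟨h, _⟩ => G₀.irrefl h⟩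

section ColorGraph

variable {k : ℕ} {φ : Sym2 V → ℕ} {α β : ℕ} {G₀ : SimpleGraph V}

lemma colorGraph_D1 (hφ : IsProperEdgeColoring G₀ k φ) {u : V} {γ : ℕ}
    (hγ : γ = α ∨ γ = β) (hmiss : γ ∈ missing G₀ k φ u) :
    ∀ w₁ w₂, (colorGraph G₀ φ α β).Adj u w₁ → (colorGraph G₀ φ α β).Adj u w₂ → w₁ = w₂ := by
  rintro w₁ w₂ ⟨h1, hc1⟩ ⟨h2, hc2⟩
  by_contra hne
  have hedge : s(u, w₁) ≠ s(u, w₂) := fun h => hne (Sym2.congr_right.mp h)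
  have hne' := hφ.2 _ ((SimpleGraph.mem_edgeSet _).mpr h1) _ ((SimpleGraph.mem_edgeSet _).mpr h2)
    hedge ⟨u, Sym2.mem_mk_left _ _, Sym2.mem_mk_left _ _⟩
  have hm1 : φ s(u, w₁) ≠ γ := hmiss.2 w₁ h1
  have hm2 : φ s(u, w₂) ≠ γ := hmiss.2 w₂ h2
  rcases hγ with rfl | rfl <;> rcases hc1 with h | h <;> rcases hc2 with h' | h' <;> omega

lemma colorGraph_D2 (hφ : IsProperEdgeColoring G₀ k φ) (u : V) :
    ∀ w₁ w₂ w₃, (colorGraph G₀ φ α β).Adj u w₁ → (colorGraph G₀ φ α β).Adj u w₂ →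
      (colorGraph G₀ φ α β).Adj u w₃ → w₁ = w₂ ∨ w₁ = w₃ ∨ w₂ = w₃ := by
  rintro w₁ w₂ w₃ ⟨h1, hc1⟩ ⟨h2, hc2⟩ ⟨h3, hc3⟩
  by_contra hne
  push_neg at hne
  obtain ⟨hne12, hne13, hne23⟩ := hne
  have key : ∀ a b : V, (colorGraph G₀ φ α β).Adj u a → (colorGraph G₀ φ α β).Adj u b →
      a ≠ b → φ s(u, a) ≠ φ s(u, b) := by
    intro a b ha hb hab
    exact hφ.2 _ ((SimpleGraph.mem_edgeSet _).mpr ha.1) _ ((SimpleGraph.mem_edgeSet _).mpr hb.1)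
      (fun h => hab (Sym2.congr_right.mp h)) ⟨u, Sym2.mem_mk_left _ _, Sym2.mem_mk_left _ _⟩
  have k12 := key _ _ ⟨h1, hc1⟩ ⟨h2, hc2⟩ hne12
  have k13 := key _ _ ⟨h1, hc1⟩ ⟨h3, hc3⟩ hne13
  have k23 := key _ _ ⟨h2, hc2⟩ ⟨h3, hc3⟩ hne23
  rcases hc1 with h | h <;> rcases hc2 with h' | h' <;> rcases hc3 with h'' | h'' <;> omega

end ColorGraph


/-! ### Paths in graphs of maximum degree two -/

section Paths

variable {H : SimpleGraph V}

lemma exists_cons_of_ne {a b : V} (hab : a ≠ b) (P : H.Walk a b) :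
    ∃ (u : V) (h : H.Adj a u) (q : H.Walk u b), P = SimpleGraph.Walk.cons h q :=
  SimpleGraph.Walk.not_nil_iff.mp (SimpleGraph.Walk.not_nil_of_ne hab)

lemma internal_two_neighbors [DecidableEq V] {a b : V} (P : H.Walk a b)
    (hP : P.IsPath) {v : V} (hv : v ∈ P.support) (hva : v ≠ a) (hvb : v ≠ b) :
    ∃ u₁ u₂, u₁ ≠ u₂ ∧ H.Adj v u₁ ∧ H.Adj v u₂ ∧ u₁ ∈ P.support ∧ u₂ ∈ P.support := by
  set t1 := P.takeUntil v hv with ht1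
  set t2 := P.dropUntil v hv with ht2
  obtain ⟨u₁, h1, q1, e1⟩ := exists_cons_of_ne (Ne.symm hva).symm t1.reverse
  obtain ⟨u₂, h2, q2, e2⟩ := exists_cons_of_ne hvb t2
  have hu₁t1 : u₁ ∈ t1.support := by
    have : u₁ ∈ t1.reverse.support := by
      rw [e1]
      simp [SimpleGraph.Walk.support_cons]
    rwa [SimpleGraph.Walk.support_reverse, List.mem_reverse] at this
  have hu₂q2 : u₂ ∈ q2.support := SimpleGraph.Walk.start_mem_support q2
  have ht2supp : t2.support = v :: q2.support := by
    rw [e2, SimpleGraph.Walk.support_cons]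
  have hspec := P.take_spec hv
  have hnodup : (t1.support ++ t2.support.tail).Nodup := by
    have := hP.support_nodup
    rw [← hspec, SimpleGraph.Walk.support_append] at this
    exact this
  have hdisj : t1.support.Disjoint t2.support.tail := List.disjoint_of_nodup_append hnodup
  refine ⟨u₁, u₂, ?_, h1, h2, ?_, ?_⟩
  · intro h
    subst h
    apply hdisj hu₁t1
    rw [ht2supp]
    simpa using hu₂q2
  · exact SimpleGraph.Walk.support_takeUntil_subset P hv hu₁t1
  · apply SimpleGraph.Walk.support_dropUntil_subset P hv
    rw [ht2supp]
    exact List.mem_cons_of_mem _ hu₂q2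

lemma support_closed [DecidableEq V] {a b : V} (P : H.Walk a b) (hP : P.IsPath) (hab : a ≠ b)
    (hD2 : ∀ u w₁ w₂ w₃, H.Adj u w₁ → H.Adj u w₂ → H.Adj u w₃ → w₁ = w₂ ∨ w₁ = w₃ ∨ w₂ = w₃)
    (hDa : ∀ w₁ w₂, H.Adj a w₁ → H.Adj a w₂ → w₁ = w₂)
    (hDb : ∀ w₁ w₂, H.Adj b w₁ → H.Adj b w₂ → w₁ = w₂)
    {v w : V} (hv : v ∈ P.support) (hw : H.Adj v w) : w ∈ P.support := by
  by_cases hva : v = a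
  · subst hva
    obtain ⟨u, hu, q, e⟩ := exists_cons_of_ne hab P
    have hwu : w = u := hDa w u hw hu
    have hmem : u ∈ P.support := by
      rw [e, SimpleGraph.Walk.support_cons]
      exact List.mem_cons_of_mem _ (SimpleGraph.Walk.start_mem_support q)
    exact hwu ▸ hmem
  · by_cases hvb : v = b
    · subst hvb
      obtain ⟨u, hu, q, e⟩ := exists_cons_of_ne (Ne.symm hab) P.reverse
      have hwu : w = u := hDb w u hw hu
      have hmem : u ∈ P.reverse.support := by
        rw [e, SimpleGraph.Walk.support_cons]
        exact List.mem_cons_of_mem _ (SimpleGraph.Walk.start_mem_support q)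
      rw [SimpleGraph.Walk.support_reverse, List.mem_reverse] at hmem
      exact hwu ▸ hmem
    · obtain ⟨u₁, u₂, hne, ha₁, ha₂, hm₁, hm₂⟩ := internal_two_neighbors P hP hv hva hvb
      rcases hD2 v u₁ u₂ w ha₁ ha₂ hw with h | h | h
      · exact absurd h hne
      · exact h ▸ hm₁
      · exact h ▸ hm₂

lemma walk_closure {S : V → Prop} (hcl : ∀ v w, S v → H.Adj v w → S w) {z z' : V}
    (W : H.Walk z z') (hz : S z) : S z' := by
  induction W with
  | nil => exact hz
  | cons h q ih => exact ih (hcl _ _ hz h)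

/-- Three distinct vertices of degree at most one cannot be pairwise connected in a
graph of maximum degree at most two. -/
lemma no_three_endpoints [DecidableEq V] {a b c : V} (hab : a ≠ b) (hca : c ≠ a) (hcb : c ≠ b)
    (hD2 : ∀ u w₁ w₂ w₃, H.Adj u w₁ → H.Adj u w₂ → H.Adj u w₃ → w₁ = w₂ ∨ w₁ = w₃ ∨ w₂ = w₃)
    (hDa : ∀ w₁ w₂, H.Adj a w₁ → H.Adj a w₂ → w₁ = w₂)
    (hDb : ∀ w₁ w₂, H.Adj b w₁ → H.Adj b w₂ → w₁ = w₂)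
    (hDc : ∀ w₁ w₂, H.Adj c w₁ → H.Adj c w₂ → w₁ = w₂)
    (h1 : H.Reachable a c) (h2 : H.Reachable b c) : False := by
  obtain ⟨W⟩ := h1.trans h2.symm
  set P : H.Walk a b := (W.toPath : H.Walk a b) with hPdef
  have hPpath : P.IsPath := W.toPath.2
  have hclosure : ∀ v w, v ∈ P.support → H.Adj v w → w ∈ P.support :=
    fun v w hv hw => support_closed P hPpath hab hD2 hDa hDb hv hw
  obtain ⟨Wc⟩ := h1
  have hc : c ∈ P.support :=
    walk_closure (S := fun z => z ∈ P.support) (fun v w hv hw => hclosure v w hv hw) Wc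
      (SimpleGraph.Walk.start_mem_support _)
  obtain ⟨u₁, u₂, hne, ha₁, ha₂, -, -⟩ := internal_two_neighbors P hPpath hc hca hcb
  exact hne (hDc u₁ u₂ ha₁ ha₂)

end Paths


end MFAux

/-- If `G` is Class 2 with critical edge `e₁ = x y₀`,
`φ ∈ C^Δ(G - e₁)`, and `F = (x, e₁, y 0, …, e_p, y (p-1))` is a multi-fan at `x`
with respect to `e₁` and `φ`, then `V(F) = {x} ∪ {y i}` is `φ`-elementary. -/
theorem multifan_elementary {V : Type*} [Fintype V] [DecidableEq V]
    (G : SimpleGraph V) [DecidableRel G.Adj]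
    (hClass2 : chromIndex G = G.maxDegree + 1)
    (x : V) (p : ℕ) (hp : 0 < p) (y : Fin p → V)
    -- the edges `e_i = x yᵢ` are distinct edges of `G`
    (hinj : Function.Injective y)
    (hadj : ∀ i : Fin p, G.Adj x (y i))
    -- `e₁ = x y₀` is a critical edge
    (hcritical : chromIndex (G.deleteEdges {s(x, y ⟨0, hp⟩)}) < chromIndex G)
    (φ : Sym2 V → ℕ)
    (hφ : IsProperEdgeColoring (G.deleteEdges {s(x, y ⟨0, hp⟩)}) G.maxDegree φ)
    -- the multi-fan condition F2
    (hfan : ∀ i : Fin p, 0 < (i : ℕ) → ∃ j : Fin p, j < i ∧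
      φ s(x, y i) ∈ missing (G.deleteEdges {s(x, y ⟨0, hp⟩)}) G.maxDegree φ (y j)) :
    ∀ u ∈ insert x (Set.range y), ∀ v ∈ insert x (Set.range y), u ≠ v →
      missing (G.deleteEdges {s(x, y ⟨0, hp⟩)}) G.maxDegree φ u ∩
        missing (G.deleteEdges {s(x, y ⟨0, hp⟩)}) G.maxDegree φ v = ∅ := by
  classical
  set k := G.maxDegree with hk
  set G' := G.deleteEdges {s(x, y ⟨0, hp⟩)} with hG'
  have hxy_elem : ∀ (i : Fin p) (c : ℕ),
      c ∈ missing G' k φ x → c ∈ missing G' k φ (y i) → False := by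
    intro i c hcx hcy
    exact MFAux.case1 G x hp y hClass2 hinj hadj (i : ℕ) φ hφ
      (fun i' h1 _ => hfan i' h1) i rfl c hcx hcy
  have key : ∀ a b : Fin p, a ≠ b → ∀ c,
      c ∈ missing G' k φ (y a) → c ∈ missing G' k φ (y b) → False := by
    intro a b hab c hca hcb
    set B : Set ℕ := {n | ∃ r t : Fin p, (r : ℕ) = n ∧ t < r ∧
      ∃ γ, γ ∈ missing G' k φ (y t) ∧ γ ∈ missing G' k φ (y r)} with hB
    have hBne : B.Nonempty := by
      rcases lt_trichotomy a b with h | h | h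
      · exact ⟨(b : ℕ), b, a, rfl, h, c, hca, hcb⟩
      · exact absurd h hab
      · exact ⟨(a : ℕ), a, b, rfl, h, c, hcb, hca⟩
    obtain ⟨r, t, hrval, htr, α, hαt, hαr⟩ := Nat.sInf_mem hBne
    have pairwise_below : ∀ a' b' : Fin p, a' < b' → (b' : ℕ) < sInf B →
        ∀ γ, γ ∈ missing G' k φ (y a') → γ ∈ missing G' k φ (y b') → False := by
      intro a' b' hlt hblt γ h1 h2
      exact Nat.notMem_of_lt_sInf hblt ⟨b', a', rfl, hlt, γ, h1, h2⟩
    by_cases hαx : α ∈ missing G' k φ x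
    · exact hxy_elem t α hαx hαt
    obtain ⟨β, hβx⟩ := MFAux.exists_missing_x (hadj ⟨0, hp⟩) hφ
    have hαβ : α ≠ β := fun h => hαx (by rw [h]; exact hβx)
    have hαIcc : α ∈ Finset.Icc 1 k := hαt.1
    have hβIcc : β ∈ Finset.Icc 1 k := hβx.1
    set H := MFAux.colorGraph G' φ α β with hH
    have hD2 := fun u => MFAux.colorGraph_D2 (α := α) (β := β) hφ u
    have hD1x := MFAux.colorGraph_D1 (α := α) (β := β) hφ (Or.inr rfl) hβx
    have hD1t := MFAux.colorGraph_D1 (α := α) (β := β) hφ (Or.inl rfl) hαt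
    have hD1r := MFAux.colorGraph_D1 (α := α) (β := β) hφ (Or.inl rfl) hαr
    have hxyt : x ≠ y t := (hadj t).ne
    have hxyr : x ≠ y r := (hadj r).ne
    have hytyr : y t ≠ y r := fun h => (Fin.ne_of_lt htr) (hinj h)
    have hG'adj : ∀ i' : Fin p, 0 < (i' : ℕ) → G'.Adj x (y i') := by
      intro i' h1
      rw [hG', SimpleGraph.deleteEdges_adj]
      refine ⟨hadj i', ?_⟩
      simp only [Set.mem_singleton_iff]
      intro h
      have h2 : i' = ⟨0, hp⟩ := hinj (Sym2.congr_right.mp h)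
      rw [h2] at h1
      simp at h1
    have htrN : (t : ℕ) < (r : ℕ) := htr
    by_cases hreach : H.Reachable (y t) x
    · -- swap the component of `y r`
      have hnr : ¬ H.Reachable (y r) x := fun h2 =>
        MFAux.no_three_endpoints hytyr hxyt hxyr hD2 hD1t hD1r hD1x hreach h2
      set S : Set V := {z | H.Reachable (y r) z} with hS
      have hScl : MFAux.SClosed G' φ α β S := by
        intro u' v' hadj' hc
        have hHadj : H.Adj u' v' := And.intro hadj' hc
        exact ⟨fun hu' => hu'.trans hHadj.reachable, fun hv' => hv'.trans hHadj.symm.reachable⟩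
      have hxS : x ∉ S := hnr
      have hrS : y r ∈ S := SimpleGraph.Reachable.refl _
      have htS : y t ∉ S := fun h => hnr (SimpleGraph.Reachable.trans h hreach)
      set φ' := MFAux.swapC φ α β S with hφ'
      have hprop' : IsProperEdgeColoring G' k φ' := MFAux.swap_proper hScl hφ hαβ hαIcc hβIcc
      have hβ'x : β ∈ missing G' k φ' x := by
        rw [hφ', MFAux.swap_missing_nonmem hxS]; exact hβx
      have hβ'r : β ∈ missing G' k φ' (y r) := MFAux.swap_missing_mem hScl hαβ hβIcc hrS hαr
      have hfan' : ∀ i' : Fin p, 0 < (i' : ℕ) → (i' : ℕ) ≤ (r : ℕ) → ∃ j' : Fin p, j' < i' ∧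
          φ' s(x, y i') ∈ missing G' k φ' (y j') := by
        intro i' h1 h2
        obtain ⟨j', hj', hmem⟩ := hfan i' h1
        have hj'N : (j' : ℕ) < (i' : ℕ) := hj'
        have hφ'e : φ' s(x, y i') = φ s(x, y i') :=
          MFAux.swap_at_nonmem hxS (Sym2.mem_mk_left _ _)
        have hcβ : φ s(x, y i') ≠ β := hβx.2 (y i') (hG'adj i' h1)
        by_cases hcα : φ s(x, y i') = α
        · have hj't : j' = t := by
            by_contra hne
            have hj'B : (j' : ℕ) < sInf B := by omega
            have htB : (t : ℕ) < sInf B := by omega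
            rcases lt_trichotomy j' t with hlt | heq | hgt
            · exact pairwise_below j' t hlt htB α (hcα ▸ hmem) hαt
            · exact hne heq
            · exact pairwise_below t j' hgt hj'B α hαt (hcα ▸ hmem)
          refine ⟨j', hj', ?_⟩
          rw [hφ'e, hj't, hφ', MFAux.swap_missing_nonmem htS]
          exact hj't ▸ hmem
        · refine ⟨j', hj', ?_⟩
          rw [hφ'e, hφ', MFAux.swap_missing_other hcα hcβ]
          exact hmem
      exact MFAux.case1 G x hp y hClass2 hinj hadj (r : ℕ) φ' hprop' hfan' r rfl β hβ'x hβ'r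
    · -- swap the component of `y t`
      set S : Set V := {z | H.Reachable (y t) z} with hS
      have hScl : MFAux.SClosed G' φ α β S := by
        intro u' v' hadj' hc
        have hHadj : H.Adj u' v' := And.intro hadj' hc
        exact ⟨fun hu' => hu'.trans hHadj.reachable, fun hv' => hv'.trans hHadj.symm.reachable⟩
      have hxS : x ∉ S := hreach
      have htS : y t ∈ S := SimpleGraph.Reachable.refl _
      set φ' := MFAux.swapC φ α β S with hφ'
      have hprop' : IsProperEdgeColoring G' k φ' := MFAux.swap_proper hScl hφ hαβ hαIcc hβIcc
      have hβ'x : β ∈ missing G' k φ' x := by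
        rw [hφ', MFAux.swap_missing_nonmem hxS]; exact hβx
      have hβ't : β ∈ missing G' k φ' (y t) := MFAux.swap_missing_mem hScl hαβ hβIcc htS hαt
      have hfan' : ∀ i' : Fin p, 0 < (i' : ℕ) → (i' : ℕ) ≤ (t : ℕ) → ∃ j' : Fin p, j' < i' ∧
          φ' s(x, y i') ∈ missing G' k φ' (y j') := by
        intro i' h1 h2
        obtain ⟨j', hj', hmem⟩ := hfan i' h1
        have hj'N : (j' : ℕ) < (i' : ℕ) := hj'
        have hφ'e : φ' s(x, y i') = φ s(x, y i') :=
          MFAux.swap_at_nonmem hxS (Sym2.mem_mk_left _ _)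
        have hcβ : φ s(x, y i') ≠ β := hβx.2 (y i') (hG'adj i' h1)
        by_cases hcα : φ s(x, y i') = α
        · exfalso
          have hj't : j' < t := by
            rw [Fin.lt_def]; omega
          have htB : (t : ℕ) < sInf B := by omega
          exact pairwise_below j' t hj't htB α (hcα ▸ hmem) hαt
        · refine ⟨j', hj', ?_⟩
          rw [hφ'e, hφ', MFAux.swap_missing_other hcα hcβ]
          exact hmem
      exact MFAux.case1 G x hp y hClass2 hinj hadj (t : ℕ) φ' hprop' hfan' t rfl β hβ'x hβ't
  intro u hu v hv huv
  rw [Set.eq_empty_iff_forall_notMem]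
  intro c hc
  obtain ⟨hcu, hcv⟩ := hc
  rcases Set.mem_insert_iff.mp hu with rfl | ⟨i, rfl⟩
  · rcases Set.mem_insert_iff.mp hv with rfl | ⟨j, rfl⟩
    · exact huv rfl
    · exact hxy_elem j c hcu hcv
  · rcases Set.mem_insert_iff.mp hv with rfl | ⟨j, rfl⟩
    · exact hxy_elem i c hcv hcu
    · exact key i j (fun h => huv (congrArg y h)) c hcu hcv
end

section
/- Let G be a simple graph of Class 2 with a critical edge e1 = x y1, let φ ∈ C^Δ(G − e1), and let F = (x, e1, y1, …, e_p, y_p) be a multi-fan at x with respect to e1 and φ. If α ∈ φ̄(x) and β ∈ φ̄(y_i) for some 1 ≤ i ≤ p, then the (α,β)-chain of G − e1 containing x is a path with endvertices x and y_i. -/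
/-- The spanning subgraph of `G` consisting of the edges colored `α` or `β`;
its connected components are the `(α,β)`-chains of `G`. -/
def chainGraph {V : Type*} (G : SimpleGraph V) (φ : Sym2 V → ℕ) (α β : ℕ) :
    SimpleGraph V :=
  SimpleGraph.fromRel fun u v => G.Adj u v ∧ (φ s(u, v) = α ∨ φ s(u, v) = β)

open SimpleGraph

lemma sym2_ne_pair {V : Type*} {a v c d : V} (h1 : a ≠ c) (h2 : a ≠ d) : s(a, v) ≠ s(c, d) := by
  intro h
  rcases Sym2.eq_iff.1 h with ⟨h', -⟩ | ⟨h', -⟩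
  exacts [h1 h', h2 h']

lemma isProper_iff {V : Type*} (H : SimpleGraph V) (k : ℕ) (φ : Sym2 V → ℕ) :
    IsProperEdgeColoring H k φ ↔
      (∀ u v, H.Adj u v → φ s(u, v) ∈ Finset.Icc 1 k) ∧
        ∀ u v w, H.Adj u v → H.Adj u w → v ≠ w → φ s(u, v) ≠ φ s(u, w) := by
  constructor
  · rintro ⟨h1, h2⟩
    refine ⟨fun u v huv => h1 _ (H.mem_edgeSet.2 huv), fun u v w huv huw hvw => ?_⟩
    refine h2 _ (H.mem_edgeSet.2 huv) _ (H.mem_edgeSet.2 huw) ?_ ⟨u, ?_, ?_⟩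
    · intro h
      rcases Sym2.eq_iff.1 h with ⟨-, h'⟩ | ⟨h', -⟩
      exacts [hvw h', huw.ne h']
    · exact Sym2.mem_mk_left u v
    · exact Sym2.mem_mk_left u w
  · rintro ⟨h1, h2⟩
    constructor
    · intro e
      induction e using Sym2.ind with
      | _ u v => exact fun he => h1 u v (H.mem_edgeSet.1 he)
    · rintro e₁ he₁ e₂ he₂ hne ⟨v, hv1, hv2⟩
      obtain ⟨a, rfl⟩ := Sym2.mem_iff_exists.1 hv1
      obtain ⟨b, rfl⟩ := Sym2.mem_iff_exists.1 hv2
      exact h2 v a b (H.mem_edgeSet.1 he₁) (H.mem_edgeSet.1 he₂)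
        (fun h => hne (by rw [h]))

lemma proper_icc {V : Type*} {H : SimpleGraph V} {k : ℕ} {φ : Sym2 V → ℕ}
    (hφ : IsProperEdgeColoring H k φ) {u v : V} (h : H.Adj u v) :
    φ s(u, v) ∈ Finset.Icc 1 k := ((isProper_iff H k φ).1 hφ).1 u v h

lemma proper_distinct {V : Type*} {H : SimpleGraph V} {k : ℕ} {φ : Sym2 V → ℕ}
    (hφ : IsProperEdgeColoring H k φ) {u v w : V} (h1 : H.Adj u v) (h2 : H.Adj u w)
    (h3 : v ≠ w) : φ s(u, v) ≠ φ s(u, w) := ((isProper_iff H k φ).1 hφ).2 u v w h1 h2 h3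

lemma chainGraph_adj {V : Type*} (H : SimpleGraph V) (φ : Sym2 V → ℕ) (α β : ℕ) (u v : V) :
    (chainGraph H φ α β).Adj u v ↔ H.Adj u v ∧ (φ s(u, v) = α ∨ φ s(u, v) = β) := by
  rw [chainGraph, SimpleGraph.fromRel_adj]
  constructor
  · rintro ⟨hne, h | h⟩
    · exact h
    · exact ⟨h.1.symm, by rw [Sym2.eq_swap]; exact h.2⟩
  · exact fun h => ⟨h.1.ne, Or.inl h⟩

lemma missing_mem {V : Type*} {G : SimpleGraph V} {k : ℕ} {φ : Sym2 V → ℕ} {u : V} {c : ℕ} :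
    c ∈ missing G k φ u ↔ c ∈ Finset.Icc 1 k ∧ ∀ v, G.Adj u v → φ s(u, v) ≠ c := Iff.rfl

lemma class2_no_coloring {V : Type*} [Fintype V] {G : SimpleGraph V} [DecidableRel G.Adj]
    (hClass2 : chromIndex G = G.maxDegree + 1)
    (ψ : Sym2 V → ℕ) (hψ : IsProperEdgeColoring G G.maxDegree ψ) : False := by
  have h : chromIndex G ≤ G.maxDegree := Nat.sInf_le ⟨ψ, hψ⟩
  omega

lemma recolor_proper {V : Type*} [DecidableEq V] {H K : SimpleGraph V} {k : ℕ}
    {φ : Sym2 V → ℕ} {γ : ℕ} {a b : V}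
    (hsub : ∀ u v, K.Adj u v → s(u, v) = s(a, b) ∨ H.Adj u v)
    (hφ : IsProperEdgeColoring H k φ)
    (hγIcc : γ ∈ Finset.Icc 1 k)
    (hγa : ∀ v, H.Adj a v → φ s(a, v) ≠ γ)
    (hγb : ∀ v, H.Adj b v → φ s(b, v) ≠ γ) :
    IsProperEdgeColoring K k (fun e => if e = s(a, b) then γ else φ e) := by
  rw [isProper_iff] at hφ ⊢
  obtain ⟨hc, hd⟩ := hφ
  constructor
  · intro u v huv
    by_cases h : s(u, v) = s(a, b)
    · simp only [h, if_pos rfl]; exact hγIcc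
    · simp only [if_neg h]
      exact hc u v ((hsub u v huv).resolve_left h)
  · intro u v w huv huw hvw
    by_cases h1 : s(u, v) = s(a, b) <;> by_cases h2 : s(u, w) = s(a, b)
    · exfalso
      rcases Sym2.eq_iff.1 (h1.trans h2.symm) with ⟨-, h'⟩ | ⟨h', -⟩
      exacts [hvw h', huw.ne h']
    · have huw' : H.Adj u w := (hsub u w huw).resolve_left h2
      simp only [if_pos h1, if_neg h2]
      rcases Sym2.eq_iff.1 h1 with ⟨hu, -⟩ | ⟨hu, -⟩ <;> subst hu
      · exact fun h => hγa w huw' h.symm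
      · exact fun h => hγb w huw' h.symm
    · have huv' : H.Adj u v := (hsub u v huv).resolve_left h1
      simp only [if_neg h1, if_pos h2]
      rcases Sym2.eq_iff.1 h2 with ⟨hu, -⟩ | ⟨hu, -⟩ <;> subst hu
      · exact hγa v huv'
      · exact hγb v huv'
    · simp only [if_neg h1, if_neg h2]
      exact hd u v w ((hsub u v huv).resolve_left h1) ((hsub u w huw).resolve_left h2) hvw

lemma edge_mem_H {V : Type*} {G : SimpleGraph V} {x : V} {p : ℕ} (hp : 0 < p) {y : Fin p → V}
    (hinj : Function.Injective y) (hadj : ∀ i : Fin p, G.Adj x (y i)) {l : Fin p}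
    (hl : 0 < (l : ℕ)) :
    (G.deleteEdges {s(x, y ⟨0, hp⟩)}).Adj x (y l) := by
  rw [SimpleGraph.deleteEdges_adj]
  refine ⟨hadj l, ?_⟩
  simp only [Set.mem_singleton_iff, Sym2.eq_iff]
  rintro (⟨-, h⟩ | ⟨h, -⟩)
  · have := congrArg Fin.val (hinj h)
    simp only [] at this
    omega
  · exact (hadj ⟨0, hp⟩).ne h

lemma no_common {V : Type*} [Fintype V] [DecidableEq V] {G : SimpleGraph V} [DecidableRel G.Adj]
    (hClass2 : chromIndex G = G.maxDegree + 1)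
    {x : V} {p : ℕ} (hp : 0 < p) {y : Fin p → V}
    (hinj : Function.Injective y) (hadj : ∀ i : Fin p, G.Adj x (y i)) :
    ∀ n : ℕ, ∀ i : Fin p, (i : ℕ) ≤ n →
    ∀ φ : Sym2 V → ℕ,
      IsProperEdgeColoring (G.deleteEdges {s(x, y ⟨0, hp⟩)}) G.maxDegree φ →
      (∀ l : Fin p, l ≤ i → 0 < (l : ℕ) → ∃ m : Fin p, m < l ∧
        φ s(x, y l) ∈ missing (G.deleteEdges {s(x, y ⟨0, hp⟩)}) G.maxDegree φ (y m)) →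
      ∀ γ : ℕ, γ ∈ missing (G.deleteEdges {s(x, y ⟨0, hp⟩)}) G.maxDegree φ x →
        γ ∈ missing (G.deleteEdges {s(x, y ⟨0, hp⟩)}) G.maxDegree φ (y i) → False := by
  set H := G.deleteEdges {s(x, y ⟨0, hp⟩)} with hH
  have hzero : ∀ φ, IsProperEdgeColoring H G.maxDegree φ → ∀ γ,
      γ ∈ missing H G.maxDegree φ x → γ ∈ missing H G.maxDegree φ (y ⟨0, hp⟩) → False := by
    intro φ hφ γ hγx hγ0
    refine class2_no_coloring hClass2 _
      (recolor_proper (a := x) (b := y ⟨0, hp⟩) ?_ hφ hγx.1 hγx.2 hγ0.2)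
    intro u v huv
    by_cases h : s(u, v) = s(x, y ⟨0, hp⟩)
    · exact Or.inl h
    · exact Or.inr (SimpleGraph.deleteEdges_adj.2 ⟨huv, by simpa using h⟩)
  intro n
  induction n with
  | zero =>
    intro i hi φ hφ hfan γ hγx hγy
    have hi0 : i = ⟨0, hp⟩ := Fin.ext (by simp only [Fin.val_mk]; omega)
    exact hzero φ hφ γ hγx (hi0 ▸ hγy)
  | succ n IH =>
    intro i hi φ hφ hfan γ hγx hγy
    by_cases h0 : (i : ℕ) = 0
    · have hi0 : i = ⟨0, hp⟩ := Fin.ext (by simp only [Fin.val_mk]; omega)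
      exact hzero φ hφ γ hγx (hi0 ▸ hγy)
    · obtain ⟨m, hm, hc⟩ := hfan i le_rfl (Nat.pos_of_ne_zero h0)
      have hxyi : H.Adj x (y i) := edge_mem_H hp hinj hadj (Nat.pos_of_ne_zero h0)
      have hmi : (m : ℕ) < (i : ℕ) := hm
      set c := φ s(x, y i) with hcdef
      set φ' : Sym2 V → ℕ := fun e => if e = s(x, y i) then γ else φ e with hφ'def
      have hφ'P : IsProperEdgeColoring H G.maxDegree φ' :=
        recolor_proper (fun u v h => Or.inr h) hφ hγx.1 hγx.2 hγy.2
      have hunch : ∀ u v : V, u ≠ x → u ≠ y i → φ' s(u, v) = φ s(u, v) := by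
        intro u v hu1 hu2
        simp only [hφ'def]
        rw [if_neg (sym2_ne_pair hu1 hu2)]
      have hcx : c ∈ missing H G.maxDegree φ' x := by
        refine ⟨proper_icc hφ hxyi, ?_⟩
        intro v hv
        by_cases h : v = y i
        · subst h
          simp only [hφ'def, if_pos rfl]
          exact fun h' => hγx.2 (y i) hxyi h'.symm
        · have hne : s(x, v) ≠ s(x, y i) := by
            intro h'
            rcases Sym2.eq_iff.1 h' with ⟨-, h''⟩ | ⟨h'', -⟩
            · exact h h''
            · exact (hadj i).ne h''
          simp only [hφ'def]
          rw [if_neg hne]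
          exact proper_distinct hφ hv hxyi h
      have hcm : c ∈ missing H G.maxDegree φ' (y m) := by
        refine ⟨hc.1, ?_⟩
        intro v hv
        rw [hunch (y m) v (hadj m).ne' (fun h => absurd (hinj h) (Fin.ne_of_lt hm))]
        exact hc.2 v hv
      have hfan' : ∀ l : Fin p, l ≤ m → 0 < (l : ℕ) → ∃ m' : Fin p, m' < l ∧
          φ' s(x, y l) ∈ missing H G.maxDegree φ' (y m') := by
        intro l hl hl0
        have hlne : (l : ℕ) < (i : ℕ) := lt_of_le_of_lt hl hm
        obtain ⟨m', hm', hmem⟩ := hfan l (le_of_lt (lt_of_le_of_lt hl hm)) hl0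
        have h1 : φ' s(x, y l) = φ s(x, y l) := by
          simp only [hφ'def]
          rw [if_neg]
          intro h
          rcases Sym2.eq_iff.1 h with ⟨-, h'⟩ | ⟨h', -⟩
          · exact absurd (congrArg Fin.val (hinj h')) (by omega)
          · exact (hadj i).ne h'
        have hm'l : (m' : ℕ) < (l : ℕ) := hm'
        refine ⟨m', hm', ?_⟩
        rw [h1]
        refine ⟨hmem.1, ?_⟩
        intro v hv
        rw [hunch (y m') v (hadj m').ne'
          (fun h => absurd (congrArg Fin.val (hinj h)) (by omega))]
        exact hmem.2 v hv
      exact IH m (by omega) φ' hφ'P hfan' c hcx hcm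

lemma chain_reach {V : Type*} [Fintype V] [DecidableEq V] {G : SimpleGraph V} [DecidableRel G.Adj]
    (hClass2 : chromIndex G = G.maxDegree + 1)
    {x : V} {p : ℕ} (hp : 0 < p) {y : Fin p → V}
    (hinj : Function.Injective y) (hadj : ∀ i : Fin p, G.Adj x (y i))
    (φ : Sym2 V → ℕ)
    (hφ : IsProperEdgeColoring (G.deleteEdges {s(x, y ⟨0, hp⟩)}) G.maxDegree φ)
    (hfan : ∀ i : Fin p, 0 < (i : ℕ) → ∃ j : Fin p, j < i ∧
      φ s(x, y i) ∈ missing (G.deleteEdges {s(x, y ⟨0, hp⟩)}) G.maxDegree φ (y j))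
    (α : ℕ)
    (hα : α ∈ missing (G.deleteEdges {s(x, y ⟨0, hp⟩)}) G.maxDegree φ x) :
    ∀ n : ℕ, ∀ i : Fin p, (i : ℕ) < n → ∀ β : ℕ, α ≠ β →
      β ∈ missing (G.deleteEdges {s(x, y ⟨0, hp⟩)}) G.maxDegree φ (y i) →
      (chainGraph (G.deleteEdges {s(x, y ⟨0, hp⟩)}) φ α β).Reachable x (y i) := by
  classical
  set H := G.deleteEdges {s(x, y ⟨0, hp⟩)} with hH
  intro n
  induction n with
  | zero => intro i hi; exact absurd hi (Nat.not_lt_zero _)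
  | succ n IH =>
    intro i hi β hαβ hβ
    by_contra hreach
    set C := chainGraph H φ α β with hC
    have hCadj : ∀ u v, C.Adj u v ↔ H.Adj u v ∧ (φ s(u, v) = α ∨ φ s(u, v) = β) :=
      fun u v => chainGraph_adj H φ α β u v
    set ψ : Sym2 V → ℕ := fun e =>
      if ∃ u v, e = s(u, v) ∧ C.Adj u v ∧ C.Reachable u (y i) then
        (if φ e = α then β else α) else φ e with hψdef
    have hswiff : ∀ u v : V, (∃ a b, s(u, v) = s(a, b) ∧ C.Adj a b ∧ C.Reachable a (y i)) ↔
        (C.Adj u v ∧ C.Reachable u (y i)) := by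
      intro u v
      constructor
      · rintro ⟨a, b, he, hab, hra⟩
        rcases Sym2.eq_iff.1 he with ⟨h1, h2⟩ | ⟨h1, h2⟩
        · subst h1; subst h2; exact ⟨hab, hra⟩
        · subst h1; subst h2; exact ⟨hab.symm, hab.symm.reachable.trans hra⟩
      · rintro ⟨h1, h2⟩; exact ⟨u, v, rfl, h1, h2⟩
    have hψ_eq : ∀ u v : V, ¬(C.Adj u v ∧ C.Reachable u (y i)) → ψ s(u, v) = φ s(u, v) := by
      intro u v h
      simp only [hψdef]
      rw [if_neg (fun hc => h ((hswiff u v).1 hc))]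
    have hψ_swap : ∀ u v : V, C.Adj u v → C.Reachable u (y i) →
        ψ s(u, v) = if φ s(u, v) = α then β else α := by
      intro u v h1 h2
      simp only [hψdef]
      rw [if_pos ((hswiff u v).2 ⟨h1, h2⟩)]
    have hψP : IsProperEdgeColoring H G.maxDegree ψ := by
      rw [isProper_iff]
      constructor
      · intro u v huv
        by_cases h : C.Adj u v ∧ C.Reachable u (y i)
        · rw [hψ_swap u v h.1 h.2]
          split_ifs
          · exact hβ.1
          · exact hα.1
        · rw [hψ_eq u v h]
          exact proper_icc hφ huv
      · intro u v w huv huw hvw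
        have hdist := proper_distinct hφ huv huw hvw
        by_cases hru : C.Reachable u (y i)
        · by_cases h1 : C.Adj u v <;> by_cases h2 : C.Adj u w
          · rcases (hCadj u v).1 h1 with ⟨-, hc1⟩
            rcases (hCadj u w).1 h2 with ⟨-, hc2⟩
            rw [hψ_swap u v h1 hru, hψ_swap u w h2 hru]
            rcases hc1 with hc1 | hc1 <;> rcases hc2 with hc2 | hc2
            · exact absurd (hc1.trans hc2.symm) hdist
            · simp [hc1, hc2, hαβ, Ne.symm hαβ]
            · simp [hc1, hc2, hαβ, Ne.symm hαβ]
            · exact absurd (hc1.trans hc2.symm) hdist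
          · rw [hψ_swap u v h1 hru, hψ_eq u w (fun h => h2 h.1)]
            rcases (hCadj u v).1 h1 with ⟨-, hc1⟩
            have hw1 : φ s(u, w) ≠ α := fun h => h2 ((hCadj u w).2 ⟨huw, Or.inl h⟩)
            have hw2 : φ s(u, w) ≠ β := fun h => h2 ((hCadj u w).2 ⟨huw, Or.inr h⟩)
            rcases hc1 with hc1 | hc1 <;> simp [hc1, Ne.symm hw1, Ne.symm hw2, Ne.symm hαβ]
          · rw [hψ_eq u v (fun h => h1 h.1), hψ_swap u w h2 hru]
            rcases (hCadj u w).1 h2 with ⟨-, hc2⟩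
            have hv1 : φ s(u, v) ≠ α := fun h => h1 ((hCadj u v).2 ⟨huv, Or.inl h⟩)
            have hv2 : φ s(u, v) ≠ β := fun h => h1 ((hCadj u v).2 ⟨huv, Or.inr h⟩)
            rcases hc2 with hc2 | hc2 <;> simp [hc2, hv1, hv2, Ne.symm hαβ]
          · rw [hψ_eq u v (fun h => h1 h.1), hψ_eq u w (fun h => h2 h.1)]
            exact hdist
        · rw [hψ_eq u v (fun h => hru h.2), hψ_eq u w (fun h => hru h.2)]
          exact hdist
    have hαx : α ∈ missing H G.maxDegree ψ x := by
      refine ⟨hα.1, fun v hv => ?_⟩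
      rw [hψ_eq x v (fun h => hreach h.2)]
      exact hα.2 v hv
    have hαyi : α ∈ missing H G.maxDegree ψ (y i) := by
      refine ⟨hα.1, fun v hv => ?_⟩
      by_cases h : C.Adj (y i) v
      · rw [hψ_swap (y i) v h (SimpleGraph.Reachable.refl _)]
        rcases (hCadj (y i) v).1 h with ⟨-, hc | hc⟩
        · rw [if_pos hc]; exact Ne.symm hαβ
        · exact absurd hc (hβ.2 v hv)
      · rw [hψ_eq (y i) v (fun h' => h h'.1)]
        intro h'
        exact h ((hCadj (y i) v).2 ⟨hv, Or.inl h'⟩)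
    have hfanψ : ∀ l : Fin p, l ≤ i → 0 < (l : ℕ) → ∃ m : Fin p, m < l ∧
        ψ s(x, y l) ∈ missing H G.maxDegree ψ (y m) := by
      intro l hl hl0
      obtain ⟨m, hm, hmem⟩ := hfan l hl0
      have hxyl : H.Adj x (y l) := edge_mem_H hp hinj hadj hl0
      have h1 : ψ s(x, y l) = φ s(x, y l) := hψ_eq x (y l) (fun h => hreach h.2)
      set c := φ s(x, y l) with hcdef
      have hcα : c ≠ α := fun h => hα.2 (y l) hxyl h
      refine ⟨m, hm, ?_⟩
      rw [h1]
      refine ⟨hmem.1, fun v hv => ?_⟩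
      by_cases hsw : C.Adj (y m) v ∧ C.Reachable (y m) (y i)
      · rw [hψ_swap (y m) v hsw.1 hsw.2]
        have hcβ : c ≠ β := by
          intro hcb
          have hmn : (m : ℕ) < n := by
            have e1 := Fin.lt_def.mp hm
            have e2 := Fin.le_def.mp hl
            omega
          have hxm : C.Reachable x (y m) := IH m hmn β hαβ (hcb ▸ hmem)
          exact hreach (hxm.trans hsw.2)
        split_ifs
        · exact Ne.symm hcβ
        · exact Ne.symm hcα
      · rw [hψ_eq (y m) v hsw]
        exact hmem.2 v hv
    exact no_common hClass2 hp hinj hadj (i : ℕ) i le_rfl ψ hψP hfanψ α hαx hαyi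

/-- If `G` is Class 2 with critical edge `e₁ = x y₀`,
`φ ∈ C^Δ(G - e₁)`, `F` is a multi-fan at `x`, `α ∈ φ̄(x)` and `β ∈ φ̄(y i)`, then the
`(α,β)`-chain of `G - e₁` containing `x` is a path with endvertices `x` and `y i`
(they are distinct, joined in the chain graph, and each has exactly one neighbor there). -/
theorem multifan_chain_endvertices {V : Type*} [Fintype V] [DecidableEq V]
    (G : SimpleGraph V) [DecidableRel G.Adj]
    (hClass2 : chromIndex G = G.maxDegree + 1)
    (x : V) (p : ℕ) (hp : 0 < p) (y : Fin p → V)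
    (hinj : Function.Injective y)
    (hadj : ∀ i : Fin p, G.Adj x (y i))
    (hcritical : chromIndex (G.deleteEdges {s(x, y ⟨0, hp⟩)}) < chromIndex G)
    (φ : Sym2 V → ℕ)
    (hφ : IsProperEdgeColoring (G.deleteEdges {s(x, y ⟨0, hp⟩)}) G.maxDegree φ)
    (hfan : ∀ i : Fin p, 0 < (i : ℕ) → ∃ j : Fin p, j < i ∧
      φ s(x, y i) ∈ missing (G.deleteEdges {s(x, y ⟨0, hp⟩)}) G.maxDegree φ (y j))
    (α β : ℕ) (hαβ : α ≠ β) (i : Fin p)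
    (hα : α ∈ missing (G.deleteEdges {s(x, y ⟨0, hp⟩)}) G.maxDegree φ x)
    (hβ : β ∈ missing (G.deleteEdges {s(x, y ⟨0, hp⟩)}) G.maxDegree φ (y i)) :
    x ≠ y i ∧
      (chainGraph (G.deleteEdges {s(x, y ⟨0, hp⟩)}) φ α β).Reachable x (y i) ∧
      ((chainGraph (G.deleteEdges {s(x, y ⟨0, hp⟩)}) φ α β).neighborSet x).ncard = 1 ∧
      ((chainGraph (G.deleteEdges {s(x, y ⟨0, hp⟩)}) φ α β).neighborSet (y i)).ncard = 1 := by
  classical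
  set H := G.deleteEdges {s(x, y ⟨0, hp⟩)} with hH
  set C := chainGraph H φ α β with hC
  have hCadj : ∀ u v, C.Adj u v ↔ H.Adj u v ∧ (φ s(u, v) = α ∨ φ s(u, v) = β) :=
    fun u v => chainGraph_adj H φ α β u v
  have hfan' : ∀ l : Fin p, l ≤ i → 0 < (l : ℕ) → ∃ m : Fin p, m < l ∧
      φ s(x, y l) ∈ missing H G.maxDegree φ (y m) := fun l _ hl0 => hfan l hl0
  refine ⟨(hadj i).ne, ?_, ?_, ?_⟩
  · exact chain_reach hClass2 hp hinj hadj φ hφ hfan α hα ((i : ℕ) + 1) i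
      (Nat.lt_succ_self _) β hαβ hβ
  · have hβx : ∃ v, H.Adj x v ∧ φ s(x, v) = β := by
      by_contra hcon
      push_neg at hcon
      exact no_common hClass2 hp hinj hadj (i : ℕ) i le_rfl φ hφ hfan' β ⟨hβ.1, hcon⟩ hβ
    obtain ⟨v0, hv0, hv0c⟩ := hβx
    have hns : C.neighborSet x = {v0} := by
      ext w
      simp only [SimpleGraph.mem_neighborSet, Set.mem_singleton_iff]
      rw [hCadj]
      constructor
      · rintro ⟨hw, hc | hc⟩
        · exact absurd hc (hα.2 w hw)
        · by_contra hne
          exact proper_distinct hφ hw hv0 hne (hc.trans hv0c.symm)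
      · rintro rfl
        exact ⟨hv0, Or.inr hv0c⟩
    rw [hns, Set.ncard_singleton]
  · have hαy : ∃ v, H.Adj (y i) v ∧ φ s(y i, v) = α := by
      by_contra hcon
      push_neg at hcon
      exact no_common hClass2 hp hinj hadj (i : ℕ) i le_rfl φ hφ hfan' α hα ⟨hα.1, hcon⟩
    obtain ⟨u0, hu0, hu0c⟩ := hαy
    have hns : C.neighborSet (y i) = {u0} := by
      ext w
      simp only [SimpleGraph.mem_neighborSet, Set.mem_singleton_iff]
      rw [hCadj]
      constructor
      · rintro ⟨hw, hc | hc⟩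
        · by_contra hne
          exact proper_distinct hφ hw hu0 hne (hc.trans hu0c.symm)
        · exact absurd hc (hβ.2 w hw)
      · rintro rfl
        exact ⟨hu0, Or.inl hu0c⟩
    rw [hns, Set.ncard_singleton]
end

section
/- Let G be a simple graph of Class 2 with a critical edge e1 = y0 y1, let φ ∈ C^Δ(G − e1), and let K = (y0, e1, y1, e2, y2, e3, y3) be a Kierstead path with respect to e1 and φ. If min{d_G(y1), d_G(y2)} < Δ, then the vertex set {y0, y1, y2, y3} is φ-elementary. -/
namespace KP

variable {V : Type*}

lemma edge_rep (Γ : SimpleGraph V) {e : Sym2 V} (he : e ∈ Γ.edgeSet) {w : V} (hw : w ∈ e) :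
    ∃ x, Γ.Adj w x ∧ e = s(w, x) := by
  induction e using Sym2.ind with
  | _ a b =>
    rcases Sym2.mem_iff.1 hw with rfl | rfl
    · exact ⟨b, he, rfl⟩
    · exact ⟨a, ((SimpleGraph.mem_edgeSet Γ).1 he).symm, Sym2.eq_swap⟩

lemma proper_ne {Γ : SimpleGraph V} {k ψ} (hψ : IsProperEdgeColoring Γ k ψ)
    {u x y : V} (hx : Γ.Adj u x) (hy : Γ.Adj u y) (hxy : x ≠ y) :
    ψ s(u, x) ≠ ψ s(u, y) := by
  refine hψ.2 _ hx _ hy (fun h => hxy (Sym2.congr_right.1 h)) ⟨u, ?_, ?_⟩ <;> simp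

lemma missing_ne {Γ : SimpleGraph V} {k ψ} {u v : V} {c : ℕ}
    (hc : c ∈ missing Γ k ψ u) (huv : Γ.Adj u v) : ψ s(u, v) ≠ c := hc.2 v huv

lemma color_not_missing {Γ : SimpleGraph V} {k ψ} {u v : V}
    (huv : Γ.Adj u v) : ψ s(u, v) ∉ missing Γ k ψ u := fun h => h.2 v huv rfl

/-- Coloring the uncolored edge with a common missing color contradicts Class 2. -/
lemma LE01 [Fintype V] [DecidableEq V] (G : SimpleGraph V) [DecidableRel G.Adj]
    (hClass2 : chromIndex G = G.maxDegree + 1) {x y : V} (hxy : G.Adj x y)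
    (ζ : Sym2 V → ℕ)
    (hζ : IsProperEdgeColoring (G.deleteEdges {s(x, y)}) G.maxDegree ζ) :
    missing (G.deleteEdges {s(x, y)}) G.maxDegree ζ x ∩
      missing (G.deleteEdges {s(x, y)}) G.maxDegree ζ y = ∅ := by
  classical
  by_contra h
  obtain ⟨α, hαx, hαy⟩ := Set.nonempty_iff_ne_empty.2 h
  set Γ := G.deleteEdges {s(x, y)} with hΓ
  have hmemΓ : ∀ e ∈ G.edgeSet, e ≠ s(x, y) → e ∈ Γ.edgeSet := by
    intro e he hne
    rw [hΓ, SimpleGraph.edgeSet_deleteEdges]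
    exact ⟨he, by simpa using hne⟩
  set ζ' : Sym2 V → ℕ := fun e => if e = s(x, y) then α else ζ e with hζ'
  have hproper : IsProperEdgeColoring G G.maxDegree ζ' := by
    constructor
    · intro e he
      by_cases hc : e = s(x, y)
      · simpa [hζ', hc] using hαx.1
      · simpa [hζ', hc] using hζ.1 e (hmemΓ e he hc)
    · intro e he f hf hef ⟨v, hve, hvf⟩
      have key : ∀ g ∈ G.edgeSet, g ≠ s(x, y) → ∀ w ∈ ({x, y} : Set V), w ∈ g → ζ g ≠ α := by
        intro g hg hgne w hw hwg
        obtain ⟨z, hz, rfl⟩ := edge_rep Γ (hmemΓ g hg hgne) hwg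
        rcases hw with rfl | rfl
        · exact missing_ne hαx hz
        · exact missing_ne hαy hz
      by_cases hc : e = s(x, y) <;> by_cases hd : f = s(x, y)
      · exact absurd (hc.trans hd.symm) hef
      · subst hc
        have hv' : v ∈ ({x, y} : Set V) := by simpa using hve
        simp only [hζ', if_pos rfl, if_neg hd]
        exact fun h => key f hf hd v hv' hvf h.symm
      · subst hd
        have hv' : v ∈ ({x, y} : Set V) := by simpa using hvf
        simp only [hζ', if_pos rfl, if_neg hc]
        exact key e he hc v hv' hve
      · simp only [hζ', if_neg hc, if_neg hd]
        exact hζ.2 e (hmemΓ e he hc) f (hmemΓ f hf hd) hef ⟨v, hve, hvf⟩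
  have hle : chromIndex G ≤ G.maxDegree := Nat.sInf_le ⟨ζ', hproper⟩
  omega

section Recolor

variable {Γ : SimpleGraph V} {k : ℕ} {ψ : Sym2 V → ℕ}

/-- recoloring one edge with a color missing at both ends stays proper -/
lemma recolor_proper [DecidableEq (Sym2 V)] (hψ : IsProperEdgeColoring Γ k ψ) {u v : V} (huv : Γ.Adj u v) {α : ℕ}
    (hαu : α ∈ missing Γ k ψ u) (hαv : α ∈ missing Γ k ψ v) :
    IsProperEdgeColoring Γ k (fun e => if e = s(u, v) then α else ψ e) := by
  constructor
  · intro e he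
    by_cases hc : e = s(u, v)
    · simpa [hc] using hαu.1
    · simpa [hc] using hψ.1 e he
  · intro e he f hf hef ⟨w, hwe, hwf⟩
    have key : ∀ g ∈ Γ.edgeSet, g ≠ s(u, v) → ∀ z ∈ ({u, v} : Set V), z ∈ g → ψ g ≠ α := by
      intro g hg hgne z hz hzg
      obtain ⟨z', hz', rfl⟩ := edge_rep Γ hg hzg
      rcases hz with rfl | rfl
      · exact missing_ne hαu hz'
      · exact missing_ne hαv hz'
    by_cases hc : e = s(u, v) <;> by_cases hd : f = s(u, v)
    · exact absurd (hc.trans hd.symm) hef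
    · subst hc
      have hw' : w ∈ ({u, v} : Set V) := by simpa using hwe
      simp only [if_pos rfl, if_neg hd]
      exact fun h => key f hf hd w hw' hwf h.symm
    · subst hd
      have hw' : w ∈ ({u, v} : Set V) := by simpa using hwf
      simp only [if_pos rfl, if_neg hc]
      exact key e he hc w hw' hwe
    · simp only [if_neg hc, if_neg hd]
      exact hψ.2 e he f hf hef ⟨w, hwe, hwf⟩

/-- after recoloring, missing sets away from the edge are unchanged -/
lemma recolor_missing_other [DecidableEq (Sym2 V)] {u v : V} {α : ℕ} {w : V}
    (hwu : w ≠ u) (hwv : w ≠ v) :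
    missing Γ k (fun e => if e = s(u, v) then α else ψ e) w = missing Γ k ψ w := by
  have : ∀ x : V, s(w, x) ≠ s(u, v) := by
    intro x h
    have hw : w ∈ s(u,v) := h ▸ (by simp : w ∈ s(w,x))
    rcases Sym2.mem_iff.1 hw with rfl | rfl <;> simp_all
  ext c
  simp only [missing, Set.mem_setOf_eq, and_congr_right_iff]
  intro _
  exact ⟨fun h x hx => by simpa [this x] using h x hx,
         fun h x hx => by simpa [this x] using h x hx⟩

/-- the old color of the recolored edge becomes missing at its endpoint -/
lemma recolor_missing_old [DecidableEq (Sym2 V)] (hψ : IsProperEdgeColoring Γ k ψ)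
    {u v : V} (huv : Γ.Adj u v) {α : ℕ} (hαu : α ∈ missing Γ k ψ u) :
    ψ s(u, v) ∈ missing Γ k (fun e => if e = s(u, v) then α else ψ e) u := by
  refine ⟨hψ.1 _ huv, fun x hx => ?_⟩
  by_cases hc : x = v
  · subst hc
    simp only [if_pos rfl]
    exact fun h => (missing_ne hαu huv) h.symm
  · have : s(u, x) ≠ s(u, v) := fun h => hc (Sym2.congr_right.1 h)
    simpa [this] using proper_ne hψ hx huv hc

end Recolor


/-- The two-colored subgraph used for Kempe chains. -/
def kGraph (Γ : SimpleGraph V) (ψ : Sym2 V → ℕ) (a b : ℕ) : SimpleGraph V where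
  Adj u v := Γ.Adj u v ∧ (ψ s(u, v) = a ∨ ψ s(u, v) = b)
  symm := ⟨by
    intro u v h
    refine ⟨h.1.symm, ?_⟩
    rw [Sym2.eq_swap]
    exact h.2⟩
  loopless := ⟨fun u h => Γ.loopless.irrefl u h.1⟩

lemma kGraph_color {Γ : SimpleGraph V} {ψ a b} {e : Sym2 V}
    (he : e ∈ (kGraph Γ ψ a b).edgeSet) : ψ e = a ∨ ψ e = b := by
  induction e using Sym2.ind with
  | _ u v => exact ((SimpleGraph.mem_edgeSet _).1 he).2

/-- swap the colors a and b -/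
def swc (a b c : ℕ) : ℕ := if c = a then b else if c = b then a else c

lemma swc_swc {a b : ℕ} (hab : a ≠ b) (c : ℕ) : swc a b (swc a b c) = c := by
  unfold swc; split_ifs <;> simp_all

lemma swc_a {a b : ℕ} : swc a b a = b := by simp [swc]
lemma swc_b {a b : ℕ} (hab : a ≠ b) : swc a b b = a := by simp [swc, hab.symm]
lemma swc_other {a b c : ℕ} (hca : c ≠ a) (hcb : c ≠ b) : swc a b c = c := by
  simp [swc, hca, hcb]

lemma swc_mem_Icc {k a b : ℕ} (ha : a ∈ Finset.Icc 1 k) (hb : b ∈ Finset.Icc 1 k) {c : ℕ} :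
    swc a b c ∈ Finset.Icc 1 k ↔ c ∈ Finset.Icc 1 k := by
  unfold swc; split_ifs <;> simp_all

open Classical in
/-- Swap colors a, b on the Kempe chain through z. -/
noncomputable def kSwap (Γ : SimpleGraph V) (ψ : Sym2 V → ℕ) (a b : ℕ) (z : V) : Sym2 V → ℕ :=
  fun e => if (e ∈ (kGraph Γ ψ a b).edgeSet ∧ ∃ u ∈ e, (kGraph Γ ψ a b).Reachable z u)
    then swc a b (ψ e) else ψ e

lemma kSwap_pos {Γ : SimpleGraph V} {ψ a b z} {u x : V}
    (h1 : (kGraph Γ ψ a b).Adj u x) (h2 : (kGraph Γ ψ a b).Reachable z u) :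
    kSwap Γ ψ a b z s(u, x) = swc a b (ψ s(u, x)) := by
  rw [kSwap, if_pos ⟨h1, ⟨u, by simp, h2⟩⟩]

lemma kSwap_neg {Γ : SimpleGraph V} {ψ a b z} {u x : V}
    (h : ¬((kGraph Γ ψ a b).Adj u x ∧ (kGraph Γ ψ a b).Reachable z u)) :
    kSwap Γ ψ a b z s(u, x) = ψ s(u, x) := by
  rw [kSwap, if_neg]
  rintro ⟨he, w, hw, hr⟩
  have hadj : (kGraph Γ ψ a b).Adj u x := he
  rcases Sym2.mem_iff.1 hw with rfl | rfl
  · exact h ⟨hadj, hr⟩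
  · exact h ⟨hadj, hr.trans hadj.symm.reachable⟩

/-- On an edge at a vertex in the swapped component, the new color is the swap of the old. -/
lemma kSwap_at {Γ : SimpleGraph V} {ψ a b z} {u x : V} (hux : Γ.Adj u x)
    (h2 : (kGraph Γ ψ a b).Reachable z u) :
    kSwap Γ ψ a b z s(u, x) = swc a b (ψ s(u, x)) := by
  by_cases hk : (kGraph Γ ψ a b).Adj u x
  · exact kSwap_pos hk h2
  · rw [kSwap_neg (fun hh => hk hh.1)]
    have : ¬(ψ s(u, x) = a ∨ ψ s(u, x) = b) := fun hh => hk ⟨hux, hh⟩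
    push_neg at this
    exact (swc_other this.1 this.2).symm

/-- On an edge at a vertex not in the swapped component, the color is unchanged. -/
lemma kSwap_away {Γ : SimpleGraph V} {ψ a b z} {u x : V}
    (h2 : ¬(kGraph Γ ψ a b).Reachable z u) :
    kSwap Γ ψ a b z s(u, x) = ψ s(u, x) :=
  kSwap_neg (fun hh => h2 hh.2)

lemma kSwap_proper {Γ : SimpleGraph V} {k ψ a b z} (hψ : IsProperEdgeColoring Γ k ψ)
    (hab : a ≠ b) (ha : a ∈ Finset.Icc 1 k) (hb : b ∈ Finset.Icc 1 k) :
    IsProperEdgeColoring Γ k (kSwap Γ ψ a b z) := by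
  constructor
  · intro e he
    rw [kSwap]
    split_ifs with h
    · rw [swc_mem_Icc ha hb]
      exact hψ.1 e he
    · exact hψ.1 e he
  · intro e he f hf hef ⟨w, hwe, hwf⟩
    obtain ⟨x, hx, rfl⟩ := edge_rep Γ he hwe
    obtain ⟨y, hy, rfl⟩ := edge_rep Γ hf hwf
    have hxy : x ≠ y := fun h => hef (by rw [h])
    have hne := proper_ne hψ hx hy hxy
    by_cases hcx : (kGraph Γ ψ a b).Adj w x ∧ (kGraph Γ ψ a b).Reachable z w <;>
      by_cases hcy : (kGraph Γ ψ a b).Adj w y ∧ (kGraph Γ ψ a b).Reachable z w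
    · rw [kSwap_pos hcx.1 hcx.2, kSwap_pos hcy.1 hcy.2]
      intro h
      apply hne
      rw [← swc_swc hab (ψ s(w, x)), h, swc_swc hab]
    · -- x swapped, y not
      rw [kSwap_pos hcx.1 hcx.2, kSwap_neg hcy]
      have hya : ¬(ψ s(w, y) = a ∨ ψ s(w, y) = b) := by
        intro hh
        exact hcy ⟨⟨hy, hh⟩, hcx.2⟩
      push_neg at hya
      rcases hcx.1.2 with h1 | h1 <;> rw [h1]
      · rw [swc_a]; exact fun h => hya.2 h.symm
      · rw [swc_b hab]; exact fun h => hya.1 h.symm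
    · rw [kSwap_neg hcx, kSwap_pos hcy.1 hcy.2]
      have hxa : ¬(ψ s(w, x) = a ∨ ψ s(w, x) = b) := by
        intro hh
        exact hcx ⟨⟨hx, hh⟩, hcy.2⟩
      push_neg at hxa
      rcases hcy.1.2 with h1 | h1 <;> rw [h1]
      · rw [swc_a]; exact fun h => hxa.2 h
      · rw [swc_b hab]; exact fun h => hxa.1 h
    · rw [kSwap_neg hcx, kSwap_neg hcy]; exact hne

/-- missing sets away from the swapped component are unchanged -/
lemma kSwap_missing_away {Γ : SimpleGraph V} {k ψ a b z} {u : V}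
    (h : ¬(kGraph Γ ψ a b).Reachable z u) :
    missing Γ k (kSwap Γ ψ a b z) u = missing Γ k ψ u := by
  ext c
  simp only [missing, Set.mem_setOf_eq, and_congr_right_iff]
  intro _
  constructor <;> intro hh x hx
  · rw [← kSwap_away (ψ := ψ) (a := a) (b := b) (x := x) h]; exact hh x hx
  · rw [kSwap_away h]; exact hh x hx

/-- missing sets in the swapped component are swapped -/
lemma kSwap_missing_at {Γ : SimpleGraph V} {k ψ a b z} (hab : a ≠ b)
    (ha : a ∈ Finset.Icc 1 k) (hb : b ∈ Finset.Icc 1 k) {u : V}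
    (h : (kGraph Γ ψ a b).Reachable z u) (c : ℕ) :
    c ∈ missing Γ k (kSwap Γ ψ a b z) u ↔ swc a b c ∈ missing Γ k ψ u := by
  simp only [missing, Set.mem_setOf_eq]
  rw [← swc_mem_Icc ha hb]
  refine and_congr_right fun _ => ?_
  constructor <;> intro hh x hx heq
  · exact hh x hx (by rw [kSwap_at hx h, heq, swc_swc hab])
  · apply hh x hx
    rw [kSwap_at hx h] at heq
    rw [← swc_swc hab (ψ s(u, x)), heq]

/-- a vertex missing one of the two colors has Kempe-degree ≤ 1 -/
lemma kdeg_one {Γ : SimpleGraph V} {k ψ a b} (hψ : IsProperEdgeColoring Γ k ψ) {u : V}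
    (h : a ∈ missing Γ k ψ u ∨ b ∈ missing Γ k ψ u) :
    ∀ x y, (kGraph Γ ψ a b).Adj u x → (kGraph Γ ψ a b).Adj u y → x = y := by
  intro x y hx hy
  by_contra hxy
  have hne := proper_ne hψ hx.1 hy.1 hxy
  rcases h with h | h
  · have h1 : ψ s(u, x) = b := (hx.2).resolve_left (missing_ne h hx.1)
    have h2 : ψ s(u, y) = b := (hy.2).resolve_left (missing_ne h hy.1)
    exact hne (h1.trans h2.symm)
  · have h1 : ψ s(u, x) = a := (hx.2).resolve_right (missing_ne h hx.1)
    have h2 : ψ s(u, y) = a := (hy.2).resolve_right (missing_ne h hy.1)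
    exact hne (h1.trans h2.symm)

/-- Kempe graphs have maximum degree 2 -/
lemma kdeg_two {Γ : SimpleGraph V} {k ψ a b} (hψ : IsProperEdgeColoring Γ k ψ) (u x1 x2 x3 : V)
    (h1 : (kGraph Γ ψ a b).Adj u x1) (h2 : (kGraph Γ ψ a b).Adj u x2)
    (h3 : (kGraph Γ ψ a b).Adj u x3) : x1 = x2 ∨ x1 = x3 ∨ x2 = x3 := by
  by_contra h
  push_neg at h
  have n12 := proper_ne hψ h1.1 h2.1 h.1
  have n13 := proper_ne hψ h1.1 h3.1 h.2.1
  have n23 := proper_ne hψ h2.1 h3.1 h.2.2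
  rcases h1.2 with e1 | e1 <;> rcases h2.2 with e2 | e2 <;> rcases h3.2 with e3 | e3 <;>
    simp_all


lemma path_unique {H : SimpleGraph V}
    (hdeg2 : ∀ u x1 x2 x3, H.Adj u x1 → H.Adj u x2 → H.Adj u x3 → (x1 = x2 ∨ x1 = x3 ∨ x2 = x3))
    {x b : V} (p : H.Walk x b) :
    p.IsPath → ∀ {a0 : V}, H.Adj a0 x → a0 ∉ p.support →
    (∀ s t, H.Adj b s → H.Adj b t → s = t) →
    ∀ {c : V} (q : H.Walk x c), q.IsPath → a0 ∉ q.support →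
    (∀ s t, H.Adj c s → H.Adj c t → s = t) → b = c := by
  induction p with
  | nil =>
    intro _ a0 ha0 _ hb c q hq haq hc
    cases q with
    | nil => rfl
    | @cons _ y1 _ hadjy q1 =>
      exfalso
      have heq : a0 = y1 := hb a0 y1 ha0.symm hadjy
      exact haq (by rw [heq]; simp)
  | @cons x x1 b hadjx p1 ih =>
    intro hp a0 ha0 hap hb c q hq haq hc
    cases q with
    | nil =>
      exfalso
      have heq : a0 = x1 := hc a0 x1 ha0.symm hadjx
      exact hap (by rw [heq]; simp)
    | @cons _ y1 _ hadjy q1 =>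
      have hxy : x1 = y1 := by
        rcases hdeg2 x a0 x1 y1 ha0.symm hadjx hadjy with h | h | h
        · exact absurd (by rw [h]; simp : a0 ∈ (SimpleGraph.Walk.cons hadjx p1).support) hap
        · exact absurd (by rw [h]; simp : a0 ∈ (SimpleGraph.Walk.cons hadjy q1).support) haq
        · exact h
      subst hxy
      have hp1 := (SimpleGraph.Walk.cons_isPath_iff _ _).1 hp
      have hq1 := (SimpleGraph.Walk.cons_isPath_iff _ _).1 hq
      exact ih hp1.1 hadjx hp1.2 hb q1 hq1.1 hq1.2 hc

lemma three_endpoints [DecidableEq V] {H : SimpleGraph V}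
    (hdeg2 : ∀ u x1 x2 x3, H.Adj u x1 → H.Adj u x2 → H.Adj u x3 → (x1 = x2 ∨ x1 = x3 ∨ x2 = x3))
    {u1 u2 u3 : V} (h12 : u1 ≠ u2) (h13 : u1 ≠ u3) (h23 : u2 ≠ u3)
    (r12 : H.Reachable u1 u2) (r13 : H.Reachable u1 u3)
    (d1 : ∀ s t, H.Adj u1 s → H.Adj u1 t → s = t)
    (d2 : ∀ s t, H.Adj u2 s → H.Adj u2 t → s = t)
    (d3 : ∀ s t, H.Adj u3 s → H.Adj u3 t → s = t) : False := by
  obtain ⟨w12⟩ := r12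
  obtain ⟨w13⟩ := r13
  obtain ⟨p, hp⟩ := w12.toPath
  obtain ⟨q, hq⟩ := w13.toPath
  cases p with
  | nil => exact h12 rfl
  | @cons _ x1 _ hadj p1 =>
    cases q with
    | nil => exact h13 rfl
    | @cons _ y1 _ hadjy q1 =>
      have hxy : x1 = y1 := d1 x1 y1 hadj hadjy
      subst hxy
      have hp1 := (SimpleGraph.Walk.cons_isPath_iff _ _).1 hp
      have hq1 := (SimpleGraph.Walk.cons_isPath_iff _ _).1 hq
      exact h23 (path_unique hdeg2 p1 hp1.1 hadj hp1.2 d2 q1 hq1.1 hq1.2 d3)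

lemma missing_exists2 [DecidableEq V] {Γ : SimpleGraph V} {k : ℕ} {ψ : Sym2 V → ℕ} {u : V}
    {s : Finset V} (hs : ∀ x, Γ.Adj u x → x ∈ s) (hcard : s.card + 2 ≤ k) (t : ℕ) :
    ∃ c ∈ missing Γ k ψ u, c ≠ t := by
  classical
  set used : Finset ℕ := insert t (s.image (fun w => ψ s(u, w))) with hused
  have hcard2 : used.card < (Finset.Icc 1 k).card := by
    rw [Nat.card_Icc]
    calc used.card ≤ (s.image (fun w => ψ s(u, w))).card + 1 := Finset.card_insert_le _ _
    _ ≤ s.card + 1 := by have := Finset.card_image_le (s := s) (f := fun w => ψ s(u, w)); omega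
    _ < k + 1 - 1 := by omega
  have hns : ¬ (Finset.Icc 1 k ⊆ used) := fun h => absurd (Finset.card_le_card h) (by omega)
  obtain ⟨c, hc1, hc2⟩ := Finset.not_subset.1 hns
  rw [hused] at hc2
  simp only [Finset.mem_insert, not_or] at hc2
  refine ⟨c, ⟨hc1, fun x hx heq => hc2.2 ?_⟩, hc2.1⟩
  exact Finset.mem_image.2 ⟨x, hs x hx, heq⟩

lemma missing_exists [DecidableEq V] {Γ : SimpleGraph V} {k : ℕ} {ψ : Sym2 V → ℕ} {u : V}
    {s : Finset V} (hs : ∀ x, Γ.Adj u x → x ∈ s) (hcard : s.card < k) :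
    ∃ c, c ∈ missing Γ k ψ u := by
  classical
  set used : Finset ℕ := s.image (fun w => ψ s(u, w)) with hused
  have hcard2 : used.card < (Finset.Icc 1 k).card := by
    rw [Nat.card_Icc]
    exact lt_of_le_of_lt Finset.card_image_le (by omega)
  have hns : ¬ (Finset.Icc 1 k ⊆ used) := fun h => absurd (Finset.card_le_card h) (by omega)
  obtain ⟨c, hc1, hc2⟩ := Finset.not_subset.1 hns
  refine ⟨c, hc1, fun x hx heq => hc2 ?_⟩
  exact Finset.mem_image.2 ⟨x, hs x hx, heq⟩


end KP
section P2
open KP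
variable {V : Type*} [Fintype V] [DecidableEq V] (G : SimpleGraph V) [DecidableRel G.Adj]
  (hClass2 : chromIndex G = G.maxDegree + 1)

/-- helper: the edge x1x2 survives deleting x0x1 -/
lemma KP.surv {x0 x1 x2 : V} (h12 : G.Adj x1 x2) (h10 : x1 ≠ x0) (h20 : x2 ≠ x0)
    : (G.deleteEdges {s(x0, x1)}).Adj x1 x2 := by
  rw [SimpleGraph.deleteEdges_adj]
  refine ⟨h12, ?_⟩
  simp only [Set.mem_singleton_iff, Sym2.eq_iff]
  push_neg
  exact ⟨fun h => absurd h h10, fun _ => h20⟩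

/-- helper: an edge not involving x0, x1 survives -/
lemma KP.surv' {x0 x1 a b : V} (hab : G.Adj a b) (ha0 : a ≠ x0) (ha1 : a ≠ x1)
    (hb0 : b ≠ x0) : (G.deleteEdges {s(x0, x1)}).Adj a b := by
  rw [SimpleGraph.deleteEdges_adj]
  refine ⟨hab, ?_⟩
  simp only [Set.mem_singleton_iff, Sym2.eq_iff]
  push_neg
  exact ⟨fun h => absurd h ha0, fun h => absurd h ha1⟩

include hClass2 in
/-- LE01, membership form -/
lemma KP.e01 {x y : V} (hxy : G.Adj x y) {ζ : Sym2 V → ℕ}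
    (hζ : IsProperEdgeColoring (G.deleteEdges {s(x, y)}) G.maxDegree ζ) {α : ℕ}
    (hx : α ∈ missing (G.deleteEdges {s(x, y)}) G.maxDegree ζ x)
    (hy : α ∈ missing (G.deleteEdges {s(x, y)}) G.maxDegree ζ y) : False :=
  Set.eq_empty_iff_forall_notMem.1 (LE01 G hClass2 hxy ζ hζ) α ⟨hx, hy⟩

include hClass2 in
/-- the color of the second edge of a Kierstead path is missing at x0 -/
lemma KP.tau_mem {x0 x1 x2 : V} (h01 : G.Adj x0 x1) (h12 : G.Adj x1 x2) (h02 : x0 ≠ x2)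
    {ζ : Sym2 V → ℕ}
    (hζ : IsProperEdgeColoring (G.deleteEdges {s(x0, x1)}) G.maxDegree ζ)
    (hK : ζ s(x1, x2) ∈ missing (G.deleteEdges {s(x0, x1)}) G.maxDegree ζ x0 ∪
      missing (G.deleteEdges {s(x0, x1)}) G.maxDegree ζ x1) :
    ζ s(x1, x2) ∈ missing (G.deleteEdges {s(x0, x1)}) G.maxDegree ζ x0 := by
  rcases hK with h | h
  · exact h
  · exact absurd h (color_not_missing (KP.surv G h12 h01.ne' (fun h => h02 h.symm)))

include hClass2 in
/-- second pair of a Kierstead path of length 2: x1, x2 -/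
lemma KP.p12 {x0 x1 x2 : V} (h01 : G.Adj x0 x1) (h12 : G.Adj x1 x2) (h02 : x0 ≠ x2)
    {ζ : Sym2 V → ℕ}
    (hζ : IsProperEdgeColoring (G.deleteEdges {s(x0, x1)}) G.maxDegree ζ)
    (hK : ζ s(x1, x2) ∈ missing (G.deleteEdges {s(x0, x1)}) G.maxDegree ζ x0 ∪
      missing (G.deleteEdges {s(x0, x1)}) G.maxDegree ζ x1) {α : ℕ}
    (hα1 : α ∈ missing (G.deleteEdges {s(x0, x1)}) G.maxDegree ζ x1)
    (hα2 : α ∈ missing (G.deleteEdges {s(x0, x1)}) G.maxDegree ζ x2) : False := by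
  classical
  set Γ := G.deleteEdges {s(x0, x1)} with hΓ
  have hadj12 : Γ.Adj x1 x2 := KP.surv G h12 h01.ne' (fun h => h02 h.symm)
  have hτ0 : ζ s(x1, x2) ∈ missing Γ G.maxDegree ζ x0 := KP.tau_mem G hClass2 h01 h12 h02 hζ hK
  have hane : α ≠ ζ s(x1, x2) := fun h => color_not_missing hadj12 (h ▸ hα1)
  set ζ' : Sym2 V → ℕ := fun e => if e = s(x1, x2) then α else ζ e with hζ'
  have hproper' := recolor_proper hζ hadj12 hα1 hα2
  have h1 : ζ s(x1, x2) ∈ missing Γ G.maxDegree ζ' x1 := recolor_missing_old hζ hadj12 hα1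
  have h0 : ζ s(x1, x2) ∈ missing Γ G.maxDegree ζ' x0 := by
    rw [recolor_missing_other h01.ne (fun h => h02 h)]
    exact hτ0
  exact KP.e01 G hClass2 h01 hproper' h0 h1

include hClass2 in
/-- first-and-third pair of a Kierstead path of length 2: x0, x2 -/
lemma KP.p02 {x0 x1 x2 : V} (h01 : G.Adj x0 x1) (h12 : G.Adj x1 x2) (h02 : x0 ≠ x2)
    {ζ : Sym2 V → ℕ}
    (hζ : IsProperEdgeColoring (G.deleteEdges {s(x0, x1)}) G.maxDegree ζ)
    (hK : ζ s(x1, x2) ∈ missing (G.deleteEdges {s(x0, x1)}) G.maxDegree ζ x0 ∪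
      missing (G.deleteEdges {s(x0, x1)}) G.maxDegree ζ x1) {α : ℕ}
    (hα0 : α ∈ missing (G.deleteEdges {s(x0, x1)}) G.maxDegree ζ x0)
    (hα2 : α ∈ missing (G.deleteEdges {s(x0, x1)}) G.maxDegree ζ x2) : False := by
  classical
  set k := G.maxDegree with hk
  set Γ := G.deleteEdges {s(x0, x1)} with hΓ
  have hadj12 : Γ.Adj x1 x2 := KP.surv G h12 h01.ne' (fun h => h02 h.symm)
  have hτ0 : ζ s(x1, x2) ∈ missing Γ k ζ x0 := KP.tau_mem G hClass2 h01 h12 h02 hζ hK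
  -- a missing color at x1
  have hβex : ∃ β, β ∈ missing Γ k ζ x1 := by
    refine missing_exists (s := G.neighborFinset x1 \ {x0}) ?_ ?_
    · intro x hx
      rw [hΓ, SimpleGraph.deleteEdges_adj] at hx
      simp only [Finset.mem_sdiff, SimpleGraph.mem_neighborFinset, Finset.mem_singleton]
      refine ⟨hx.1, fun h => ?_⟩
      subst h
      exact hx.2 (by rw [Sym2.eq_swap]; rfl)
    · have hsub : {x0} ⊆ G.neighborFinset x1 := by
        simp [SimpleGraph.mem_neighborFinset, h01.symm]
      rw [Finset.card_sdiff_of_subset hsub]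
      have h1 : 1 ≤ G.degree x1 := by
        rw [← SimpleGraph.card_neighborFinset_eq_degree]
        exact Finset.card_le_card hsub
      have h2 : G.degree x1 ≤ k := G.degree_le_maxDegree x1
      simp only [Finset.card_singleton, SimpleGraph.card_neighborFinset_eq_degree]
      omega
  obtain ⟨β, hβ⟩ := hβex
  have hαβ : α ≠ β := fun h => KP.e01 G hClass2 h01 hζ hα0 (h ▸ hβ)
  have hαI : α ∈ Finset.Icc 1 k := hα0.1
  have hβI : β ∈ Finset.Icc 1 k := hβ.1
  have hdeg2 := kdeg_two (a := α) (b := β) hζ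
  -- step 1 : x1 must be joined to x0 in the Kempe graph
  by_cases hr1 : (kGraph Γ ζ α β).Reachable x1 x0
  case neg =>
    have hp := kSwap_proper (z := x1) hζ hαβ hαI hβI
    have h1 : α ∈ missing Γ k (kSwap Γ ζ α β x1) x1 := by
      rw [kSwap_missing_at hαβ hαI hβI (SimpleGraph.Reachable.refl x1) α, swc_a]
      exact hβ
    have h0 : α ∈ missing Γ k (kSwap Γ ζ α β x1) x0 := by
      rw [kSwap_missing_away hr1]
      exact hα0
    exact KP.e01 G hClass2 h01 hp h0 h1
  case pos =>
  by_cases hr2 : (kGraph Γ ζ α β).Reachable x2 x0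
  case pos =>
    -- all three in one component: impossible
    exact three_endpoints hdeg2 h01.ne h02 h12.ne
      hr1.symm hr2.symm
      (kdeg_one hζ (Or.inl hα0)) (kdeg_one hζ (Or.inr hβ)) (kdeg_one hζ (Or.inl hα2))
  case neg =>
    have hr2' : ¬ (kGraph Γ ζ α β).Reachable x2 x1 := fun h => hr2 (h.trans hr1)
    have hp := kSwap_proper (z := x2) hζ hαβ hαI hβI
    have h2 : β ∈ missing Γ k (kSwap Γ ζ α β x2) x2 := by
      rw [kSwap_missing_at hαβ hαI hβI (SimpleGraph.Reachable.refl x2) β, swc_b hαβ]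
      exact hα2
    have h1 : β ∈ missing Γ k (kSwap Γ ζ α β x2) x1 := by
      rw [kSwap_missing_away hr2']
      exact hβ
    -- the colors of the path edge are untouched
    have hτα : ζ s(x1, x2) ≠ α := by
      have := missing_ne hα2 hadj12.symm
      rw [Sym2.eq_swap] at this
      exact this
    have hτβ : ζ s(x1, x2) ≠ β := missing_ne hβ hadj12
    have hval : kSwap Γ ζ α β x2 s(x1, x2) = ζ s(x1, x2) := by
      refine kSwap_neg (fun hh => ?_)
      rcases hh.1.2 with h | h
      · exact hτα h
      · exact hτβ h
    have hK' : kSwap Γ ζ α β x2 s(x1, x2) ∈ missing Γ k (kSwap Γ ζ α β x2) x0 ∪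
        missing Γ k (kSwap Γ ζ α β x2) x1 := by
      left
      rw [hval, kSwap_missing_away hr2]
      exact hτ0
    exact KP.p12 G hClass2 h01 h12 h02 hp hK' h1 h2

end P2
namespace KP
variable {V : Type*}
/-- colors other than a,b keep their missing status under a Kempe swap -/
lemma kSwap_missing_same {Γ : SimpleGraph V} {k ψ a b z} (hab : a ≠ b)
    (ha : a ∈ Finset.Icc 1 k) (hb : b ∈ Finset.Icc 1 k) {u : V} {c : ℕ}
    (hca : c ≠ a) (hcb : c ≠ b) :
    c ∈ missing Γ k (kSwap Γ ψ a b z) u ↔ c ∈ missing Γ k ψ u := by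
  by_cases hr : (kGraph Γ ψ a b).Reachable z u
  · rw [kSwap_missing_at hab ha hb hr c, swc_other hca hcb]
  · rw [kSwap_missing_away hr]
end KP

section Main
open KP
variable {V : Type*} [Fintype V] [DecidableEq V] (G : SimpleGraph V) [DecidableRel G.Adj]
  (hClass2 : chromIndex G = G.maxDegree + 1)
  (y0 y1 y2 y3 : V)
  (ne02 : y0 ≠ y2) (ne03 : y0 ≠ y3) (ne13 : y1 ≠ y3)
  (h01 : G.Adj y0 y1) (h12 : G.Adj y1 y2) (h23 : G.Adj y2 y3)

local notation "k" => G.maxDegree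
local notation "Γ" => G.deleteEdges {s(y0, y1)}
local notation "M" => missing (G.deleteEdges {s(y0, y1)}) G.maxDegree

include h01 h12 ne02 in
lemma KP.A12 : (G.deleteEdges {s(y0, y1)}).Adj y1 y2 :=
  KP.surv G h12 h01.ne' (fun h => ne02 h.symm)

include h01 h12 h23 ne02 ne03 in
lemma KP.A23 : (G.deleteEdges {s(y0, y1)}).Adj y2 y3 :=
  KP.surv' G h23 (fun h => ne02 h.symm) h12.ne' (fun h => ne03 h.symm)

include h01 h12 h23 ne02 ne03 ne13 in
lemma KP.tau23_ne {ψ : Sym2 V → ℕ} (hψ : IsProperEdgeColoring Γ k ψ) :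
    ψ s(y1, y2) ≠ ψ s(y2, y3) := by
  have h := proper_ne hψ (KP.A12 G y0 y1 y2 ne02 h01 h12).symm
    (KP.A23 G y0 y1 y2 y3 ne02 ne03 h01 h12 h23) ne13
  rwa [Sym2.eq_swap] at h

include h01 h12 h23 ne02 ne03 in
lemma KP.tau3_not3 {ψ : Sym2 V → ℕ} (hψ : IsProperEdgeColoring Γ k ψ) :
    ψ s(y2, y3) ∉ M ψ y3 := by
  have h := @color_not_missing V (G.deleteEdges {s(y0, y1)}) G.maxDegree ψ y3 y2
    (KP.A23 G y0 y1 y2 y3 ne02 ne03 h01 h12 h23).symm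
  rw [show s(y2, y3) = s(y3, y2) from Sym2.eq_swap]
  exact h

include h01 h12 h23 ne02 ne03 in
lemma KP.tau3_not2 {ψ : Sym2 V → ℕ} (hψ : IsProperEdgeColoring Γ k ψ) :
    ψ s(y2, y3) ∉ M ψ y2 :=
  color_not_missing (KP.A23 G y0 y1 y2 y3 ne02 ne03 h01 h12 h23)

include h01 h12 ne02 in
lemma KP.tau2_not1 {ψ : Sym2 V → ℕ} (hψ : IsProperEdgeColoring Γ k ψ) :
    ψ s(y1, y2) ∉ M ψ y1 :=
  color_not_missing (KP.A12 G y0 y1 y2 ne02 h01 h12)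

include h01 h12 ne02 in
lemma KP.tau2_not2 {ψ : Sym2 V → ℕ} (hψ : IsProperEdgeColoring Γ k ψ) :
    ψ s(y1, y2) ∉ M ψ y2 := by
  have h := @color_not_missing V (G.deleteEdges {s(y0, y1)}) G.maxDegree ψ y2 y1
    (KP.A12 G y0 y1 y2 ne02 h01 h12).symm
  rw [show s(y1, y2) = s(y2, y1) from Sym2.eq_swap]
  exact h

include h01 in
/-- a color missing at y1 always exists -/
lemma KP.ex1 (ψ : Sym2 V → ℕ) : ∃ β, β ∈ M ψ y1 := by
  refine missing_exists (s := G.neighborFinset y1 \ {y0}) ?_ ?_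
  · intro x hx
    rw [SimpleGraph.deleteEdges_adj] at hx
    simp only [Finset.mem_sdiff, SimpleGraph.mem_neighborFinset, Finset.mem_singleton]
    refine ⟨hx.1, fun h => ?_⟩
    subst h
    exact hx.2 (by rw [Sym2.eq_swap]; rfl)
  · have hsub : {y0} ⊆ G.neighborFinset y1 := by
      simp [SimpleGraph.mem_neighborFinset, h01.symm]
    rw [Finset.card_sdiff_of_subset hsub]
    have hx1 : 1 ≤ G.degree y1 := by
      rw [← SimpleGraph.card_neighborFinset_eq_degree]
      exact Finset.card_le_card hsub
    have hx2 : G.degree y1 ≤ k := G.degree_le_maxDegree y1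
    simp only [Finset.card_singleton, SimpleGraph.card_neighborFinset_eq_degree]
    omega

include h01 in
/-- when d(y1) < Δ there are two missing colors at y1 -/
lemma KP.ex1' (hd1 : G.degree y1 < G.maxDegree) (ψ : Sym2 V → ℕ) (t : ℕ) :
    ∃ β ∈ M ψ y1, β ≠ t := by
  refine missing_exists2 (s := G.neighborFinset y1 \ {y0}) ?_ ?_ t
  · intro x hx
    rw [SimpleGraph.deleteEdges_adj] at hx
    simp only [Finset.mem_sdiff, SimpleGraph.mem_neighborFinset, Finset.mem_singleton]
    refine ⟨hx.1, fun h => ?_⟩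
    subst h
    exact hx.2 (by rw [Sym2.eq_swap]; rfl)
  · have hsub : {y0} ⊆ G.neighborFinset y1 := by
      simp [SimpleGraph.mem_neighborFinset, h01.symm]
    rw [Finset.card_sdiff_of_subset hsub]
    have hx1 : 1 ≤ G.degree y1 := by
      rw [← SimpleGraph.card_neighborFinset_eq_degree]
      exact Finset.card_le_card hsub
    simp only [Finset.card_singleton, SimpleGraph.card_neighborFinset_eq_degree]
    omega

/-- when d(y2) < Δ there is a missing color at y2 -/
lemma KP.ex2 (hd2 : G.degree y2 < G.maxDegree) (ψ : Sym2 V → ℕ) : ∃ γ, γ ∈ M ψ y2 := by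
  refine missing_exists (s := G.neighborFinset y2) ?_ ?_
  · intro x hx
    rw [SimpleGraph.deleteEdges_adj] at hx
    simpa [SimpleGraph.mem_neighborFinset] using hx.1
  · simpa [SimpleGraph.card_neighborFinset_eq_degree] using hd2

end Main
section Shift
open KP
variable {V : Type*} [Fintype V] [DecidableEq V] (G : SimpleGraph V) [DecidableRel G.Adj]
  (hClass2 : chromIndex G = G.maxDegree + 1)
  (y0 y1 y2 y3 : V)
  (ne02 : y0 ≠ y2) (ne03 : y0 ≠ y3) (ne13 : y1 ≠ y3)
  (h01 : G.Adj y0 y1) (h12 : G.Adj y1 y2) (h23 : G.Adj y2 y3)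

local notation "Γ" => G.deleteEdges {s(y0, y1)}
local notation "Γ2" => G.deleteEdges {s(y1, y2)}
local notation "M" => missing (G.deleteEdges {s(y0, y1)}) G.maxDegree
local notation "M2" => missing (G.deleteEdges {s(y1, y2)}) G.maxDegree

include h01 h12 ne02 in
lemma KP.shift_proper {ψ : Sym2 V → ℕ} (hψ : IsProperEdgeColoring Γ G.maxDegree ψ)
    (hτ2 : ψ s(y1, y2) ∈ M ψ y0) :
    IsProperEdgeColoring Γ2 G.maxDegree
      (fun e => if e = s(y0, y1) then ψ s(y1, y2) else ψ e) := by
  classical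
  have hΓ2sub : ∀ e ∈ SimpleGraph.edgeSet Γ2, e ≠ s(y0, y1) → e ∈ SimpleGraph.edgeSet Γ := by
    intro e he hne
    rw [SimpleGraph.edgeSet_deleteEdges] at he ⊢
    exact ⟨he.1, by simpa using hne⟩
  have ha12 : SimpleGraph.Adj Γ y1 y2 := KP.A12 G y0 y1 y2 ne02 h01 h12
  have key : ∀ g ∈ SimpleGraph.edgeSet Γ2, g ≠ s(y0, y1) → ∀ w ∈ ({y0, y1} : Set V),
      w ∈ g → ψ g ≠ ψ s(y1, y2) := by
    intro g hg hgne w hw hwg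
    obtain ⟨x, hx, rfl⟩ := edge_rep Γ (hΓ2sub g hg hgne) hwg
    rcases hw with rfl | rfl
    · exact missing_ne hτ2 hx
    · have hxne : x ≠ y2 := by
        rintro rfl
        rw [SimpleGraph.edgeSet_deleteEdges] at hg
        exact hg.2 rfl
      exact proper_ne hψ hx ha12 hxne
  constructor
  · intro e he
    by_cases hc : e = s(y0, y1)
    · simpa [hc] using hτ2.1
    · simpa [hc] using hψ.1 e (hΓ2sub e he hc)
  · intro e he f hf hef ⟨w, hwe, hwf⟩
    by_cases hc : e = s(y0, y1) <;> by_cases hd : f = s(y0, y1)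
    · exact absurd (hc.trans hd.symm) hef
    · subst hc
      have hw' : w ∈ ({y0, y1} : Set V) := by simpa using hwe
      simp only [if_pos rfl, if_neg hd]
      exact fun h => key f hf hd w hw' hwf h.symm
    · subst hd
      have hw' : w ∈ ({y0, y1} : Set V) := by simpa using hwf
      simp only [if_pos rfl, if_neg hc]
      exact key e he hc w hw' hwe
    · simp only [if_neg hc, if_neg hd]
      exact hψ.2 e (hΓ2sub e he hc) f (hΓ2sub f hf hd) hef ⟨w, hwe, hwf⟩

include h01 h12 ne02 in
lemma KP.shift_m1 {ψ : Sym2 V → ℕ} (hψ : IsProperEdgeColoring Γ G.maxDegree ψ)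
    {c : ℕ} (hc : c ∈ M ψ y1) :
    c ∈ M2 (fun e => if e = s(y0, y1) then ψ s(y1, y2) else ψ e) y1 := by
  classical
  have ha12 : SimpleGraph.Adj Γ y1 y2 := KP.A12 G y0 y1 y2 ne02 h01 h12
  refine ⟨hc.1, fun v hv => ?_⟩
  rw [SimpleGraph.deleteEdges_adj] at hv
  by_cases hv0 : v = y0
  · have heq : s(y1, v) = s(y0, y1) := by rw [hv0, Sym2.eq_swap]
    show (if s(y1, v) = s(y0, y1) then ψ s(y1, y2) else ψ s(y1, v)) ≠ c
    rw [if_pos heq]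
    exact missing_ne hc ha12
  · have hne : s(y1, v) ≠ s(y0, y1) := by
      simp only [ne_eq, Sym2.eq_iff]
      push_neg
      exact ⟨fun h => absurd h h01.ne', fun _ => hv0⟩
    have hΓv : SimpleGraph.Adj Γ y1 v := by
      rw [SimpleGraph.deleteEdges_adj]
      exact ⟨hv.1, by simpa using hne⟩
    simpa [hne] using missing_ne hc hΓv

include h01 h12 ne02 ne03 ne13 in
lemma KP.shift_m3 {ψ : Sym2 V → ℕ}
    {c : ℕ} (hc : c ∈ M ψ y3) :
    c ∈ M2 (fun e => if e = s(y0, y1) then ψ s(y1, y2) else ψ e) y3 := by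
  classical
  refine ⟨hc.1, fun v hv => ?_⟩
  rw [SimpleGraph.deleteEdges_adj] at hv
  have hne : s(y3, v) ≠ s(y0, y1) := by
    simp only [ne_eq, Sym2.eq_iff]
    push_neg
    exact ⟨fun h => absurd h.symm ne03, fun h => absurd h.symm ne13⟩
  have hΓv : SimpleGraph.Adj Γ y3 v := by
    rw [SimpleGraph.deleteEdges_adj]
    exact ⟨hv.1, by simpa using hne⟩
  simpa [hne] using missing_ne hc hΓv

include h01 h12 ne02 in
lemma KP.shift_m2 {ψ : Sym2 V → ℕ} (hψ : IsProperEdgeColoring Γ G.maxDegree ψ) :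
    ψ s(y1, y2) ∈ M2 (fun e => if e = s(y0, y1) then ψ s(y1, y2) else ψ e) y2 := by
  classical
  have ha12 : SimpleGraph.Adj Γ y1 y2 := KP.A12 G y0 y1 y2 ne02 h01 h12
  refine ⟨hψ.1 _ ha12, fun v hv => ?_⟩
  rw [SimpleGraph.deleteEdges_adj] at hv
  have hvne1 : v ≠ y1 := by
    rintro rfl
    exact hv.2 (by rw [Sym2.eq_swap]; rfl)
  have hne : s(y2, v) ≠ s(y0, y1) := by
    simp only [ne_eq, Sym2.eq_iff]
    push_neg
    exact ⟨fun h => absurd h.symm ne02, fun h => absurd h h12.ne'⟩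
  have hΓv : SimpleGraph.Adj Γ y2 v := by
    rw [SimpleGraph.deleteEdges_adj]
    exact ⟨hv.1, by simpa using hne⟩
  have := proper_ne hψ hΓv ha12.symm hvne1
  rw [show s(y2, y1) = s(y1, y2) from Sym2.eq_swap] at this
  simpa [hne] using this

end Shift
section Terminal
open KP
variable {V : Type*} [Fintype V] [DecidableEq V] (G : SimpleGraph V) [DecidableRel G.Adj]
  (hClass2 : chromIndex G = G.maxDegree + 1)
  (y0 y1 y2 y3 : V)
  (ne02 : y0 ≠ y2) (ne03 : y0 ≠ y3) (ne13 : y1 ≠ y3)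
  (h01 : G.Adj y0 y1) (h12 : G.Adj y1 y2) (h23 : G.Adj y2 y3)

local notation "Γ" => G.deleteEdges {s(y0, y1)}
local notation "M" => missing (G.deleteEdges {s(y0, y1)}) G.maxDegree

include hClass2 ne02 ne03 ne13 h01 h12 h23 in
/-- terminal case: a common色 missing at y1, y3 while ψ(e3) is missing at y1 -/
lemma KP.T2 {ψ : Sym2 V → ℕ} (hψ : IsProperEdgeColoring Γ G.maxDegree ψ)
    (hτ2 : ψ s(y1, y2) ∈ M ψ y0) (hτ3 : ψ s(y2, y3) ∈ M ψ y1)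
    {α : ℕ} (hα1 : α ∈ M ψ y1) (hα3 : α ∈ M ψ y3) : False := by
  classical
  have hprop := KP.shift_proper G y0 y1 y2 ne02 h01 h12 hψ hτ2
  have hne : s(y2, y3) ≠ s(y0, y1) := by
    simp only [ne_eq, Sym2.eq_iff]
    push_neg
    exact ⟨fun h => absurd h.symm ne02, fun h => absurd h h12.ne'⟩
  have hval : (fun e => if e = s(y0, y1) then ψ s(y1, y2) else ψ e) s(y2, y3) = ψ s(y2, y3) := by
    simp [hne]
  refine KP.p02 G hClass2 h12 h23 ne13 hprop ?_
    (KP.shift_m1 G y0 y1 y2 ne02 h01 h12 hψ hα1)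
    (KP.shift_m3 G y0 y1 y2 y3 ne02 ne03 ne13 h01 h12 hα3)
  left
  rw [if_neg hne]
  exact KP.shift_m1 G y0 y1 y2 ne02 h01 h12 hψ hτ3

include hClass2 ne02 ne03 ne13 h01 h12 h23 in
/-- terminal case: ψ(e2) itself missing at y0 and y3, while ψ(e3) missing at y1 -/
lemma KP.T3 {ψ : Sym2 V → ℕ} (hψ : IsProperEdgeColoring Γ G.maxDegree ψ)
    (hτ2 : ψ s(y1, y2) ∈ M ψ y0) (hτ3 : ψ s(y2, y3) ∈ M ψ y1)
    (hv : ψ s(y1, y2) ∈ M ψ y3) : False := by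
  classical
  have hprop := KP.shift_proper G y0 y1 y2 ne02 h01 h12 hψ hτ2
  have hne : s(y2, y3) ≠ s(y0, y1) := by
    simp only [ne_eq, Sym2.eq_iff]
    push_neg
    exact ⟨fun h => absurd h.symm ne02, fun h => absurd h h12.ne'⟩
  have hval : (fun e => if e = s(y0, y1) then ψ s(y1, y2) else ψ e) s(y2, y3) = ψ s(y2, y3) := by
    simp [hne]
  refine KP.p12 G hClass2 h12 h23 ne13 hprop ?_
    (KP.shift_m2 G y0 y1 y2 ne02 h01 h12 hψ)
    (KP.shift_m3 G y0 y1 y2 y3 ne02 ne03 ne13 h01 h12 hv)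
  left
  rw [if_neg hne]
  exact KP.shift_m1 G y0 y1 y2 ne02 h01 h12 hψ hτ3

include hClass2 ne02 ne03 ne13 h01 h12 h23 in
/-- terminal case: common color at y2 and y3 -/
lemma KP.E23 {ψ : Sym2 V → ℕ} (hψ : IsProperEdgeColoring Γ G.maxDegree ψ)
    (hτ2 : ψ s(y1, y2) ∈ M ψ y0) (hτ3m : ψ s(y2, y3) ∈ M ψ y0 ∪ M ψ y1)
    {α : ℕ} (hα2 : α ∈ M ψ y2) (hα3 : α ∈ M ψ y3) : False := by
  classical
  have ha23 := KP.A23 G y0 y1 y2 y3 ne02 ne03 h01 h12 h23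
  have hprop := recolor_proper hψ ha23 hα2 hα3
  have hold : ψ s(y2, y3) ∈ missing Γ G.maxDegree
      (fun e => if e = s(y2, y3) then α else ψ e) y2 :=
    recolor_missing_old hψ ha23 hα2
  have hm0 : missing Γ G.maxDegree (fun e => if e = s(y2, y3) then α else ψ e) y0 = M ψ y0 :=
    recolor_missing_other ne02 ne03
  have hm1 : missing Γ G.maxDegree (fun e => if e = s(y2, y3) then α else ψ e) y1 = M ψ y1 :=
    recolor_missing_other h12.ne ne13
  have hne : s(y1, y2) ≠ s(y2, y3) := by
    simp only [ne_eq, Sym2.eq_iff]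
    push_neg
    exact ⟨fun h => absurd h h12.ne, fun h => absurd h ne13⟩
  have hval : (fun e => if e = s(y2, y3) then α else ψ e) s(y1, y2) = ψ s(y1, y2) := by
    simp [hne]
  have hK2' : (fun e => if e = s(y2, y3) then α else ψ e) s(y1, y2) ∈
      missing Γ G.maxDegree (fun e => if e = s(y2, y3) then α else ψ e) y0 ∪
      missing Γ G.maxDegree (fun e => if e = s(y2, y3) then α else ψ e) y1 := by
    rw [hval, hm0, hm1]
    exact Or.inl hτ2
  rcases hτ3m with h0 | h1
  · exact KP.p02 G hClass2 h01 h12 ne02 hprop hK2' (by rw [hm0]; exact h0) hold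
  · exact KP.p12 G hClass2 h01 h12 ne02 hprop hK2' (by rw [hm1]; exact h1) hold

end Terminal
section Chains
open KP SimpleGraph
variable {V : Type*} [Fintype V] [DecidableEq V] (G : SimpleGraph V) [DecidableRel G.Adj]
  (hClass2 : chromIndex G = G.maxDegree + 1)
  (y0 y1 y2 y3 : V)
  (ne02 : y0 ≠ y2) (ne03 : y0 ≠ y3) (ne13 : y1 ≠ y3)
  (h01 : G.Adj y0 y1) (h12 : G.Adj y1 y2) (h23 : G.Adj y2 y3)

local notation "Γ" => G.deleteEdges {s(y0, y1)}
local notation "M" => missing (G.deleteEdges {s(y0, y1)}) G.maxDegree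

include hClass2 ne02 ne03 ne13 h01 h12 h23 in
/-- case: common color at (y0,y3), e2-color different, d(y2) < Δ -/
lemma KP.T5 {ψ : Sym2 V → ℕ} (hψ : IsProperEdgeColoring Γ G.maxDegree ψ)
    (hτ2 : ψ s(y1, y2) ∈ M ψ y0) (hτ3m : ψ s(y2, y3) ∈ M ψ y0 ∪ M ψ y1)
    {α : ℕ} (hα0 : α ∈ M ψ y0) (hα3 : α ∈ M ψ y3) (hne2 : ψ s(y1, y2) ≠ α)
    (hd2 : G.degree y2 < G.maxDegree) : False := by
  classical
  obtain ⟨γ, hγ⟩ := KP.ex2 G y0 y1 y2 hd2 ψ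
  have hαγ : α ≠ γ := fun h => KP.p02 G hClass2 h01 h12 ne02 hψ (Or.inl hτ2) hα0 (h ▸ hγ)
  have hαI := hα0.1
  have hγI := hγ.1
  have hτ2γ : ψ s(y1, y2) ≠ γ := fun h => KP.tau2_not2 G y0 y1 y2 ne02 h01 h12 hψ (h ▸ hγ)
  have hτ3γ : ψ s(y2, y3) ≠ γ :=
    fun h => KP.tau3_not2 G y0 y1 y2 y3 ne02 ne03 h01 h12 h23 hψ (h ▸ hγ)
  have hτ3α : ψ s(y2, y3) ≠ α :=
    fun h => KP.tau3_not3 G y0 y1 y2 y3 ne02 ne03 h01 h12 h23 hψ (h ▸ hα3)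
  have hpropσ := kSwap_proper (z := y2) hψ hαγ hαI hγI
  have h2 : α ∈ M (kSwap Γ ψ α γ y2) y2 := by
    rw [kSwap_missing_at hαγ hαI hγI (Reachable.refl y2) α, swc_a]
    exact hγ
  have hv2 : kSwap Γ ψ α γ y2 s(y1, y2) = ψ s(y1, y2) := by
    refine kSwap_neg (fun hh => ?_)
    rcases hh.1.2 with h | h
    · exact hne2 h
    · exact hτ2γ h
  have hv3 : kSwap Γ ψ α γ y2 s(y2, y3) = ψ s(y2, y3) := by
    refine kSwap_neg (fun hh => ?_)
    rcases hh.1.2 with h | h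
    · exact hτ3α h
    · exact hτ3γ h
  have hτ2σ : kSwap Γ ψ α γ y2 s(y1, y2) ∈ M (kSwap Γ ψ α γ y2) y0 := by
    rw [hv2, kSwap_missing_same hαγ hαI hγI hne2 hτ2γ]
    exact hτ2
  by_cases hr23 : (kGraph Γ ψ α γ).Reachable y2 y3
  case neg =>
    have h3 : α ∈ M (kSwap Γ ψ α γ y2) y3 := by
      rw [kSwap_missing_away hr23]
      exact hα3
    have hτ3σ : kSwap Γ ψ α γ y2 s(y2, y3) ∈
        M (kSwap Γ ψ α γ y2) y0 ∪ M (kSwap Γ ψ α γ y2) y1 := by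
      rw [hv3]
      rcases hτ3m with h | h
      · exact Or.inl ((kSwap_missing_same hαγ hαI hγI hτ3α hτ3γ).2 h)
      · exact Or.inr ((kSwap_missing_same hαγ hαI hγI hτ3α hτ3γ).2 h)
    exact KP.E23 G hClass2 y0 y1 y2 y3 ne02 ne03 ne13 h01 h12 h23 hpropσ hτ2σ hτ3σ h2 h3
  case pos =>
  by_cases hr20 : (kGraph Γ ψ α γ).Reachable y2 y0
  case pos =>
    exact three_endpoints (kdeg_two hψ) (fun h => ne02 h.symm) h23.ne ne03 hr20 hr23
      (kdeg_one hψ (Or.inr hγ)) (kdeg_one hψ (Or.inl hα0)) (kdeg_one hψ (Or.inl hα3))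
  case neg =>
    have h0 : α ∈ M (kSwap Γ ψ α γ y2) y0 := by
      rw [kSwap_missing_away hr20]
      exact hα0
    exact KP.p02 G hClass2 h01 h12 ne02 hpropσ (Or.inl hτ2σ) h0 h2

include hClass2 ne02 ne03 ne13 h01 h12 h23 in
/-- case: common color at (y0,y3), e2-color different, e3-color missing at y1 -/
lemma KP.STAR {ψ : Sym2 V → ℕ} (hψ : IsProperEdgeColoring Γ G.maxDegree ψ)
    (hτ2 : ψ s(y1, y2) ∈ M ψ y0) (hτ3 : ψ s(y2, y3) ∈ M ψ y1)
    {δ : ℕ} (hδ0 : δ ∈ M ψ y0) (hδ3 : δ ∈ M ψ y3) (hδτ2 : δ ≠ ψ s(y1, y2))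
    (hmin : min (G.degree y1) (G.degree y2) < G.maxDegree) : False := by
  classical
  rcases min_lt_iff.1 hmin with hd1 | hd2
  case inr =>
    exact KP.T5 G hClass2 y0 y1 y2 y3 ne02 ne03 ne13 h01 h12 h23 hψ hτ2 (Or.inr hτ3)
      hδ0 hδ3 (fun h => hδτ2 h.symm) hd2
  case inl =>
  obtain ⟨β, hβ, hβτ3⟩ := KP.ex1' G y0 y1 h01 hd1 ψ (ψ s(y2, y3))
  have hδβ : δ ≠ β := fun h => KP.e01 G hClass2 h01 hψ hδ0 (h ▸ hβ)
  have hδI := hδ0.1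
  have hβI := hβ.1
  have hpropσ := kSwap_proper (z := y1) (a := δ) (b := β) hψ hδβ hδI hβI
  by_cases hr10 : (kGraph Γ ψ δ β).Reachable y1 y0
  case neg =>
    have h1 : δ ∈ M (kSwap Γ ψ δ β y1) y1 := by
      rw [kSwap_missing_at hδβ hδI hβI (Reachable.refl y1) δ, swc_a]
      exact hβ
    have h0 : δ ∈ M (kSwap Γ ψ δ β y1) y0 := by
      rw [kSwap_missing_away hr10]
      exact hδ0
    exact KP.e01 G hClass2 h01 hpropσ h0 h1
  case pos =>
  by_cases hr13 : (kGraph Γ ψ δ β).Reachable y1 y3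
  case pos =>
    exact three_endpoints (kdeg_two hψ) h01.ne' ne13 ne03 hr10 hr13
      (kdeg_one hψ (Or.inr hβ)) (kdeg_one hψ (Or.inl hδ0)) (kdeg_one hψ (Or.inl hδ3))
  case neg =>
    have hδ1' : δ ∈ M (kSwap Γ ψ δ β y1) y1 := by
      rw [kSwap_missing_at hδβ hδI hβI (Reachable.refl y1) δ, swc_a]
      exact hβ
    have hδ3' : δ ∈ M (kSwap Γ ψ δ β y1) y3 := by
      rw [kSwap_missing_away hr13]
      exact hδ3
    have hτ3δ : ψ s(y2, y3) ≠ δ :=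
      fun h => KP.tau3_not3 G y0 y1 y2 y3 ne02 ne03 h01 h12 h23 hψ (h ▸ hδ3)
    have hτ3β : ψ s(y2, y3) ≠ β := fun h => hβτ3 h.symm
    have hτ2δ : ψ s(y1, y2) ≠ δ := fun h => hδτ2 h.symm
    have hτ2β : ψ s(y1, y2) ≠ β := fun h => KP.tau2_not1 G y0 y1 y2 ne02 h01 h12 hψ (h ▸ hβ)
    have hv2 : kSwap Γ ψ δ β y1 s(y1, y2) = ψ s(y1, y2) := by
      refine kSwap_neg (fun hh => ?_)
      rcases hh.1.2 with h | h
      · exact hτ2δ h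
      · exact hτ2β h
    have hv3 : kSwap Γ ψ δ β y1 s(y2, y3) = ψ s(y2, y3) := by
      refine kSwap_neg (fun hh => ?_)
      rcases hh.1.2 with h | h
      · exact hτ3δ h
      · exact hτ3β h
    have hτ2σ : kSwap Γ ψ δ β y1 s(y1, y2) ∈ M (kSwap Γ ψ δ β y1) y0 := by
      rw [hv2, kSwap_missing_same hδβ hδI hβI hτ2δ hτ2β]
      exact hτ2
    have hτ3σ : kSwap Γ ψ δ β y1 s(y2, y3) ∈ M (kSwap Γ ψ δ β y1) y1 := by
      rw [hv3, kSwap_missing_same hδβ hδI hβI hτ3δ hτ3β]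
      exact hτ3
    exact KP.T2 G hClass2 y0 y1 y2 y3 ne02 ne03 ne13 h01 h12 h23 hpropσ hτ2σ hτ3σ hδ1' hδ3'

include hClass2 ne02 ne03 ne13 h01 h12 h23 in
/-- case: common color at (y1,y3), e3-color missing at y0 -/
lemma KP.CA {ψ : Sym2 V → ℕ} (hψ : IsProperEdgeColoring Γ G.maxDegree ψ)
    (hτ2 : ψ s(y1, y2) ∈ M ψ y0) {α : ℕ} (hα1 : α ∈ M ψ y1) (hα3 : α ∈ M ψ y3)
    (hτ3_0 : ψ s(y2, y3) ∈ M ψ y0)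
    (hmin : min (G.degree y1) (G.degree y2) < G.maxDegree) : False := by
  classical
  have ha23 := KP.A23 G y0 y1 y2 y3 ne02 ne03 h01 h12 h23
  have hab : α ≠ ψ s(y2, y3) :=
    fun h => KP.tau3_not3 G y0 y1 y2 y3 ne02 ne03 h01 h12 h23 hψ (h ▸ hα3)
  have hαI := hα1.1
  have hτ3I : ψ s(y2, y3) ∈ Finset.Icc 1 G.maxDegree := hψ.1 _ ha23
  have hpropσ := kSwap_proper (z := y1) (a := α) (b := ψ s(y2, y3)) hψ hab hαI hτ3I
  by_cases hr10 : (kGraph Γ ψ α (ψ s(y2, y3))).Reachable y1 y0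
  case neg =>
    have hpropσ' := kSwap_proper (z := y1) (a := α) (b := ψ s(y2, y3)) hψ hab hαI hτ3I
    have h1 : ψ s(y2, y3) ∈ M (kSwap Γ ψ α (ψ s(y2, y3)) y1) y1 := by
      rw [kSwap_missing_at hab hαI hτ3I (Reachable.refl y1) _, swc_b hab]
      exact hα1
    have h0 : ψ s(y2, y3) ∈ M (kSwap Γ ψ α (ψ s(y2, y3)) y1) y0 := by
      rw [kSwap_missing_away hr10]
      exact hτ3_0
    exact KP.e01 G hClass2 h01 hpropσ' h0 h1
  case pos =>
  by_cases hr13 : (kGraph Γ ψ α (ψ s(y2, y3))).Reachable y1 y3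
  case pos =>
    exact three_endpoints (kdeg_two hψ) h01.ne' ne13 ne03 hr10 hr13
      (kdeg_one hψ (Or.inl hα1)) (kdeg_one hψ (Or.inr hτ3_0)) (kdeg_one hψ (Or.inl hα3))
  case neg =>
    have hr30 : ¬ (kGraph Γ ψ α (ψ s(y2, y3))).Reachable y3 y0 :=
      fun h => hr13 (hr10.trans h.symm)
    have hr31 : ¬ (kGraph Γ ψ α (ψ s(y2, y3))).Reachable y3 y1 := fun h => hr13 h.symm
    have hkadj23 : (kGraph Γ ψ α (ψ s(y2, y3))).Adj y2 y3 := ⟨ha23, Or.inr rfl⟩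
    have hr32 : (kGraph Γ ψ α (ψ s(y2, y3))).Reachable y3 y2 := hkadj23.symm.reachable
    have hδ0' : ψ s(y2, y3) ∈ M (kSwap Γ ψ α (ψ s(y2, y3)) y3) y0 := by
      rw [kSwap_missing_away hr30]
      exact hτ3_0
    have hδ3' : ψ s(y2, y3) ∈ M (kSwap Γ ψ α (ψ s(y2, y3)) y3) y3 := by
      rw [kSwap_missing_at hab hαI hτ3I (Reachable.refl y3) _, swc_b hab]
      exact hα3
    have hv3 : kSwap Γ ψ α (ψ s(y2, y3)) y3 s(y2, y3) = α := by
      rw [kSwap_pos hkadj23 hr32, swc_b hab]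
    have hτ3σ : kSwap Γ ψ α (ψ s(y2, y3)) y3 s(y2, y3) ∈
        M (kSwap Γ ψ α (ψ s(y2, y3)) y3) y1 := by
      rw [hv3, kSwap_missing_away hr31]
      exact hα1
    have hτ2α : ψ s(y1, y2) ≠ α := fun h => KP.tau2_not1 G y0 y1 y2 ne02 h01 h12 hψ (h ▸ hα1)
    have hτ2τ3 : ψ s(y1, y2) ≠ ψ s(y2, y3) :=
      KP.tau23_ne G y0 y1 y2 y3 ne02 ne03 ne13 h01 h12 h23 hψ
    have hv2 : kSwap Γ ψ α (ψ s(y2, y3)) y3 s(y1, y2) = ψ s(y1, y2) := by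
      refine kSwap_neg (fun hh => ?_)
      rcases hh.1.2 with h | h
      · exact hτ2α h
      · exact hτ2τ3 h
    have hτ2σ : kSwap Γ ψ α (ψ s(y2, y3)) y3 s(y1, y2) ∈
        M (kSwap Γ ψ α (ψ s(y2, y3)) y3) y0 := by
      rw [hv2, kSwap_missing_same hab hαI hτ3I hτ2α hτ2τ3]
      exact hτ2
    have hδτ2 : ψ s(y2, y3) ≠ kSwap Γ ψ α (ψ s(y2, y3)) y3 s(y1, y2) := by
      rw [hv2]
      exact fun h => hτ2τ3 h.symm
    have hpropσ3 := kSwap_proper (z := y3) (a := α) (b := ψ s(y2, y3)) hψ hab hαI hτ3I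
    exact KP.STAR G hClass2 y0 y1 y2 y3 ne02 ne03 ne13 h01 h12 h23 hpropσ3 hτ2σ hτ3σ
      hδ0' hδ3' hδτ2 hmin

include hClass2 ne02 ne03 ne13 h01 h12 h23 in
/-- case: common color at (y0,y3) distinct from e2-color, e3-color missing at y0, d(y1)<Δ -/
lemma KP.CC {ψ : Sym2 V → ℕ} (hψ : IsProperEdgeColoring Γ G.maxDegree ψ)
    (hτ2 : ψ s(y1, y2) ∈ M ψ y0) {α : ℕ} (hα0 : α ∈ M ψ y0) (hα3 : α ∈ M ψ y3)
    (hτ3_0 : ψ s(y2, y3) ∈ M ψ y0) (hne2 : ψ s(y1, y2) ≠ α)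
    (hmin : min (G.degree y1) (G.degree y2) < G.maxDegree) : False := by
  classical
  obtain ⟨β, hβ⟩ := KP.ex1 G y0 y1 h01 ψ
  have hab : α ≠ β := fun h => KP.e01 G hClass2 h01 hψ hα0 (h ▸ hβ)
  have hαI := hα0.1
  have hβI := hβ.1
  have hpropσ := kSwap_proper (z := y1) (a := α) (b := β) hψ hab hαI hβI
  by_cases hr10 : (kGraph Γ ψ α β).Reachable y1 y0
  case neg =>
    have h1 : α ∈ M (kSwap Γ ψ α β y1) y1 := by
      rw [kSwap_missing_at hab hαI hβI (Reachable.refl y1) α, swc_a]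
      exact hβ
    have h0 : α ∈ M (kSwap Γ ψ α β y1) y0 := by
      rw [kSwap_missing_away hr10]
      exact hα0
    exact KP.e01 G hClass2 h01 hpropσ h0 h1
  case pos =>
  by_cases hr13 : (kGraph Γ ψ α β).Reachable y1 y3
  case pos =>
    exact three_endpoints (kdeg_two hψ) h01.ne' ne13 ne03 hr10 hr13
      (kdeg_one hψ (Or.inr hβ)) (kdeg_one hψ (Or.inl hα0)) (kdeg_one hψ (Or.inl hα3))
  case neg =>
    have hα1' : α ∈ M (kSwap Γ ψ α β y1) y1 := by
      rw [kSwap_missing_at hab hαI hβI (Reachable.refl y1) α, swc_a]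
      exact hβ
    have hα3' : α ∈ M (kSwap Γ ψ α β y1) y3 := by
      rw [kSwap_missing_away hr13]
      exact hα3
    have hτ2β : ψ s(y1, y2) ≠ β := fun h => KP.tau2_not1 G y0 y1 y2 ne02 h01 h12 hψ (h ▸ hβ)
    have hτ3α : ψ s(y2, y3) ≠ α :=
      fun h => KP.tau3_not3 G y0 y1 y2 y3 ne02 ne03 h01 h12 h23 hψ (h ▸ hα3)
    have hτ3β : ψ s(y2, y3) ≠ β := fun h => KP.e01 G hClass2 h01 hψ hτ3_0 (h ▸ hβ)
    have hv2 : kSwap Γ ψ α β y1 s(y1, y2) = ψ s(y1, y2) := by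
      refine kSwap_neg (fun hh => ?_)
      rcases hh.1.2 with h | h
      · exact hne2 h
      · exact hτ2β h
    have hv3 : kSwap Γ ψ α β y1 s(y2, y3) = ψ s(y2, y3) := by
      refine kSwap_neg (fun hh => ?_)
      rcases hh.1.2 with h | h
      · exact hτ3α h
      · exact hτ3β h
    have hτ2σ : kSwap Γ ψ α β y1 s(y1, y2) ∈ M (kSwap Γ ψ α β y1) y0 := by
      rw [hv2, kSwap_missing_same hab hαI hβI hne2 hτ2β]
      exact hτ2
    have hτ3σ : kSwap Γ ψ α β y1 s(y2, y3) ∈ M (kSwap Γ ψ α β y1) y0 := by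
      rw [hv3, kSwap_missing_same hab hαI hβI hτ3α hτ3β]
      exact hτ3_0
    exact KP.CA G hClass2 y0 y1 y2 y3 ne02 ne03 ne13 h01 h12 h23 hpropσ hτ2σ hα1' hα3'
      hτ3σ hmin

include hClass2 ne02 ne03 ne13 h01 h12 h23 in
/-- case: the e2-color itself is missing at y0 and y3, e3-color missing at y0 -/
lemma KP.T4b {ψ : Sym2 V → ℕ} (hψ : IsProperEdgeColoring Γ G.maxDegree ψ)
    (hτ2 : ψ s(y1, y2) ∈ M ψ y0) (hv3 : ψ s(y1, y2) ∈ M ψ y3)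
    (hτ3_0 : ψ s(y2, y3) ∈ M ψ y0)
    (hmin : min (G.degree y1) (G.degree y2) < G.maxDegree) : False := by
  classical
  have ha12 := KP.A12 G y0 y1 y2 ne02 h01 h12
  obtain ⟨β, hβ⟩ := KP.ex1 G y0 y1 h01 ψ
  have hab : ψ s(y1, y2) ≠ β :=
    fun h => KP.tau2_not1 G y0 y1 y2 ne02 h01 h12 hψ (h ▸ hβ)
  have hαI := hτ2.1
  have hβI := hβ.1
  have hpropσ := kSwap_proper (z := y1) (a := ψ s(y1, y2)) (b := β) hψ hab hαI hβI
  by_cases hr10 : (kGraph Γ ψ (ψ s(y1, y2)) β).Reachable y1 y0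
  case neg =>
    have h1 : ψ s(y1, y2) ∈ M (kSwap Γ ψ (ψ s(y1, y2)) β y1) y1 := by
      rw [kSwap_missing_at hab hαI hβI (Reachable.refl y1) _, swc_a]
      exact hβ
    have h0 : ψ s(y1, y2) ∈ M (kSwap Γ ψ (ψ s(y1, y2)) β y1) y0 := by
      rw [kSwap_missing_away hr10]
      exact hτ2
    exact KP.e01 G hClass2 h01 hpropσ h0 h1
  case pos =>
  by_cases hr13 : (kGraph Γ ψ (ψ s(y1, y2)) β).Reachable y1 y3
  case pos =>
    exact three_endpoints (kdeg_two hψ) h01.ne' ne13 ne03 hr10 hr13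
      (kdeg_one hψ (Or.inr hβ)) (kdeg_one hψ (Or.inl hτ2)) (kdeg_one hψ (Or.inl hv3))
  case neg =>
    have hα1' : ψ s(y1, y2) ∈ M (kSwap Γ ψ (ψ s(y1, y2)) β y1) y1 := by
      rw [kSwap_missing_at hab hαI hβI (Reachable.refl y1) _, swc_a]
      exact hβ
    have hα3' : ψ s(y1, y2) ∈ M (kSwap Γ ψ (ψ s(y1, y2)) β y1) y3 := by
      rw [kSwap_missing_away hr13]
      exact hv3
    have hβ0' : β ∈ M (kSwap Γ ψ (ψ s(y1, y2)) β y1) y0 := by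
      rw [kSwap_missing_at hab hαI hβI hr10 β, swc_b hab]
      exact hτ2
    have hkadj12 : (kGraph Γ ψ (ψ s(y1, y2)) β).Adj y1 y2 := ⟨ha12, Or.inl rfl⟩
    have hv2 : kSwap Γ ψ (ψ s(y1, y2)) β y1 s(y1, y2) = β := by
      rw [kSwap_pos hkadj12 (Reachable.refl y1), swc_a]
    have hτ2σ : kSwap Γ ψ (ψ s(y1, y2)) β y1 s(y1, y2) ∈
        M (kSwap Γ ψ (ψ s(y1, y2)) β y1) y0 := by
      rw [hv2]
      exact hβ0'
    have hτ3α : ψ s(y2, y3) ≠ ψ s(y1, y2) :=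
      fun h => (KP.tau23_ne G y0 y1 y2 y3 ne02 ne03 ne13 h01 h12 h23 hψ) h.symm
    have hτ3β : ψ s(y2, y3) ≠ β := fun h => KP.e01 G hClass2 h01 hψ hτ3_0 (h ▸ hβ)
    have hv3' : kSwap Γ ψ (ψ s(y1, y2)) β y1 s(y2, y3) = ψ s(y2, y3) := by
      refine kSwap_neg (fun hh => ?_)
      rcases hh.1.2 with h | h
      · exact hτ3α h
      · exact hτ3β h
    have hτ3σ : kSwap Γ ψ (ψ s(y1, y2)) β y1 s(y2, y3) ∈
        M (kSwap Γ ψ (ψ s(y1, y2)) β y1) y0 := by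
      rw [hv3', kSwap_missing_same hab hαI hβI hτ3α hτ3β]
      exact hτ3_0
    exact KP.CA G hClass2 y0 y1 y2 y3 ne02 ne03 ne13 h01 h12 h23 hpropσ hτ2σ hα1' hα3'
      hτ3σ hmin

end Chains
/-- If `G` is Class 2 with critical edge `e₁ = y₀y₁`, `φ ∈ C^Δ(G - e₁)`,
and `K = (y₀, e₁, y₁, e₂, y₂, e₃, y₃)` is a Kierstead path with respect to `e₁` and `φ`
with `min {d_G(y₁), d_G(y₂)} < Δ`, then `{y₀, y₁, y₂, y₃}` is `φ`-elementary. -/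
theorem kierstead_path_elementary {V : Type*} [Fintype V] [DecidableEq V]
    (G : SimpleGraph V) [DecidableRel G.Adj]
    (hClass2 : chromIndex G = G.maxDegree + 1)
    (y0 y1 y2 y3 : V)
    (hdist : ([y0, y1, y2, y3] : List V).Pairwise (· ≠ ·))
    (h01 : G.Adj y0 y1) (h12 : G.Adj y1 y2) (h23 : G.Adj y2 y3)
    (hcritical : chromIndex (G.deleteEdges {s(y0, y1)}) < chromIndex G)
    (φ : Sym2 V → ℕ)
    (hφ : IsProperEdgeColoring (G.deleteEdges {s(y0, y1)}) G.maxDegree φ)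
    -- the Kierstead path condition K2
    (hK2 : φ s(y1, y2) ∈ missing (G.deleteEdges {s(y0, y1)}) G.maxDegree φ y0 ∪
      missing (G.deleteEdges {s(y0, y1)}) G.maxDegree φ y1)
    (hK3 : φ s(y2, y3) ∈ missing (G.deleteEdges {s(y0, y1)}) G.maxDegree φ y0 ∪
      missing (G.deleteEdges {s(y0, y1)}) G.maxDegree φ y1 ∪
      missing (G.deleteEdges {s(y0, y1)}) G.maxDegree φ y2)
    (hmin : min (G.degree y1) (G.degree y2) < G.maxDegree) :
    ∀ u ∈ ({y0, y1, y2, y3} : Set V), ∀ v ∈ ({y0, y1, y2, y3} : Set V), u ≠ v →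
      missing (G.deleteEdges {s(y0, y1)}) G.maxDegree φ u ∩
        missing (G.deleteEdges {s(y0, y1)}) G.maxDegree φ v = ∅ := by
  classical
  simp only [List.pairwise_cons, List.mem_cons, List.not_mem_nil, or_false,
    List.mem_singleton, List.Pairwise.nil, and_true] at hdist
  obtain ⟨h0, h1, h2⟩ := hdist
  have ne02 : y0 ≠ y2 := h0 y2 (Or.inr (Or.inl rfl))
  have ne03 : y0 ≠ y3 := h0 y3 (Or.inr (Or.inr rfl))
  have ne13 : y1 ≠ y3 := h1 y3 (Or.inr rfl)
  have hτ2 : φ s(y1, y2) ∈ missing (G.deleteEdges {s(y0, y1)}) G.maxDegree φ y0 :=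
    KP.tau_mem G hClass2 h01 h12 ne02 hφ hK2
  have hτ3m : φ s(y2, y3) ∈ missing (G.deleteEdges {s(y0, y1)}) G.maxDegree φ y0 ∪
      missing (G.deleteEdges {s(y0, y1)}) G.maxDegree φ y1 := by
    rcases hK3 with h | h
    · exact h
    · exact absurd h (KP.tau3_not2 G y0 y1 y2 y3 ne02 ne03 h01 h12 h23 hφ)
  set M := missing (G.deleteEdges {s(y0, y1)}) G.maxDegree φ with hM
  have D01 : ∀ c, c ∈ M y0 → c ∈ M y1 → False := fun c ha hb =>
    KP.e01 G hClass2 h01 hφ ha hb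
  have D02 : ∀ c, c ∈ M y0 → c ∈ M y2 → False := fun c ha hb =>
    KP.p02 G hClass2 h01 h12 ne02 hφ hK2 ha hb
  have D12 : ∀ c, c ∈ M y1 → c ∈ M y2 → False := fun c ha hb =>
    KP.p12 G hClass2 h01 h12 ne02 hφ hK2 ha hb
  have D23 : ∀ c, c ∈ M y2 → c ∈ M y3 → False := fun c ha hb =>
    KP.E23 G hClass2 y0 y1 y2 y3 ne02 ne03 ne13 h01 h12 h23 hφ hτ2 hτ3m ha hb
  have D13 : ∀ c, c ∈ M y1 → c ∈ M y3 → False := by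
    intro c ha hb
    rcases hτ3m with t0 | t1
    · exact KP.CA G hClass2 y0 y1 y2 y3 ne02 ne03 ne13 h01 h12 h23 hφ hτ2 ha hb t0 hmin
    · exact KP.T2 G hClass2 y0 y1 y2 y3 ne02 ne03 ne13 h01 h12 h23 hφ hτ2 t1 ha hb
  have D03 : ∀ c, c ∈ M y0 → c ∈ M y3 → False := by
    intro c ha hb
    by_cases heq : φ s(y1, y2) = c
    · have hb' : φ s(y1, y2) ∈ M y3 := by rw [heq]; exact hb
      rcases hτ3m with t0 | t1
      · exact KP.T4b G hClass2 y0 y1 y2 y3 ne02 ne03 ne13 h01 h12 h23 hφ hτ2 hb' t0 hmin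
      · exact KP.T3 G hClass2 y0 y1 y2 y3 ne02 ne03 ne13 h01 h12 h23 hφ hτ2 t1 hb'
    · rcases hτ3m with t0 | t1
      · exact KP.CC G hClass2 y0 y1 y2 y3 ne02 ne03 ne13 h01 h12 h23 hφ hτ2 ha hb t0
          heq hmin
      · exact KP.STAR G hClass2 y0 y1 y2 y3 ne02 ne03 ne13 h01 h12 h23 hφ hτ2 t1 ha hb
          (fun h => heq h.symm) hmin
  intro u hu v hv huv
  simp only [Set.mem_insert_iff, Set.mem_singleton_iff] at hu hv
  apply Set.eq_empty_iff_forall_notMem.2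
  rintro c ⟨hcu, hcv⟩
  rcases hu with rfl | rfl | rfl | rfl <;> rcases hv with rfl | rfl | rfl | rfl
  · exact huv rfl
  · exact D01 c hcu hcv
  · exact D02 c hcu hcv
  · exact D03 c hcu hcv
  · exact D01 c hcv hcu
  · exact huv rfl
  · exact D12 c hcu hcv
  · exact D13 c hcu hcv
  · exact D02 c hcv hcu
  · exact D12 c hcv hcu
  · exact huv rfl
  · exact D23 c hcu hcv
  · exact D03 c hcv hcu
  · exact D13 c hcv hcu
  · exact D23 c hcv hcu
  · exact huv rfl
end
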